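/- arXiv:math/0004180 — 8 statements merged into one kernel-verified Lean document; each statement's English description precedes it below -/
import Mathlib

section
/- Let {F₁, F₂, …} and {G₁, G₂, …} be two sequences of finite multisets of positive integers such that the Fᵢ are pairwise disjoint, the Gᵢ are pairwise disjoint, and for every i the sum of the elements of Fᵢ (with multiplicity) equals the sum of the elements of Gᵢ. Define X(π) = |{i : Fᵢ ⊆ π}| and Y(π) = |{i : Gᵢ ⊆ π}|. Then for every n and every j ≥ 0, the number of partitions of n with X(π) = j equals the number with Y(π) = j. -/
open Finset

lemma disj_add_le_iff {a b t : Multiset ℕ} (h : Disjoint a b) :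
    a + b ≤ t ↔ a ≤ t ∧ b ≤ t := by
  constructor
  · intro hab
    exact ⟨le_trans (Multiset.le_add_right _ _) hab, le_trans (Multiset.le_add_left _ _) hab⟩
  · rintro ⟨ha, hb⟩
    rw [Multiset.le_iff_count]
    intro x
    rw [Multiset.count_add]
    rcases (by by_contra hc; push_neg at hc
               exact Multiset.disjoint_left.mp h
                 (Multiset.count_pos.mp (Nat.pos_of_ne_zero hc.1))
                 (Multiset.count_pos.mp (Nat.pos_of_ne_zero hc.2)) :
             a.count x = 0 ∨ b.count x = 0) with h0 | h0
    · rw [h0, zero_add]; exact Multiset.le_iff_count.mp hb x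
    · rw [h0, add_zero]; exact Multiset.le_iff_count.mp ha x

lemma sum_le_iff_forall (F : ℕ → Multiset ℕ)
    (hdisj : ∀ i k, i ≠ k → Disjoint (F i) (F k)) (S : Finset ℕ) (t : Multiset ℕ) :
    (∑ i ∈ S, F i) ≤ t ↔ ∀ i ∈ S, F i ≤ t := by
  classical
  induction S using Finset.induction_on with
  | empty => simp [Multiset.zero_le]
  | @insert a S ha ih =>
    rw [Finset.sum_insert ha]
    have hd : Disjoint (F a) (∑ i ∈ S, F i) := by
      rw [Multiset.disjoint_left]
      intro x hx hxs
      obtain ⟨i, hi, hxi⟩ := Multiset.mem_sum.mp hxs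
      exact Multiset.disjoint_left.mp (hdisj a i (by rintro rfl; exact ha hi)) hx hxi
    rw [disj_add_le_iff hd, ih]
    simp [forall_and]

lemma multiset_sum_sum (S : Finset ℕ) (F : ℕ → Multiset ℕ) :
    (∑ i ∈ S, F i).sum = ∑ i ∈ S, (F i).sum := by
  classical
  induction S using Finset.induction_on with
  | empty => simp
  | @insert a S ha ih => rw [Finset.sum_insert ha, Finset.sum_insert ha, Multiset.sum_add, ih]

lemma card_partition_superset (n : ℕ) (A : Multiset ℕ) (hA : ∀ x ∈ A, 0 < x) :
    (Finset.univ.filter (fun π : Nat.Partition n => A ≤ π.parts)).card =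
    if A.sum ≤ n then Fintype.card (Nat.Partition (n - A.sum)) else 0 := by
  classical
  split_ifs with h
  · rw [← Fintype.card_subtype]
    apply Fintype.card_congr
    refine
      { toFun := fun p => ⟨p.1.parts - A, ?_, ?_⟩
        invFun := fun τ => ⟨⟨τ.parts + A, ?_, ?_⟩, Multiset.le_add_left _ _⟩
        left_inv := ?_
        right_inv := ?_ }
    · intro i hi
      exact p.1.parts_pos (Multiset.mem_of_le (Multiset.sub_le_self _ _) hi)
    · have h2 : p.1.parts - A + A = p.1.parts := tsub_add_cancel_of_le p.2
      have h3 := congrArg Multiset.sum h2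
      rw [Multiset.sum_add, p.1.parts_sum] at h3
      omega
    · intro i hi
      rcases Multiset.mem_add.mp hi with h' | h'
      · exact τ.parts_pos h'
      · exact hA i h'
    · rw [Multiset.sum_add]
      rw [Nat.Partition.parts_sum]
      omega
    · rintro ⟨p, hp⟩
      apply Subtype.ext
      apply Nat.Partition.ext
      simp [tsub_add_cancel_of_le hp]
    · intro τ
      apply Nat.Partition.ext
      simp
  · rw [Finset.card_eq_zero, Finset.filter_eq_empty_iff]
    intro π _ hle
    have : A.sum ≤ π.parts.sum := by
      obtain ⟨u, hu⟩ := Multiset.le_iff_exists_add.mp hle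
      rw [hu, Multiset.sum_add]; omega
    rw [π.parts_sum] at this
    exact absurd this h

lemma moment_eq (n : ℕ) (F : ℕ → Multiset ℕ)
    (hpos : ∀ i, ∀ x ∈ F i, 0 < x)
    (hdisj : ∀ i k, i ≠ k → Disjoint (F i) (F k))
    (J : Finset ℕ) (k : ℕ) :
    ∑ π : Nat.Partition n, ((J.filter fun i => F i ≤ π.parts).card).choose k
      = ∑ S ∈ J.powersetCard k,
          (if (∑ i ∈ S, (F i).sum) ≤ n then Fintype.card (Nat.Partition (n - ∑ i ∈ S, (F i).sum)) else 0) := by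
  classical
  have step1 : ∀ π : Nat.Partition n,
      ((J.filter fun i => F i ≤ π.parts).card).choose k
        = ∑ S ∈ J.powersetCard k, (if S ⊆ J.filter (fun i => F i ≤ π.parts) then 1 else 0) := by
    intro π
    rw [← Finset.card_powersetCard, ← Finset.card_filter]
    congr 1
    ext S
    simp only [Finset.mem_powersetCard, Finset.mem_filter]
    constructor
    · rintro ⟨hs, hc⟩
      exact ⟨⟨hs.trans (Finset.filter_subset _ _), hc⟩, hs⟩
    · rintro ⟨⟨_, hc⟩, hs⟩
      exact ⟨hs, hc⟩
  calc ∑ π : Nat.Partition n, ((J.filter fun i => F i ≤ π.parts).card).choose k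
      = ∑ π : Nat.Partition n, ∑ S ∈ J.powersetCard k,
          (if S ⊆ J.filter (fun i => F i ≤ π.parts) then 1 else 0) := by
        exact Finset.sum_congr rfl fun π _ => step1 π
    _ = ∑ S ∈ J.powersetCard k, ∑ π : Nat.Partition n,
          (if S ⊆ J.filter (fun i => F i ≤ π.parts) then 1 else 0) := Finset.sum_comm
    _ = ∑ S ∈ J.powersetCard k,
          (if (∑ i ∈ S, (F i).sum) ≤ n then Fintype.card (Nat.Partition (n - ∑ i ∈ S, (F i).sum)) else 0) := by
        apply Finset.sum_congr rfl
        intro S hS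
        obtain ⟨hSJ, -⟩ := Finset.mem_powersetCard.mp hS
        have hcond : ∀ π : Nat.Partition n,
            (S ⊆ J.filter (fun i => F i ≤ π.parts)) ↔ (∑ i ∈ S, F i) ≤ π.parts := by
          intro π
          rw [sum_le_iff_forall F hdisj]
          constructor
          · intro h i hi; exact (Finset.mem_filter.mp (h hi)).2
          · intro h i hi; exact Finset.mem_filter.mpr ⟨hSJ hi, h i hi⟩
        have : ∑ π : Nat.Partition n,
            (if S ⊆ J.filter (fun i => F i ≤ π.parts) then 1 else 0)
            = (Finset.univ.filter (fun π : Nat.Partition n => (∑ i ∈ S, F i) ≤ π.parts)).card := by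
          rw [Finset.card_filter]
          apply Finset.sum_congr rfl
          intro π _
          simp [hcond π]
        rw [this, card_partition_superset n _ (by
          intro x hx
          obtain ⟨i, hi, hxi⟩ := Multiset.mem_sum.mp hx
          exact hpos i x hxi), multiset_sum_sum]

lemma card_eq_of_moments {α : Type*} [Fintype α] (x y : α → ℕ) (N : ℕ)
    (hx : ∀ a, x a ≤ N) (hy : ∀ a, y a ≤ N)
    (h : ∀ k, ∑ a, (x a).choose k = ∑ a, (y a).choose k) (j : ℕ) :
    (Finset.univ.filter fun a => x a = j).card = (Finset.univ.filter fun a => y a = j).card := by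
  classical
  set a : ℕ → ℕ := fun v => (Finset.univ.filter fun t => x t = v).card with ha
  set b : ℕ → ℕ := fun v => (Finset.univ.filter fun t => y t = v).card with hb
  have group : ∀ (z : α → ℕ), (∀ t, z t ≤ N) → ∀ k,
      ∑ t, (z t).choose k
        = ∑ v ∈ Finset.range (N+1), (Finset.univ.filter fun t => z t = v).card * v.choose k := by
    intro z hz k
    rw [← Finset.sum_fiberwise_of_maps_to (g := z) (t := Finset.range (N+1))
      (fun t _ => Finset.mem_range.mpr (Nat.lt_succ_of_le (hz t)))]
    apply Finset.sum_congr rfl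
    intro v _
    have hcong : ∑ t ∈ Finset.univ.filter (fun t => z t = v), (z t).choose k
        = ∑ _t ∈ Finset.univ.filter (fun t => z t = v), v.choose k := by
      apply Finset.sum_congr rfl
      intro t ht
      rw [(Finset.mem_filter.mp ht).2]
    rw [hcong, Finset.sum_const, smul_eq_mul]
  have hmom : ∀ k, ∑ v ∈ Finset.range (N+1), a v * v.choose k
      = ∑ v ∈ Finset.range (N+1), b v * v.choose k := by
    intro k
    rw [← group x hx k, ← group y hy k]
    exact h k
  have hhigh : ∀ v, N < v → a v = 0 ∧ b v = 0 := by
    intro v hv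
    constructor <;>
    · show Finset.card _ = 0
      rw [Finset.card_eq_zero, Finset.filter_eq_empty_iff]
      intro t _
      first
        | exact fun he => absurd (he ▸ hx t) (by omega)
        | exact fun he => absurd (he ▸ hy t) (by omega)
  have key : ∀ d v, N + 1 ≤ v + d → a v = b v := by
    intro d
    induction d with
    | zero =>
      intro v hv
      rw [(hhigh v (by omega)).1, (hhigh v (by omega)).2]
    | succ d ih =>
      intro v hv
      by_cases hvN : N < v
      · rw [(hhigh v hvN).1, (hhigh v hvN).2]
      push_neg at hvN
      have hsplit : ∀ (c : ℕ → ℕ),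
          ∑ u ∈ Finset.range (N+1), c u * u.choose v
            = c v + ∑ u ∈ Finset.Ico (v+1) (N+1), c u * u.choose v := by
        intro c
        rw [Finset.range_eq_Ico, ← Finset.sum_Ico_consecutive _ (Nat.zero_le v) (by omega)]
        have h1 : ∑ u ∈ Finset.Ico 0 v, c u * u.choose v = 0 := by
          apply Finset.sum_eq_zero
          intro u hu
          rw [Nat.choose_eq_zero_of_lt (Finset.mem_Ico.mp hu).2, mul_zero]
        rw [h1, zero_add, Finset.sum_eq_sum_Ico_succ_bot (by omega), Nat.choose_self, mul_one]
      have htail : ∑ u ∈ Finset.Ico (v+1) (N+1), a u * u.choose v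
          = ∑ u ∈ Finset.Ico (v+1) (N+1), b u * u.choose v := by
        apply Finset.sum_congr rfl
        intro u hu
        have := (Finset.mem_Ico.mp hu).1
        rw [ih u (by omega)]
      have := hmom v
      rw [hsplit a, hsplit b, htail] at this
      omega
  exact key (N + 1) j (by omega)

lemma multiset_eq_zero_of_pos_sum_zero {s : Multiset ℕ} (h : ∀ x ∈ s, 0 < x)
    (hs : s.sum = 0) : s = 0 := by
  rw [Multiset.eq_zero_iff_forall_notMem]
  intro x hx
  have h1 := Multiset.sum_eq_zero_iff.mp hs x hx
  have h2 := h x hx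
  omega

theorem disjoint_multiset_equidistribution
    (F G : ℕ → Multiset ℕ)
    (hFpos : ∀ i, ∀ x ∈ F i, 0 < x) (hGpos : ∀ i, ∀ x ∈ G i, 0 < x)
    (hFdisj : ∀ i k, i ≠ k → Disjoint (F i) (F k))
    (hGdisj : ∀ i k, i ≠ k → Disjoint (G i) (G k))
    (hsum : ∀ i, (F i).sum = (G i).sum) :
    ∀ n j : ℕ,
      Nat.card {π : Nat.Partition n // {i : ℕ | F i ≤ π.parts}.ncard = j} =
      Nat.card {π : Nat.Partition n // {i : ℕ | G i ≤ π.parts}.ncard = j} := by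
  intro n j
  classical
  have hiff : ∀ i, F i = 0 ↔ G i = 0 := by
    intro i
    constructor
    · intro h
      exact multiset_eq_zero_of_pos_sum_zero (hGpos i) (by rw [← hsum i, h]; rfl)
    · intro h
      exact multiset_eq_zero_of_pos_sum_zero (hFpos i) (by rw [hsum i, h]; rfl)
  by_cases hinf : {i : ℕ | F i = 0}.Infinite
  · have hGZ : {i : ℕ | G i = 0} = {i : ℕ | F i = 0} := by
      ext i; simp only [Set.mem_setOf_eq]; exact (hiff i).symm
    have hFinf : ∀ π : Nat.Partition n, {i : ℕ | F i ≤ π.parts}.Infinite := fun π =>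
      hinf.mono (fun i hi => by
        simp only [Set.mem_setOf_eq] at hi ⊢
        rw [hi]; exact Multiset.zero_le _)
    have hGinf : ∀ π : Nat.Partition n, {i : ℕ | G i ≤ π.parts}.Infinite := fun π =>
      (hGZ ▸ hinf).mono (fun i hi => by
        simp only [Set.mem_setOf_eq] at hi ⊢
        rw [hi]; exact Multiset.zero_le _)
    exact Nat.card_congr (Equiv.subtypeEquivRight fun π => by
      rw [(hFinf π).ncard, (hGinf π).ncard])
  · have hZfin : {i : ℕ | F i = 0}.Finite := Set.not_infinite.mp hinf
    have hsubs : ∀ x : ℕ, {i : ℕ | x ∈ F i}.Finite := by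
      intro x
      apply Set.Subsingleton.finite
      intro i hi k hk
      by_contra hik
      exact Multiset.disjoint_left.mp (hFdisj i k hik) hi hk
    have hIfin : {i : ℕ | F i ≠ 0 ∧ (F i).sum ≤ n}.Finite := by
      apply Set.Finite.subset (Set.Finite.biUnion (Set.finite_Icc 1 n) (fun x _ => hsubs x))
      intro i hi
      obtain ⟨hne, hle⟩ := hi
      obtain ⟨x, hx⟩ := Multiset.exists_mem_of_ne_zero hne
      have hx1 : 1 ≤ x := hFpos i x hx
      have hx2 : x ≤ (F i).sum := Multiset.single_le_sum (fun _ _ => Nat.zero_le _) _ hx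
      exact Set.mem_biUnion (Set.mem_Icc.mpr ⟨hx1, le_trans hx2 hle⟩) hx
    set J : Finset ℕ := hZfin.toFinset ∪ hIfin.toFinset with hJ
    have hJF : ∀ (π : Nat.Partition n) i, F i ≤ π.parts → i ∈ J := by
      intro π i hle
      by_cases h0 : F i = 0
      · exact Finset.mem_union_left _ (hZfin.mem_toFinset.mpr h0)
      · apply Finset.mem_union_right _ (hIfin.mem_toFinset.mpr ⟨h0, ?_⟩)
        have : (F i).sum ≤ π.parts.sum := by
          obtain ⟨u, hu⟩ := Multiset.le_iff_exists_add.mp hle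
          rw [hu, Multiset.sum_add]; omega
        rw [π.parts_sum] at this
        exact this
    have hJG : ∀ (π : Nat.Partition n) i, G i ≤ π.parts → i ∈ J := by
      intro π i hle
      by_cases h0 : G i = 0
      · exact Finset.mem_union_left _ (hZfin.mem_toFinset.mpr ((hiff i).mpr h0))
      · apply Finset.mem_union_right _ (hIfin.mem_toFinset.mpr
          ⟨fun hf => h0 ((hiff i).mp hf), ?_⟩)
        have : (G i).sum ≤ π.parts.sum := by
          obtain ⟨u, hu⟩ := Multiset.le_iff_exists_add.mp hle
          rw [hu, Multiset.sum_add]; omega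
        rw [π.parts_sum] at this
        rw [hsum i]
        exact this
    have hFeq : ∀ π : Nat.Partition n,
        {i : ℕ | F i ≤ π.parts} = ↑(J.filter fun i => F i ≤ π.parts) := by
      intro π
      ext i
      simp only [Set.mem_setOf_eq, Finset.coe_filter, Set.mem_setOf_eq]
      exact ⟨fun h => ⟨hJF π i h, h⟩, fun h => h.2⟩
    have hGeq : ∀ π : Nat.Partition n,
        {i : ℕ | G i ≤ π.parts} = ↑(J.filter fun i => G i ≤ π.parts) := by
      intro π
      ext i
      simp only [Set.mem_setOf_eq, Finset.coe_filter, Set.mem_setOf_eq]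
      exact ⟨fun h => ⟨hJG π i h, h⟩, fun h => h.2⟩
    have convF : Nat.card {π : Nat.Partition n // {i : ℕ | F i ≤ π.parts}.ncard = j}
        = (Finset.univ.filter fun π : Nat.Partition n =>
            (J.filter fun i => F i ≤ π.parts).card = j).card := by
      rw [Nat.card_eq_fintype_card, Fintype.card_subtype]
      congr 1
      apply Finset.filter_congr
      intro π _
      rw [hFeq π, Set.ncard_coe_finset]
    have convG : Nat.card {π : Nat.Partition n // {i : ℕ | G i ≤ π.parts}.ncard = j}
        = (Finset.univ.filter fun π : Nat.Partition n =>
            (J.filter fun i => G i ≤ π.parts).card = j).card := by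
      rw [Nat.card_eq_fintype_card, Fintype.card_subtype]
      congr 1
      apply Finset.filter_congr
      intro π _
      rw [hGeq π, Set.ncard_coe_finset]
    rw [convF, convG]
    apply card_eq_of_moments _ _ J.card
    · intro π; exact Finset.card_le_card (Finset.filter_subset _ _)
    · intro π; exact Finset.card_le_card (Finset.filter_subset _ _)
    · intro k
      rw [moment_eq n F hFpos hFdisj J k, moment_eq n G hGpos hGdisj J k]
      apply Finset.sum_congr rfl
      intro S _
      rw [Finset.sum_congr rfl (fun i _ => hsum i)]
end

section
/- For every n and j ≥ 0, the number of partitions of n in which exactly j distinct part sizes are perfect squares equals the number of partitions of n in which exactly j distinct part sizes i occur with multiplicity at least i. -/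
namespace SqVsMult

/-- `v a k = a ^ (2 ^ k)`, the `k`-th element of the chain with root `a`. -/
def v (a k : ℕ) : ℕ := a ^ (2 ^ k)

lemma v_zero (a : ℕ) : v a 0 = a := by simp [v]

lemma v_succ (a k : ℕ) : v a (k + 1) = (v a k) ^ 2 := by
  simp [v, pow_succ, pow_mul]

lemma two_le_v {a : ℕ} (ha : 2 ≤ a) (k : ℕ) : 2 ≤ v a k := by
  calc 2 = 2 ^ 1 := rfl
  _ ≤ a ^ (2 ^ k) := Nat.pow_le_pow_left ha (2^k) |>.trans' (Nat.pow_le_pow_right (by omega) (Nat.one_le_two_pow))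
  _ = v a k := rfl

lemma v_lt_v_succ {a : ℕ} (ha : 2 ≤ a) (k : ℕ) : v a k < v a (k+1) := by
  rw [v_succ, sq]
  have h2 := two_le_v ha k
  nlinarith

lemma v_strictMono {a : ℕ} (ha : 2 ≤ a) : StrictMono (v a) :=
  strictMono_nat_of_lt_succ (v_lt_v_succ ha)

lemma add_two_le_v {a : ℕ} (ha : 2 ≤ a) (k : ℕ) : k + 2 ≤ v a k := by
  have h1 : k + 1 ≤ 2 ^ k := Nat.lt_two_pow_self (n := k)
  have h2 : 2 ^ (k+1) ≤ 2 ^ (2 ^ k) := Nat.pow_le_pow_right (by omega) (by omega)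
  have h3 : 2 ^ (2^k) ≤ a ^ (2^k) := Nat.pow_le_pow_left ha _
  have h4 : k + 2 ≤ 2 ^ (k+1) := by
    have := Nat.lt_two_pow_self (n := k+1); omega
  unfold v; omega

/-- The root of the chain containing `i`. -/
def root (i : ℕ) : ℕ :=
  if h : 2 ≤ i ∧ IsSquare i then root (Nat.sqrt i) else i
decreasing_by exact Nat.sqrt_lt_self (by omega)

/-- The level of `i` within its chain. -/
def lv (i : ℕ) : ℕ :=
  if h : 2 ≤ i ∧ IsSquare i then lv (Nat.sqrt i) + 1 else 0
decreasing_by exact Nat.sqrt_lt_self (by omega)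

lemma sqrt_of_isSquare {i : ℕ} (h : IsSquare i) : (Nat.sqrt i) ^ 2 = i := by
  obtain ⟨r, rfl⟩ := h
  rw [← sq, Nat.sqrt_eq']

lemma two_le_sqrt {i : ℕ} (h2 : 2 ≤ i) (h : IsSquare i) : 2 ≤ Nat.sqrt i := by
  by_contra hc
  have := sqrt_of_isSquare h
  interval_cases hh : Nat.sqrt i <;> simp_all <;> omega

lemma v_root_lv : ∀ i, 2 ≤ i → v (root i) (lv i) = i := by
  intro i
  induction i using Nat.strong_induction_on with
  | _ i ih =>
    intro h2
    by_cases h : IsSquare i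
    · rw [root, lv]
      rw [dif_pos ⟨h2, h⟩, dif_pos ⟨h2, h⟩]
      have hs : 2 ≤ Nat.sqrt i := two_le_sqrt h2 h
      rw [v_succ, ih _ (Nat.sqrt_lt_self (by omega)) hs, sqrt_of_isSquare h]
    · rw [root, lv, dif_neg (by tauto), dif_neg (by tauto), v_zero]

lemma root_spec : ∀ i, 2 ≤ i → 2 ≤ root i ∧ ¬ IsSquare (root i) := by
  intro i
  induction i using Nat.strong_induction_on with
  | _ i ih =>
    intro h2
    by_cases h : IsSquare i
    · rw [root, dif_pos ⟨h2, h⟩]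
      exact ih _ (Nat.sqrt_lt_self (by omega)) (two_le_sqrt h2 h)
    · rw [root, dif_neg (by tauto)]
      exact ⟨h2, h⟩

lemma isSquare_v_iff {a : ℕ} (ha : 2 ≤ a) (hns : ¬ IsSquare a) (k : ℕ) :
    IsSquare (v a k) ↔ 1 ≤ k := by
  cases k with
  | zero => simpa [v_zero] using hns
  | succ k => simp only [v_succ, sq]; exact iff_of_true ⟨_, rfl⟩ (by omega)

lemma root_v {a : ℕ} (ha : 2 ≤ a) (hns : ¬ IsSquare a) (k : ℕ) :
    root (v a k) = a ∧ lv (v a k) = k := by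
  induction k with
  | zero =>
    rw [v_zero, root, lv, dif_neg (by tauto), dif_neg (by tauto)]
    exact ⟨rfl, rfl⟩
  | succ k ih =>
    have h2 : 2 ≤ v a (k+1) := two_le_v ha _
    have hsq : IsSquare (v a (k+1)) := (isSquare_v_iff ha hns _).2 (by omega)
    have hsqrt : Nat.sqrt (v a (k+1)) = v a k := by
      rw [v_succ, Nat.sqrt_eq']
    rw [root, lv, dif_pos ⟨h2, hsq⟩, dif_pos ⟨h2, hsq⟩, hsqrt, ih.1, ih.2]
    exact ⟨rfl, rfl⟩

lemma v_inj {a b k l : ℕ} (ha : 2 ≤ a) (hans : ¬ IsSquare a)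
    (hb : 2 ≤ b) (hbns : ¬ IsSquare b) (h : v a k = v b l) : a = b ∧ k = l := by
  have h1 := root_v ha hans k
  have h2 := root_v hb hbns l
  rw [h] at h1
  exact ⟨h1.1.symm.trans h2.1, h1.2.symm.trans h2.2⟩

/-- The carry sequence along the chain with root `a`. -/
def Q (f : ℕ → ℕ) (a : ℕ) : ℕ → ℕ
  | 0 => f a
  | k+1 => if f (v a (k+1)) ≠ 0 then f (v a (k+1)) - 1 else Q f a k / v a k

/-- The output multiplicity at level `k` of the chain with root `a`. -/
def chainF (f : ℕ → ℕ) (a k : ℕ) : ℕ :=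
  if f (v a (k+1)) ≠ 0 then v a k + Q f a k else Q f a k % v a k

/-- The global map on multiplicity functions. -/
def Fm (f : ℕ → ℕ) (i : ℕ) : ℕ :=
  if i ≤ 1 then f i else chainF f (root i) (lv i)

lemma Fm_v {a : ℕ} (ha : 2 ≤ a) (hns : ¬ IsSquare a) (f : ℕ → ℕ) (k : ℕ) :
    Fm f (v a k) = chainF f a k := by
  have h2 := two_le_v ha k
  rw [Fm, if_neg (by omega), (root_v ha hns k).1, (root_v ha hns k).2]

lemma invariant (f : ℕ → ℕ) {a : ℕ} (ha : 2 ≤ a) :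
    ∀ K, (∑ k ∈ Finset.range K, v a k * chainF f a k) + v a K * Q f a K
      = ∑ k ∈ Finset.range (K+1), v a k * f (v a k) := by
  intro K
  induction K with
  | zero => simp [Q, v_zero]
  | succ K ih =>
    rw [Finset.sum_range_succ, Finset.sum_range_succ (n := K+1), ← ih]
    have hv : v a (K+1) = v a K * v a K := by rw [v_succ, sq]
    by_cases hm : f (v a (K+1)) ≠ 0
    · obtain ⟨m, hm'⟩ : ∃ m, f (v a (K+1)) = m + 1 :=
        ⟨f (v a (K+1)) - 1, by omega⟩
      rw [chainF, if_pos hm, Q, if_pos hm, hm', hv]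
      simp only [Nat.add_sub_cancel]
      ring
    · push_neg at hm
      rw [chainF, if_neg (by simp [hm]), Q, if_neg (by simp [hm]), hm, hv]
      have := Nat.mod_add_div (Q f a K) (v a K)
      ring_nf
      nlinarith [this]

section Bounds

variable {n : ℕ} {f : ℕ → ℕ} (Hf : ∀ i, f i ≠ 0 → i ≤ n)
  (Hsub : ∀ s : Finset ℕ, ∑ i ∈ s, i * f i ≤ n)

include Hsub in
lemma chain_sum_le {a : ℕ} (ha : 2 ≤ a) (K : ℕ) :
    ∑ k ∈ Finset.range K, v a k * f (v a k) ≤ n := by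
  have : ∑ k ∈ Finset.range K, v a k * f (v a k)
      = ∑ i ∈ (Finset.range K).image (v a), i * f i := by
    rw [Finset.sum_image]
    intro x _ y _ h
    exact (v_strictMono ha).injective h
  rw [this]; exact Hsub _

include Hsub in
lemma vQ_le {a : ℕ} (ha : 2 ≤ a) (K : ℕ) : v a K * Q f a K ≤ n := by
  have h := invariant f ha K
  have h2 := chain_sum_le Hsub ha (K+1)
  omega

include Hsub in
lemma Q_eq_zero {a : ℕ} (ha : 2 ≤ a) {K : ℕ} (hK : n < v a K) : Q f a K = 0 := by
  have := vQ_le Hsub ha K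
  by_contra hc
  have : v a K ≤ v a K * Q f a K := Nat.le_mul_of_pos_right _ (by omega)
  omega

include Hf in
lemma f_v_eq_zero {a : ℕ} {K : ℕ} (hK : n < v a K) : f (v a K) = 0 := by
  by_contra hc
  exact absurd (Hf _ hc) (by omega)

include Hf Hsub in
lemma chainF_eq_zero {a : ℕ} (ha : 2 ≤ a) {K : ℕ} (hK : n < v a K) :
    chainF f a K = 0 := by
  have h1 : f (v a (K+1)) = 0 := f_v_eq_zero Hf (lt_of_lt_of_le hK (le_of_lt (v_lt_v_succ ha K)))
  rw [chainF, if_neg (by simp [h1]), Q_eq_zero Hsub ha hK, Nat.zero_mod]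

lemma n_lt_v {a : ℕ} (ha : 2 ≤ a) {K : ℕ} (hK : n ≤ K) : n < v a K := by
  have := add_two_le_v ha K
  omega

include Hf Hsub in
/-- chain sums are preserved by the map. -/
lemma chain_sum_eq {a : ℕ} (ha : 2 ≤ a) :
    ∑ k ∈ Finset.range (n+1), v a k * chainF f a k
      = ∑ k ∈ Finset.range (n+1), v a k * f (v a k) := by
  have h1 := invariant f ha (n+1)
  have h2 : Q f a (n+1) = 0 := Q_eq_zero Hsub ha (n_lt_v ha (by omega))
  have h3 : f (v a (n+1)) = 0 := f_v_eq_zero Hf (n_lt_v ha (by omega))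
  rw [Finset.sum_range_succ (n := n+1), h3, h2] at h1
  simpa using h1

include Hsub in
lemma Q_ne_zero_le {a : ℕ} (ha : 2 ≤ a) {K : ℕ} (h : Q f a K ≠ 0) : v a K ≤ n := by
  have := vQ_le Hsub ha K
  have : v a K ≤ v a K * Q f a K := Nat.le_mul_of_pos_right _ (by omega)
  omega

include Hf Hsub in
/-- Support bound for the image. -/
lemma Fm_support (i : ℕ) (hi : Fm f i ≠ 0) : i ≤ n := by
  by_cases h1 : i ≤ 1
  · rw [Fm, if_pos h1] at hi
    exact Hf i hi
  · push_neg at h1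
    have hrs := root_spec i h1
    have hv := v_root_lv i h1
    rw [Fm, if_neg (by omega)] at hi
    rw [chainF] at hi
    by_cases hm : f (v (root i) (lv i + 1)) ≠ 0
    · have := Hf _ hm
      have := v_lt_v_succ hrs.1 (lv i)
      omega
    · rw [if_neg hm] at hi
      have hQ : Q f (root i) (lv i) ≠ 0 := by
        intro h; rw [h] at hi; simp at hi
      have := Q_ne_zero_le Hsub hrs.1 hQ
      omega

end Bounds

/-- The set of possible chain roots. -/
def roots (n : ℕ) : Finset ℕ := (Finset.Icc 2 n).filter (fun a => ¬ IsSquare a)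

lemma sum_eq_chain_sums {n : ℕ} (g : ℕ → ℕ) (hg0 : g 0 = 0)
    (hgsupp : ∀ i, g i ≠ 0 → i ≤ n) :
    ∑ i ∈ Finset.range (n+1), i * g i
      = g 1 + ∑ a ∈ roots n, ∑ k ∈ Finset.range (n+1), v a k * g (v a k) := by
  classical
  have hmem : ∀ a ∈ roots n, 2 ≤ a ∧ ¬ IsSquare a ∧ a ≤ n := by
    intro a ha
    simp only [roots, Finset.mem_filter, Finset.mem_Icc] at ha
    exact ⟨ha.1.1, ha.2, ha.1.2⟩
  set T : Finset ℕ :=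
    (( roots n ×ˢ Finset.range (n+1)).image (fun p => v p.1 p.2)) with hT
  have hsum_image : ∑ a ∈ roots n, ∑ k ∈ Finset.range (n+1), v a k * g (v a k)
      = ∑ i ∈ T, i * g i := by
    rw [hT, Finset.sum_image, Finset.sum_product]
    intro p hp q hq h
    simp only [Finset.mem_coe, Finset.mem_product] at hp hq
    have h1 := hmem p.1 hp.1
    have h2 := hmem q.1 hq.1
    have := v_inj h1.1 h1.2.1 h2.1 h2.2.1 h
    exact Prod.ext this.1 this.2
  have h1T : 1 ∉ T := by
    rw [hT]
    simp only [Finset.mem_image, not_exists]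
    rintro p ⟨hp, hv⟩
    simp only [Finset.mem_product] at hp
    have := two_le_v (hmem p.1 hp.1).1 p.2
    omega
  have hrhs : g 1 + ∑ a ∈ roots n, ∑ k ∈ Finset.range (n+1), v a k * g (v a k)
      = ∑ i ∈ insert 1 T, i * g i := by
    rw [Finset.sum_insert h1T, hsum_image, one_mul]
  rw [hrhs]
  -- both sides equal the sum over the union
  have key1 : ∑ i ∈ Finset.range (n+1), i * g i
      = ∑ i ∈ Finset.range (n+1) ∪ insert 1 T, i * g i := by
    apply Finset.sum_subset (Finset.subset_union_left)
    intro i hi hni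
    have : n < i := by
      simp only [Finset.mem_range] at hni
      omega
    have : g i = 0 := by
      by_contra hc
      exact absurd (hgsupp i hc) (by omega)
    simp [this]
  have key2 : ∑ i ∈ insert 1 T, i * g i
      = ∑ i ∈ Finset.range (n+1) ∪ insert 1 T, i * g i := by
    apply Finset.sum_subset (Finset.subset_union_right)
    intro i hi hni
    rcases Nat.lt_or_ge i 2 with h2 | h2
    · interval_cases i
      · simp [hg0]
      · exact absurd (Finset.mem_insert_self 1 T) hni
    · by_contra hc
      have hgi : g i ≠ 0 := fun h => hc (by simp [h])
      have hile : i ≤ n := hgsupp i hgi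
      have hrs := root_spec i h2
      have hvrl := v_root_lv i h2
      have han : root i ≤ n := by
        have : v (root i) 0 ≤ v (root i) (lv i) :=
          (v_strictMono hrs.1).monotone (Nat.zero_le _)
        rw [v_zero] at this
        omega
      have hlv : lv i < n + 1 := by
        have := add_two_le_v hrs.1 (lv i)
        omega
      apply hni
      apply Finset.mem_insert_of_mem
      rw [hT]
      apply Finset.mem_image.2
      refine ⟨(root i, lv i), ?_, hvrl⟩
      simp only [Finset.mem_product, Finset.mem_range, roots, Finset.mem_filter,
        Finset.mem_Icc]
      exact ⟨⟨⟨hrs.1, han⟩, hrs.2⟩, hlv⟩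
  rw [key1, key2]

lemma global_sum_eq {n : ℕ} {f : ℕ → ℕ} (Hf : ∀ i, f i ≠ 0 → i ≤ n)
    (Hsub : ∀ s : Finset ℕ, ∑ i ∈ s, i * f i ≤ n) (hf0 : f 0 = 0) :
    ∑ i ∈ Finset.range (n+1), i * Fm f i = ∑ i ∈ Finset.range (n+1), i * f i := by
  rw [sum_eq_chain_sums (Fm f) (by rw [Fm]; simpa using hf0) (Fm_support Hf Hsub),
    sum_eq_chain_sums f hf0 Hf]
  have h1 : Fm f 1 = f 1 := by simp [Fm]
  rw [h1]
  congr 1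
  apply Finset.sum_congr rfl
  intro a ha
  simp only [roots, Finset.mem_filter, Finset.mem_Icc] at ha
  have h2a : 2 ≤ a := ha.1.1
  have hns : ¬ IsSquare a := ha.2
  rw [← chain_sum_eq Hf Hsub h2a]
  apply Finset.sum_congr rfl
  intro k _
  rw [Fm_v h2a hns]

lemma lv_pos {i : ℕ} (h2 : 2 ≤ i) (hsq : IsSquare i) : 1 ≤ lv i := by
  rw [lv, dif_pos ⟨h2, hsq⟩]; omega

lemma sqrt_v_succ (a k : ℕ) : Nat.sqrt (v a (k+1)) = v a k := by
  rw [v_succ, Nat.sqrt_eq']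

lemma stat_injOn {f : ℕ → ℕ} :
    Set.InjOn Nat.sqrt {i | f i ≠ 0 ∧ IsSquare i} := by
  intro i hi i' hi' h
  have h1 := sqrt_of_isSquare hi.2
  have h2 := sqrt_of_isSquare hi'.2
  rw [← h1, ← h2, h]

lemma stat_image {n : ℕ} {f : ℕ → ℕ} (Hf : ∀ i, f i ≠ 0 → i ≤ n)
    (Hsub : ∀ s : Finset ℕ, ∑ i ∈ s, i * f i ≤ n) (hf0 : f 0 = 0) :
    Nat.sqrt '' {i | f i ≠ 0 ∧ IsSquare i}
      = {i | Fm f i ≠ 0 ∧ i ≤ Fm f i} := by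
  ext i'
  simp only [Set.mem_image, Set.mem_setOf_eq]
  constructor
  · rintro ⟨i, ⟨hfi, hsq⟩, rfl⟩
    rcases Nat.lt_or_ge i 2 with h2 | h2
    · have h1 : i = 1 := by
        rcases Nat.eq_zero_or_pos i with h0 | h0
        · subst h0; exact absurd hf0 hfi
        · omega
      subst h1
      rw [Nat.sqrt_one]
      have hFm : Fm f 1 = f 1 := by simp [Fm]
      rw [hFm]
      exact ⟨hfi, Nat.one_le_iff_ne_zero.2 hfi⟩
    · have hrs := root_spec i h2
      have hvrl := v_root_lv i h2
      have hlv := lv_pos h2 hsq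
      obtain ⟨k', hk'⟩ : ∃ k', lv i = k' + 1 := ⟨lv i - 1, by omega⟩
      have hsqrt : Nat.sqrt i = v (root i) k' := by
        conv_lhs => rw [← hvrl, hk']
        exact sqrt_v_succ _ _
      rw [hsqrt, Fm_v hrs.1 hrs.2, chainF]
      have hmark : f (v (root i) (k' + 1)) ≠ 0 := by
        rw [← hk', hvrl]; exact hfi
      rw [if_pos hmark]
      constructor
      · have := two_le_v hrs.1 k'; omega
      · omega
  · rintro ⟨hne, hle⟩
    rcases Nat.lt_or_ge i' 2 with h2 | h2
    · rcases Nat.lt_or_ge i' 1 with h0 | h0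
      · exfalso
        have : i' = 0 := by omega
        subst this
        rw [Fm] at hne
        simp [hf0] at hne
      · have h1 : i' = 1 := by omega
        subst h1
        rw [Fm] at hne hle
        norm_num at hne hle
        exact ⟨1, ⟨by omega, IsSquare.one⟩, Nat.sqrt_one⟩
    · have hrs := root_spec i' h2
      have hvrl := v_root_lv i' h2
      rw [Fm, if_neg (by omega), chainF] at hne hle
      by_cases hmark : f (v (root i') (lv i' + 1)) ≠ 0
      · refine ⟨v (root i') (lv i' + 1), ⟨hmark, ?_⟩, ?_⟩
        · exact (isSquare_v_iff hrs.1 hrs.2 _).2 (by omega)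
        · rw [sqrt_v_succ, hvrl]
      · exfalso
        rw [if_neg hmark] at hle
        have := Nat.mod_lt (Q f (root i') (lv i')) (show 0 < v (root i') (lv i') by
          have := two_le_v hrs.1 (lv i'); omega)
        omega

lemma marked_iff {f : ℕ → ℕ} {a : ℕ} (ha : 2 ≤ a) (k : ℕ) :
    v a k ≤ chainF f a k ↔ f (v a (k+1)) ≠ 0 := by
  rw [chainF]
  by_cases hm : f (v a (k+1)) ≠ 0
  · rw [if_pos hm]; simp [hm]
  · rw [if_neg hm]
    simp only [hm, iff_false, not_le]
    exact Nat.mod_lt _ (by have := two_le_v ha k; omega)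

lemma chain_inj {n : ℕ} {f g : ℕ → ℕ}
    (Hsubf : ∀ s : Finset ℕ, ∑ i ∈ s, i * f i ≤ n)
    (Hsubg : ∀ s : Finset ℕ, ∑ i ∈ s, i * g i ≤ n)
    {a : ℕ} (ha : 2 ≤ a)
    (Heq : ∀ k, chainF f a k = chainF g a k) :
    ∀ d k, n ≤ k + d → Q f a k = Q g a k ∧ f (v a (k+1)) = g (v a (k+1)) := by
  intro d
  induction d with
  | zero =>
    intro k hk
    have hv1 : n < v a k := n_lt_v ha (by omega)
    have hv2 : n < v a (k+1) := lt_trans hv1 (v_lt_v_succ ha k)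
    constructor
    · rw [Q_eq_zero Hsubf ha hv1, Q_eq_zero Hsubg ha hv1]
    · rw [f_v_eq_zero (f := f) (fun i hi => by
        by_contra hc
        have := Hsubf {i}
        simp only [Finset.sum_singleton] at this
        have : i ≤ i * f i := Nat.le_mul_of_pos_right _ (by omega)
        omega) hv2,
        f_v_eq_zero (f := g) (fun i hi => by
        by_contra hc
        have := Hsubg {i}
        simp only [Finset.sum_singleton] at this
        have : i ≤ i * g i := Nat.le_mul_of_pos_right _ (by omega)
        omega) hv2]
  | succ d ih =>
    intro k hk
    rcases le_or_gt n (k + d) with h | h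
    · exact ih k h
    · have ih' := ih (k+1) (by omega)
      have hc := Heq k
      have hmx : (f (v a (k+1)) ≠ 0) ↔ (g (v a (k+1)) ≠ 0) := by
        rw [← marked_iff ha k, ← marked_iff (f := g) ha k, hc]
      by_cases hm : f (v a (k+1)) ≠ 0
      · have hmg : g (v a (k+1)) ≠ 0 := hmx.1 hm
        have hQf : Q f a (k+1) = f (v a (k+1)) - 1 := by rw [Q, if_pos hm]
        have hQg : Q g a (k+1) = g (v a (k+1)) - 1 := by rw [Q, if_pos hmg]
        constructor
        · have h1 : chainF f a k = v a k + Q f a k := by rw [chainF, if_pos hm]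
          have h2 : chainF g a k = v a k + Q g a k := by rw [chainF, if_pos hmg]
          omega
        · omega
      · have hmg : ¬ g (v a (k+1)) ≠ 0 := fun h => hm (hmx.2 h)
        have hQf : Q f a (k+1) = Q f a k / v a k := by rw [Q, if_neg hm]
        have hQg : Q g a (k+1) = Q g a k / v a k := by rw [Q, if_neg hmg]
        have h1 : chainF f a k = Q f a k % v a k := by rw [chainF, if_neg hm]
        have h2 : chainF g a k = Q g a k % v a k := by rw [chainF, if_neg hmg]
        constructor
        · have e1 := Nat.mod_add_div (Q f a k) (v a k)
          have e2 := Nat.mod_add_div (Q g a k) (v a k)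
          have : Q f a (k+1) = Q g a (k+1) := ih'.1
          nlinarith [e1, e2]
        · push_neg at hm hmg; rw [hm, hmg]

lemma Fm_inj {n : ℕ} {f g : ℕ → ℕ}
    (Hsubf : ∀ s : Finset ℕ, ∑ i ∈ s, i * f i ≤ n)
    (Hsubg : ∀ s : Finset ℕ, ∑ i ∈ s, i * g i ≤ n)
    (hf0 : f 0 = 0) (hg0 : g 0 = 0)
    (Heq : ∀ i, Fm f i = Fm g i) : ∀ i, f i = g i := by
  intro i
  rcases Nat.lt_or_ge i 2 with h2 | h2
  · interval_cases i
    · rw [hf0, hg0]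
    · have := Heq 1
      simpa [Fm] using this
  · have hrs := root_spec i h2
    have hvrl := v_root_lv i h2
    have HeqC : ∀ k, chainF f (root i) k = chainF g (root i) k := by
      intro k
      rw [← Fm_v hrs.1 hrs.2, ← Fm_v hrs.1 hrs.2, Heq]
    cases hlv : lv i with
    | zero =>
      have h0 : f (root i) = g (root i) := by
        have := (chain_inj Hsubf Hsubg hrs.1 HeqC n 0 (by omega)).1
        rwa [Q, Q] at this
      rw [← hvrl, hlv, v_zero]
      exact h0
    | succ k =>
      have := (chain_inj Hsubf Hsubg hrs.1 HeqC n k (by omega)).2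
      rw [← hvrl, hlv]
      exact this

section Assemble

variable {n : ℕ}

lemma count_sum_le (m : Multiset ℕ) (s : Finset ℕ) :
    ∑ i ∈ s, i * m.count i ≤ m.sum := by
  classical
  calc ∑ i ∈ s, i * m.count i = ∑ i ∈ s ∩ m.toFinset, i * m.count i := by
        refine (Finset.sum_subset Finset.inter_subset_left ?_).symm
        intro i hi hni
        have hns : i ∉ m.toFinset := fun h => hni (Finset.mem_inter.2 ⟨hi, h⟩)
        have : m.count i = 0 := Multiset.count_eq_zero.2 (by simpa using hns)
        simp [this]
    _ ≤ ∑ i ∈ m.toFinset, i * m.count i :=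
        Finset.sum_le_sum_of_subset Finset.inter_subset_right
    _ = m.sum := by
        rw [Finset.sum_multiset_count m]
        exact Finset.sum_congr rfl fun i _ => by rw [smul_eq_mul, Nat.mul_comm]

variable (π : Nat.Partition n)

/-- The multiplicity function of a partition. -/
def mult (π : Nat.Partition n) : ℕ → ℕ := fun i => π.parts.count i

lemma mult_zero : mult π 0 = 0 := by
  rw [mult, Multiset.count_eq_zero]
  intro h
  exact absurd (π.parts_pos h) (lt_irrefl 0)

lemma Hsub_mult : ∀ s : Finset ℕ, ∑ i ∈ s, i * mult π i ≤ n := by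
  intro s
  have := count_sum_le π.parts s
  rw [π.parts_sum] at this
  exact this

lemma Hf_mult : ∀ i, mult π i ≠ 0 → i ≤ n := by
  intro i hi
  rw [mult, Ne, Multiset.count_eq_zero, not_not] at hi
  have := Multiset.single_le_sum (fun x _ => Nat.zero_le x) i hi
  rwa [π.parts_sum] at this

lemma sum_mult : ∑ i ∈ Finset.range (n+1), i * mult π i = n := by
  classical
  have hsub : π.parts.toFinset ⊆ Finset.range (n+1) := by
    intro i hi
    simp only [Multiset.mem_toFinset] at hi
    have := Multiset.single_le_sum (fun x _ => Nat.zero_le x) i hi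
    rw [π.parts_sum] at this
    simp only [Finset.mem_range]; omega
  rw [← Finset.sum_subset hsub (fun i _ hni => by
    have : π.parts.count i = 0 := Multiset.count_eq_zero.2 (by simpa using hni)
    simp [mult, this])]
  conv_rhs => rw [← π.parts_sum, Finset.sum_multiset_count π.parts]
  exact Finset.sum_congr rfl fun i _ => by rw [smul_eq_mul, mult, Nat.mul_comm]

/-- The image partition under the Glaisher-type map. -/
def phi (π : Nat.Partition n) : Nat.Partition n where
  parts := ∑ i ∈ Finset.range (n+1), Multiset.replicate (Fm (mult π) i) i
  parts_pos := by
    intro i hi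
    rw [Multiset.mem_sum] at hi
    obtain ⟨k, _, hk⟩ := hi
    rw [Multiset.eq_of_mem_replicate hk] at *
    rcases Nat.eq_zero_or_pos k with h0 | h0
    · subst h0
      exfalso
      have h1 : Fm (mult π) 0 = 0 := by simp [Fm, mult_zero]
      rw [h1] at hk
      simp at hk
    · exact h0
  parts_sum := by
    rw [Multiset.sum_sum]
    have : ∀ i ∈ Finset.range (n+1),
        (Multiset.replicate (Fm (mult π) i) i).sum = i * Fm (mult π) i := by
      intro i _
      rw [Multiset.sum_replicate, smul_eq_mul, Nat.mul_comm]
    rw [Finset.sum_congr rfl this, global_sum_eq (Hf_mult π) (Hsub_mult π) (mult_zero π),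
      sum_mult]

lemma count_phi (j : ℕ) : (phi π).parts.count j = Fm (mult π) j := by
  classical
  rw [phi, Multiset.count_sum']
  have : ∀ i ∈ Finset.range (n+1),
      (Multiset.replicate (Fm (mult π) i) i).count j
        = if i = j then Fm (mult π) i else 0 := by
    intro i _
    by_cases h : i = j
    · subst h; simp [Multiset.count_replicate]
    · simp [Multiset.count_replicate, h, Ne.symm h]
  rw [Finset.sum_congr rfl this, Finset.sum_ite_eq' (Finset.range (n+1)) j]
  by_cases hj : j ∈ Finset.range (n+1)
  · rw [if_pos hj]
  · rw [if_neg hj]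
    by_contra hc
    have := Fm_support (Hf_mult π) (Hsub_mult π) j (Ne.symm hc)
    simp only [Finset.mem_range] at hj
    omega

lemma phi_injective : Function.Injective (phi (n := n)) := by
  intro π π' h
  have hcount : ∀ j, mult π j = mult π' j := by
    apply Fm_inj (Hsub_mult π) (Hsub_mult π') (mult_zero π) (mult_zero π')
    intro i
    rw [← count_phi π i, ← count_phi π' i, h]
  have : π.parts = π'.parts := Multiset.ext.2 hcount
  cases π; cases π'
  simpa using this

lemma phi_stat :
    {i : ℕ | i ∈ π.parts ∧ IsSquare i}.ncard
      = {i : ℕ | i ∈ (phi π).parts ∧ i ≤ (phi π).parts.count i}.ncard := by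
  have h1 : {i : ℕ | i ∈ π.parts ∧ IsSquare i}
      = {i : ℕ | mult π i ≠ 0 ∧ IsSquare i} := by
    ext i
    simp [mult, Multiset.count_eq_zero]
  have h2 : {i : ℕ | i ∈ (phi π).parts ∧ i ≤ (phi π).parts.count i}
      = {i : ℕ | Fm (mult π) i ≠ 0 ∧ i ≤ Fm (mult π) i} := by
    ext i
    simp only [Set.mem_setOf_eq, ← Multiset.count_ne_zero, count_phi]
  rw [h1, h2, ← stat_image (Hf_mult π) (Hsub_mult π) (mult_zero π),
    Set.ncard_image_of_injOn stat_injOn]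

end Assemble

end SqVsMult


theorem squares_vs_large_multiplicity (n j : ℕ) :
    Nat.card {π : Nat.Partition n //
        {i : ℕ | i ∈ π.parts ∧ IsSquare i}.ncard = j} =
    Nat.card {π : Nat.Partition n //
        {i : ℕ | i ∈ π.parts ∧ i ≤ π.parts.count i}.ncard = j} := by
  classical
  have hbij : Function.Bijective (SqVsMult.phi (n := n)) :=
    Finite.injective_iff_bijective.1 SqVsMult.phi_injective
  exact Nat.card_congr ((Equiv.ofBijective _ hbij).subtypeEquiv (fun π => by
    rw [SqVsMult.phi_stat π, Equiv.ofBijective_apply]))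
end

section
/- Fix an integer d > 1. For every n and j ≥ 0, the number of partitions of n with exactly j distinct part sizes divisible by d equals the number of partitions of n with exactly j distinct part sizes having multiplicity at least d. -/
open Finset

section digits
variable {d : ℕ} (hd : 1 < d)

lemma decomp (i : ℕ) : d ^ d.maxPowDiv i * (i / d ^ d.maxPowDiv i) = i :=
  Nat.mul_div_cancel' (Nat.maxPowDiv.pow_dvd (p := d) (n := i))

lemma uu_pos {i : ℕ} (hi : i ≠ 0) : i / d ^ d.maxPowDiv i ≠ 0 := by
  intro h0
  have := decomp (d := d) i
  rw [h0, mul_zero] at this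
  exact hi this.symm

include hd in
lemma not_dvd_uu {i : ℕ} (hi : i ≠ 0) : ¬ d ∣ i / d ^ d.maxPowDiv i := by
  intro ⟨c, hc⟩
  have h1 : d ^ (d.maxPowDiv i + 1) ∣ i := by
    refine ⟨c, ?_⟩
    rw [pow_succ, mul_assoc, ← hc, decomp]
  have : d.maxPowDiv i + 1 ≤ d.maxPowDiv i := (Nat.pow_dvd_iff_le_padicValNat (show d ≠ 1 by omega) hi).1 h1
  omega

include hd in
lemma maxPowDiv_of_not_dvd {u : ℕ} (hu : ¬ d ∣ u) (k : ℕ) :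
    d.maxPowDiv (d ^ k * u) = k := by
  have hu0 : 0 < u := by
    rcases Nat.eq_zero_or_pos u with h | h
    · exact absurd (h ▸ dvd_zero d) hu
    · exact h
  rw [Nat.maxPowDiv, Nat.maxPowDiv.base_pow_mul hd (by omega)]
  have : d.maxPowDiv u = 0 := by
    by_contra h
    exact hu (dvd_trans (dvd_pow_self d h) (Nat.maxPowDiv.pow_dvd (p := d) (n := u)))
  rw [Nat.maxPowDiv] at this
  omega

include hd in
lemma uu_of_not_dvd {u : ℕ} (hu : ¬ d ∣ u) (k : ℕ) :
    (d ^ k * u) / d ^ d.maxPowDiv (d ^ k * u) = u := by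
  rw [maxPowDiv_of_not_dvd hd hu k, Nat.mul_div_cancel_left _ (pow_pos (by omega : 0 < d) _)]

include hd in
lemma self_lt_pow (k : ℕ) : k < d ^ k :=
  lt_of_lt_of_le (Nat.lt_two_pow_self) (Nat.pow_le_pow_left hd k)

include hd in
lemma digit_extract : ∀ (m : ℕ) (a : ℕ → ℕ), (∀ k, a k < d) → ∀ B : ℕ,
    (∑ k ∈ Finset.range B, a k * d ^ k) / d ^ m % d = if m < B then a m else 0 := by
  intro m
  induction m with
  | zero =>
    intro a ha B
    cases B with
    | zero => simp
    | succ B =>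
      rw [Finset.sum_range_succ']
      simp only [pow_zero, mul_one, Nat.div_one, if_pos (Nat.succ_pos B)]
      have : ∀ k ∈ Finset.range B, a (k + 1) * d ^ (k + 1) = (a (k + 1) * d ^ k) * d := by
        intro k _; ring
      rw [Finset.sum_congr rfl this, ← Finset.sum_mul, Nat.mul_add_mod', Nat.mod_eq_of_lt (ha 0)]
  | succ m ih =>
    intro a ha B
    cases B with
    | zero => simp
    | succ B =>
      rw [Finset.sum_range_succ']
      have h1 : (∑ k ∈ Finset.range B, a (k + 1) * d ^ (k + 1)) + a 0 * d ^ 0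
          = d * (∑ k ∈ Finset.range B, a (k + 1) * d ^ k) + a 0 := by
        rw [Finset.mul_sum]; congr 1
        · exact Finset.sum_congr rfl fun k _ => by ring
        · simp
      rw [h1, pow_succ', ← Nat.div_div_eq_div_mul,
        Nat.mul_add_div (by omega : 0 < d), Nat.div_eq_of_lt (ha 0), Nat.add_zero,
        ih (fun k => a (k + 1)) (fun k => ha (k + 1)) B]
      simp [Nat.succ_lt_succ_iff]

include hd in
lemma digit_reconstruct : ∀ (B n : ℕ), n < d ^ B →
    ∑ k ∈ Finset.range B, (n / d ^ k % d) * d ^ k = n := by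
  intro B
  induction B with
  | zero => intro n hn; simp at hn ⊢; omega
  | succ B ih =>
    intro n hn
    rw [Finset.sum_range_succ']
    have h2 : ∀ k ∈ Finset.range B, n / d ^ (k + 1) % d * d ^ (k + 1)
        = d * ((n / d) / d ^ k % d * d ^ k) := by
      intro k _
      rw [pow_succ', ← Nat.div_div_eq_div_mul]
      ring
    have hlt : n / d < d ^ B := by
      rw [Nat.div_lt_iff_lt_mul (by omega : 0 < d)]
      calc n < d ^ (B + 1) := hn
        _ = d ^ B * d := by ring
    rw [Finset.sum_congr rfl h2, ← Finset.mul_sum, ih (n / d) hlt]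
    simp only [pow_zero, mul_one, Nat.div_one]
    exact Nat.div_add_mod n d

lemma digit_sum_lt (B : ℕ) (a : ℕ → ℕ) (ha : ∀ k, a k < d) :
    ∑ k ∈ Finset.range B, a k * d ^ k < d ^ B := by
  induction B with
  | zero => simp
  | succ B ih =>
    rw [Finset.sum_range_succ]
    calc (∑ k ∈ Finset.range B, a k * d ^ k) + a B * d ^ B
        < d ^ B + a B * d ^ B := by omega
      _ = (a B + 1) * d ^ B := by ring
      _ ≤ d * d ^ B := Nat.mul_le_mul_right _ (by have := ha B; omega)
      _ = d ^ (B + 1) := by ring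

end digits
section maps
variable (d : ℕ)

/-- bound on the support of a finsupp -/
def NN (f : ℕ →₀ ℕ) : ℕ := f.support.sup id

lemma apply_eq_zero_of_NN_lt {f : ℕ →₀ ℕ} {x : ℕ} (h : NN f < x) : f x = 0 := by
  by_contra hx
  exact absurd (Finset.le_sup (f := id) (Finsupp.mem_support_iff.2 hx)) (by simpa [NN] using Nat.not_le.2 h)

/-- the digit-resum of the multiplicities along the chain j, dj, d²j, ... -/
def dig (f : ℕ →₀ ℕ) (j : ℕ) : ℕ :=
  ∑ k ∈ Finset.range (NN f + 1), (f (d ^ k * j) % d) * d ^ k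

variable {d} (hd : 1 < d)

include hd in
lemma dig_eq {f : ℕ →₀ ℕ} {j : ℕ} (hj : j ≠ 0) {B : ℕ} (hB : NN f + 1 ≤ B) :
    dig d f j = ∑ k ∈ Finset.range B, (f (d ^ k * j) % d) * d ^ k := by
  refine Finset.sum_subset (Finset.range_subset_range.2 hB) ?_
  intro k _ hk
  rw [Finset.mem_range, not_lt] at hk
  have h1 : NN f < d ^ k * j := by
    have := self_lt_pow hd k
    have : 1 ≤ j := Nat.pos_of_ne_zero hj
    calc NN f < k + 1 := by omega
      _ ≤ d ^ k := self_lt_pow hd k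
      _ = d ^ k * 1 := by ring
      _ ≤ d ^ k * j := Nat.mul_le_mul_left _ this
  rw [apply_eq_zero_of_NN_lt h1]
  simp

variable (d)

def phiAux (f : ℕ →₀ ℕ) (j : ℕ) : ℕ :=
  if d ∣ j then f (j / d) / d else dig d f j

def psiAux (c : ℕ →₀ ℕ) (i : ℕ) : ℕ :=
  if i = 0 then 0 else d * c (d * i) + c (i / d ^ d.maxPowDiv i) / d ^ d.maxPowDiv i % d

variable {d}

include hd in
lemma phiAux_support {f : ℕ →₀ ℕ} {j : ℕ} (h : phiAux d f j ≠ 0) :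
    j ∈ Finset.range (d * NN f + 1) := by
  rw [Finset.mem_range]
  unfold phiAux at h
  split_ifs at h with hdvd
  · have h1 : f (j / d) ≠ 0 := fun h0 => h (by rw [h0]; simp)
    have h2 : j / d ≤ NN f := by
      by_contra hc
      exact h1 (apply_eq_zero_of_NN_lt (by omega))
    have h3 : j = d * (j / d) := (Nat.mul_div_cancel' hdvd).symm
    have h4 : d * (j / d) ≤ d * NN f := Nat.mul_le_mul_left d h2
    omega
  · obtain ⟨k, _, hk⟩ := Finset.exists_ne_zero_of_sum_ne_zero h
    have h1 : f (d ^ k * j) ≠ 0 := by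
      intro h0; rw [h0] at hk; simp at hk
    have h2 : d ^ k * j ≤ NN f := by
      by_contra hc
      exact h1 (apply_eq_zero_of_NN_lt (by omega))
    have h3 : j ≤ d ^ k * j := Nat.le_mul_of_pos_left _ (pow_pos (by omega : 0 < d) _)
    have h4 : NN f ≤ d * NN f := Nat.le_mul_of_pos_left _ (by omega)
    omega

include hd in
lemma psiAux_support {c : ℕ →₀ ℕ} {i : ℕ} (h : psiAux d c i ≠ 0) :
    i ∈ Finset.range (NN c * (c.support.sup c) + NN c + 1) := by
  rw [Finset.mem_range]
  unfold psiAux at h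
  split_ifs at h with hi
  · omega
  · rcases Nat.eq_zero_or_pos (d * c (d * i) + c (i / d ^ d.maxPowDiv i) / d ^ d.maxPowDiv i % d) with h0 | hpos
    · exact absurd h0 h
    rcases Nat.eq_zero_or_pos (c (d * i)) with h1 | h1
    · -- the digit part is nonzero
      have hdig : c (i / d ^ d.maxPowDiv i) / d ^ d.maxPowDiv i % d ≠ 0 := by
        rw [h1] at h; simpa using h
      set u := i / d ^ d.maxPowDiv i with hu
      set k := d.maxPowDiv i with hk
      have h2 : c u ≠ 0 := by
        intro h0; rw [h0] at hdig; simp at hdig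
      have h3 : d ^ k ≤ c u := by
        by_contra hc
        rw [Nat.div_eq_of_lt (by omega)] at hdig
        simp at hdig
      have h4 : u ≤ NN c := by
        by_contra hc
        exact h2 (apply_eq_zero_of_NN_lt (by omega))
      have h5 : c u ≤ c.support.sup c := Finset.le_sup (Finsupp.mem_support_iff.2 h2)
      have h6 : i = d ^ k * u := (decomp i).symm
      have : i ≤ (c.support.sup c) * NN c :=
        h6 ▸ Nat.mul_le_mul (le_trans h3 h5) h4
      have : (c.support.sup c) * NN c = NN c * (c.support.sup c) := by ring
      omega
    · -- c (d * i) ≠ 0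
      have h2 : d * i ≤ NN c := by
        by_contra hc
        have hz : c (d * i) = 0 := apply_eq_zero_of_NN_lt (show NN c < d * i by omega)
        omega
      have : i ≤ d * i := Nat.le_mul_of_pos_left _ (by omega)
      omega

variable (d) in
noncomputable def phiF (hd : 1 < d) (f : ℕ →₀ ℕ) : ℕ →₀ ℕ :=
  Finsupp.onFinset (Finset.range (d * NN f + 1)) (phiAux d f) (fun _ => phiAux_support hd)

variable (d) in
noncomputable def psiF (hd : 1 < d) (c : ℕ →₀ ℕ) : ℕ →₀ ℕ :=
  Finsupp.onFinset (Finset.range (NN c * (c.support.sup c) + NN c + 1)) (psiAux d c)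
    (fun _ => psiAux_support hd)

lemma phiF_apply (f : ℕ →₀ ℕ) (j : ℕ) : phiF d hd f j = phiAux d f j := rfl

lemma psiF_apply (c : ℕ →₀ ℕ) (i : ℕ) : psiF d hd c i = psiAux d c i := rfl

end maps
section inv
variable {d : ℕ} (hd : 1 < d)

lemma mod_helper {r : ℕ} (x : ℕ) (hr : r < d) : (d * x + r) % d = r := by
  rw [Nat.add_comm, Nat.add_mul_mod_self_left, Nat.mod_eq_of_lt hr]

include hd in
lemma psi_phi {f : ℕ →₀ ℕ} (h0 : f 0 = 0) : psiF d hd (phiF d hd f) = f := by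
  ext i
  rw [psiF_apply]
  rcases Nat.eq_zero_or_pos i with hi | hi
  · rw [hi, psiAux, if_pos rfl, h0]
  have hi0 : i ≠ 0 := by omega
  rw [psiAux, if_neg hi0]
  set k := d.maxPowDiv i with hk
  set u := i / d ^ d.maxPowDiv i with hu
  have hdvd : d ∣ d * i := Dvd.intro i rfl
  have h1 : phiF d hd f (d * i) = f i / d := by
    rw [phiF_apply, phiAux, if_pos hdvd, Nat.mul_div_cancel_left _ (by omega : 0 < d)]
  have hu0 : u ≠ 0 := uu_pos hi0
  have hnd : ¬ d ∣ u := not_dvd_uu hd hi0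
  have h2 : phiF d hd f u = dig d f u := by
    rw [phiF_apply, phiAux, if_neg hnd]
  rw [h1, h2]
  have h3 : dig d f u / d ^ k % d
      = if k < NN f + 1 then f (d ^ k * u) % d else 0 := by
    have := digit_extract hd k (fun m => f (d ^ m * u) % d)
      (fun m => Nat.mod_lt _ (by omega)) (NN f + 1)
    rw [dig]
    exact this
  rw [h3]
  split_ifs with hkB
  · rw [hk, hu, decomp]
    exact Nat.div_add_mod (f i) d
  · have h4 : NN f < i := by
      have h5 : i = d ^ k * u := by rw [hk, hu, decomp]
      have h6 : d ^ k ≤ d ^ k * u := Nat.le_mul_of_pos_right _ (Nat.pos_of_ne_zero hu0)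
      have h7 : k < d ^ k := self_lt_pow hd k
      omega
    rw [apply_eq_zero_of_NN_lt h4]
    simp

include hd in
lemma phi_psi {c : ℕ →₀ ℕ} (h0 : c 0 = 0) : phiF d hd (psiF d hd c) = c := by
  ext j
  rw [phiF_apply]
  by_cases hdvd : d ∣ j
  · rw [phiAux, if_pos hdvd]
    rcases Nat.eq_zero_or_pos j with hj | hj
    · rw [hj, h0]; rw [Nat.zero_div, psiF_apply, psiAux, if_pos rfl, Nat.zero_div]
    have hjd : j / d ≠ 0 := by
      have := Nat.le_of_dvd hj hdvd
      have := Nat.div_pos this (by omega : 0 < d)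
      omega
    rw [psiF_apply, psiAux, if_neg hjd]
    have h1 : d * (j / d) = j := Nat.mul_div_cancel' hdvd
    rw [h1]
    set r := c ((j/d) / d ^ d.maxPowDiv (j/d)) / d ^ d.maxPowDiv (j/d) % d with hr
    have hrd : r < d := Nat.mod_lt _ (by omega)
    rw [Nat.mul_add_div (by omega : 0 < d), Nat.div_eq_of_lt hrd, Nat.add_zero]
  · have hj : j ≠ 0 := fun h => hdvd (h ▸ dvd_zero d)
    rw [phiAux, if_neg hdvd]
    set Sc := c.support.sup c with hSc
    set B := NN (psiF d hd c) + 1 + (Sc + 1) with hB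
    have hcb : c j < d ^ B := by
      have h1 : c j ≤ Sc := by
        rcases Nat.eq_zero_or_pos (c j) with h | h
        · omega
        · exact Finset.le_sup (Finsupp.mem_support_iff.2 (by omega))
      have h2 : Sc < d ^ Sc := self_lt_pow hd Sc
      have h3 : d ^ Sc ≤ d ^ B := Nat.pow_le_pow_right (by omega) (by omega)
      omega
    rw [dig_eq hd hj (B := B) (by omega)]
    have hterm : ∀ k ∈ Finset.range B,
        (psiF d hd c (d ^ k * j) % d) * d ^ k = (c j / d ^ k % d) * d ^ k := by
      intro k _
      congr 1
      rw [psiF_apply, psiAux]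
      have hkj : d ^ k * j ≠ 0 := by
        have : 0 < d ^ k := pow_pos (by omega : 0 < d) _
        positivity
      rw [if_neg hkj, maxPowDiv_of_not_dvd hd hdvd k,
        Nat.mul_div_cancel_left j (pow_pos (by omega : 0 < d) k),
        mod_helper _ (Nat.mod_lt _ (by omega : 0 < d))]
    rw [Finset.sum_congr rfl hterm, digit_reconstruct hd B (c j) hcb]

end inv
section weight

/-- the weight (sum of parts) of a multiplicity function -/
def wt (f : ℕ →₀ ℕ) : ℕ := f.sum fun a m => a * m

variable {d : ℕ} (hd : 1 < d)

include hd in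
lemma wt_psiF (c : ℕ →₀ ℕ) : wt (psiF d hd c) = wt c := by
  classical
  set Sc := c.support.sup c with hSc
  set M := NN c * Sc + NN c + 1 with hM
  set B0 := Sc + 1 with hB0
  have hdpos : 0 < d := by omega
  have hsub1 : (psiF d hd c).support ⊆ Finset.range M := by
    intro i hi
    exact psiAux_support hd (by rwa [← psiF_apply hd, ← Finsupp.mem_support_iff])
  have hsub2 : c.support ⊆ Finset.range (d * M) := by
    intro j hj
    rw [Finset.mem_range]
    have h1 : j ≤ NN c := Finset.le_sup (f := id) hj
    have h2 : M ≤ d * M := Nat.le_mul_of_pos_left _ hdpos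
    omega
  rw [wt, wt, Finsupp.sum_of_support_subset _ hsub1 _ (fun i _ => by simp),
    Finsupp.sum_of_support_subset _ hsub2 _ (fun i _ => by simp)]
  -- split LHS
  have hsplit : ∀ i ∈ Finset.range M, i * psiF d hd c i
      = (d * i) * c (d * i) + i * (c (i / d ^ d.maxPowDiv i) / d ^ d.maxPowDiv i % d) := by
    intro i _
    rw [psiF_apply hd, psiAux]
    rcases Nat.eq_zero_or_pos i with h | h
    · subst h; simp
    · rw [if_neg (by omega)]; ring
  rw [Finset.sum_congr rfl hsplit, Finset.sum_add_distrib]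
  -- split RHS by divisibility
  rw [← Finset.sum_filter_add_sum_filter_not (Finset.range (d * M)) (fun j => d ∣ j)
    (fun j => j * c j)]
  congr 1
  · -- divisible part
    refine Finset.sum_nbij' (fun i => d * i) (fun j => j / d) ?_ ?_ ?_ ?_ ?_
    · intro i hi
      rw [Finset.mem_range] at hi
      rw [Finset.mem_filter, Finset.mem_range]
      exact ⟨by exact Nat.mul_lt_mul_left hdpos |>.2 hi, Dvd.intro i rfl⟩
    · intro j hj
      rw [Finset.mem_filter, Finset.mem_range] at hj
      rw [Finset.mem_range]
      exact Nat.div_lt_of_lt_mul hj.1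
    · intro i _
      exact Nat.mul_div_cancel_left i hdpos
    · intro j hj
      rw [Finset.mem_filter] at hj
      exact Nat.mul_div_cancel' hj.2
    · intro i _
      rfl
  · -- non-divisible part
    set T := (Finset.range (d * M)).filter (fun j => ¬ d ∣ j) with hT
    set F : ℕ × ℕ → ℕ := fun p => (d ^ p.2 * p.1) * (c p.1 / d ^ p.2 % d) with hF
    have hrhs : ∀ j ∈ T, j * c j = ∑ k ∈ Finset.range B0, F (j, k) := by
      intro j hj
      rw [hT, Finset.mem_filter] at hj
      have hcj : c j < d ^ B0 := by
        have h1 : c j ≤ Sc := by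
          rcases Nat.eq_zero_or_pos (c j) with h | h
          · omega
          · exact Finset.le_sup (Finsupp.mem_support_iff.2 (by omega))
        have h2 : Sc < d ^ Sc := self_lt_pow hd Sc
        have h3 : d ^ Sc ≤ d ^ B0 := Nat.pow_le_pow_right hdpos (by omega)
        omega
      conv_lhs => rw [← digit_reconstruct hd B0 (c j) hcj]
      rw [Finset.mul_sum]
      exact Finset.sum_congr rfl fun k _ => by rw [hF]; ring
    rw [Finset.sum_congr rfl hrhs, ← Finset.sum_product']
    -- now a bijection between nonzero terms
    set G : ℕ → ℕ := fun i => i * (c (i / d ^ d.maxPowDiv i) / d ^ d.maxPowDiv i % d) with hG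
    rw [← Finset.sum_filter_ne_zero (Finset.range M) (f := G),
      ← Finset.sum_filter_ne_zero (T ×ˢ Finset.range B0) (f := F)]
    refine Finset.sum_nbij' (fun i => (i / d ^ d.maxPowDiv i, d.maxPowDiv i))
      (fun p => d ^ p.2 * p.1) ?_ ?_ ?_ ?_ ?_
    · intro i hi
      rw [Finset.mem_filter, Finset.mem_range] at hi
      obtain ⟨hiM, hne⟩ := hi
      have hi0 : i ≠ 0 := by rintro rfl; simp [hG] at hne
      have hne' : i * (c (i / d ^ d.maxPowDiv i) / d ^ d.maxPowDiv i % d) ≠ 0 := hne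
      have hdig : c (i / d ^ d.maxPowDiv i) / d ^ d.maxPowDiv i % d ≠ 0 :=
        fun h => hne' (by rw [h, Nat.mul_zero])
      have hcu : d ^ d.maxPowDiv i ≤ c (i / d ^ d.maxPowDiv i) := by
        by_contra hlt
        rw [Nat.div_eq_of_lt (by omega)] at hdig
        simp at hdig
      have hcu0 : c (i / d ^ d.maxPowDiv i) ≠ 0 := by
        have : 0 < d ^ d.maxPowDiv i := pow_pos hdpos _
        omega
      have hcuS : c (i / d ^ d.maxPowDiv i) ≤ Sc := Finset.le_sup (Finsupp.mem_support_iff.2 hcu0)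
      refine Finset.mem_filter.2 ⟨Finset.mem_product.2 ⟨?_, ?_⟩, ?_⟩
      · show i / d ^ d.maxPowDiv i ∈ T
        rw [hT]
        refine Finset.mem_filter.2 ⟨Finset.mem_range.2 ?_, not_dvd_uu hd hi0⟩
        have h1 : i / d ^ d.maxPowDiv i ≤ i := Nat.div_le_self _ _
        have h2 : M ≤ d * M := Nat.le_mul_of_pos_left _ hdpos
        omega
      · show d.maxPowDiv i ∈ Finset.range B0
        rw [Finset.mem_range]
        have h3 : Sc < d ^ Sc := self_lt_pow hd Sc
        have h4 : d ^ Sc ≤ d ^ B0 := Nat.pow_le_pow_right hdpos (by omega)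
        exact (Nat.pow_lt_pow_iff_right hd).1 (by omega)
      · show F (i / d ^ d.maxPowDiv i, d.maxPowDiv i) ≠ 0
        rw [hF]
        show (d ^ d.maxPowDiv i * (i / d ^ d.maxPowDiv i))
          * (c (i / d ^ d.maxPowDiv i) / d ^ d.maxPowDiv i % d) ≠ 0
        rw [decomp]
        exact hne'
    · intro p hp
      rw [Finset.mem_filter] at hp
      obtain ⟨hmem, hne⟩ := hp
      rw [Finset.mem_product] at hmem
      obtain ⟨hp1, hp2⟩ := hmem
      rw [hT, Finset.mem_filter, Finset.mem_range] at hp1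
      rw [Finset.mem_range] at hp2
      have hne' : (d ^ p.2 * p.1) * (c p.1 / d ^ p.2 % d) ≠ 0 := hne
      have hdig : c p.1 / d ^ p.2 % d ≠ 0 := fun h => hne' (by rw [h, Nat.mul_zero])
      have hcp : d ^ p.2 ≤ c p.1 := by
        by_contra hlt
        rw [Nat.div_eq_of_lt (by omega)] at hdig
        simp at hdig
      have hcp0 : c p.1 ≠ 0 := by
        have : 0 < d ^ p.2 := pow_pos hdpos _
        omega
      have hcuS : c p.1 ≤ Sc := Finset.le_sup (Finsupp.mem_support_iff.2 hcp0)
      have hp1N : p.1 ≤ NN c := Finset.le_sup (f := id) (Finsupp.mem_support_iff.2 hcp0)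
      refine Finset.mem_filter.2 ⟨Finset.mem_range.2 ?_, ?_⟩
      · show d ^ p.2 * p.1 < M
        have h1 : d ^ p.2 * p.1 ≤ Sc * NN c := Nat.mul_le_mul (le_trans hcp hcuS) hp1N
        have h2 : Sc * NN c = NN c * Sc := by ring
        omega
      · show G (d ^ p.2 * p.1) ≠ 0
        rw [hG]
        show (d ^ p.2 * p.1) * (c ((d ^ p.2 * p.1) / d ^ d.maxPowDiv (d ^ p.2 * p.1))
          / d ^ d.maxPowDiv (d ^ p.2 * p.1) % d) ≠ 0
        rw [maxPowDiv_of_not_dvd hd hp1.2, Nat.mul_div_cancel_left _ (pow_pos hdpos _)]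
        exact hne'
    · intro i _
      show d ^ d.maxPowDiv i * (i / d ^ d.maxPowDiv i) = i
      exact decomp i
    · intro p hp
      rw [Finset.mem_filter, Finset.mem_product] at hp
      obtain ⟨⟨hp1, _⟩, _⟩ := hp
      rw [hT, Finset.mem_filter] at hp1
      have hpnd := hp1.2
      show ((d ^ p.2 * p.1) / d ^ d.maxPowDiv (d ^ p.2 * p.1), d.maxPowDiv (d ^ p.2 * p.1)) = p
      rw [maxPowDiv_of_not_dvd hd hpnd, Nat.mul_div_cancel_left _ (pow_pos hdpos _)]
    · intro i _
      show G i = F (i / d ^ d.maxPowDiv i, d.maxPowDiv i)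
      rw [hG, hF]
      show i * (c (i / d ^ d.maxPowDiv i) / d ^ d.maxPowDiv i % d)
        = (d ^ d.maxPowDiv i * (i / d ^ d.maxPowDiv i))
          * (c (i / d ^ d.maxPowDiv i) / d ^ d.maxPowDiv i % d)
      rw [decomp]

end weight
section partitions

lemma sum_toMultiset (g : ℕ →₀ ℕ) : (Finsupp.toMultiset g).sum = wt g := by
  induction g using Finsupp.induction with
  | zero => simp [wt]
  | single_add a n f ha hn ih =>
    have h1 : wt (Finsupp.single a n + f) = a * n + wt f := by
      rw [wt, Finsupp.sum_add_index' (fun x => by simp) (fun x b₁ b₂ => by ring),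
        Finsupp.sum_single_index (by simp)]
      rfl
    rw [Finsupp.toMultiset_add, Multiset.sum_add, ih, Finsupp.toMultiset_single, h1,
      Multiset.nsmul_singleton, Multiset.sum_replicate, smul_eq_mul]
    ring

lemma wt_toFinsupp (m : Multiset ℕ) : wt (Multiset.toFinsupp m) = m.sum := by
  rw [← sum_toMultiset, Multiset.toFinsupp_toMultiset]

variable {d : ℕ} (hd : 1 < d) {n : ℕ}

lemma parts_toFinsupp_zero (π : n.Partition) : Multiset.toFinsupp π.parts 0 = 0 := by
  rw [Multiset.toFinsupp_apply, Multiset.count_eq_zero]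
  exact fun h => absurd (π.parts_pos h) (by omega)

/-- the forward map on partitions -/
noncomputable def Fmap (π : n.Partition) : n.Partition where
  parts := (psiF d hd (Multiset.toFinsupp π.parts)).toMultiset
  parts_pos := by
    intro i hi
    rw [Finsupp.mem_toMultiset, Finsupp.mem_support_iff] at hi
    rcases Nat.eq_zero_or_pos i with rfl | h
    · exact absurd (by rw [psiF_apply hd, psiAux, if_pos rfl]) hi
    · exact h
  parts_sum := by
    rw [sum_toMultiset, wt_psiF hd, wt_toFinsupp, π.parts_sum]

/-- the inverse map on partitions -/
noncomputable def Gmap (π : n.Partition) : n.Partition where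
  parts := (phiF d hd (Multiset.toFinsupp π.parts)).toMultiset
  parts_pos := by
    intro i hi
    rw [Finsupp.mem_toMultiset, Finsupp.mem_support_iff] at hi
    rcases Nat.eq_zero_or_pos i with rfl | h
    · refine absurd ?_ hi
      rw [phiF_apply hd, phiAux, if_pos (dvd_zero d), Nat.zero_div, parts_toFinsupp_zero,
        Nat.zero_div]
    · exact h
  parts_sum := by
    have h1 : wt (phiF d hd (Multiset.toFinsupp π.parts)) = wt (Multiset.toFinsupp π.parts) := by
      conv_lhs => rw [← wt_psiF hd (phiF d hd (Multiset.toFinsupp π.parts)),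
        psi_phi hd (parts_toFinsupp_zero π)]
    rw [sum_toMultiset, h1, wt_toFinsupp, π.parts_sum]

lemma GF (π : n.Partition) : Gmap hd (Fmap hd π) = π := by
  ext1
  show (phiF d hd (Multiset.toFinsupp (Finsupp.toMultiset _))).toMultiset = π.parts
  rw [Finsupp.toMultiset_toFinsupp, phi_psi hd (parts_toFinsupp_zero π),
    Multiset.toFinsupp_toMultiset]

lemma FG (π : n.Partition) : Fmap hd (Gmap hd π) = π := by
  ext1
  show (psiF d hd (Multiset.toFinsupp (Finsupp.toMultiset _))).toMultiset = π.parts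
  rw [Finsupp.toMultiset_toFinsupp, psi_phi hd (parts_toFinsupp_zero π),
    Multiset.toFinsupp_toMultiset]

lemma stat (π : n.Partition) :
    {i : ℕ | i ∈ π.parts ∧ d ∣ i}.ncard
      = {i : ℕ | i ∈ (Fmap hd π).parts ∧ d ≤ (Fmap hd π).parts.count i}.ncard := by
  set c := Multiset.toFinsupp π.parts with hc
  have hc0 : c 0 = 0 := parts_toFinsupp_zero π
  have hYparts : ∀ i, (Fmap hd π).parts.count i = psiF d hd c i := by
    intro i
    show (Finsupp.toMultiset _).count i = _
    rw [Finsupp.count_toMultiset]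
  have hYmem : ∀ i : ℕ, i ∈ (Fmap hd π).parts ↔ psiF d hd c i ≠ 0 := by
    intro i
    show i ∈ (Finsupp.toMultiset _) ↔ _
    rw [Finsupp.mem_toMultiset, Finsupp.mem_support_iff]
  have hY : {i : ℕ | i ∈ (Fmap hd π).parts ∧ d ≤ (Fmap hd π).parts.count i}
      = {i : ℕ | c (d * i) ≠ 0} := by
    ext i
    simp only [Set.mem_setOf_eq, hYmem, hYparts]
    constructor
    · rintro ⟨h1, h2⟩
      rcases Nat.eq_zero_or_pos i with rfl | hi
      · rw [psiF_apply hd, psiAux, if_pos rfl] at h2; omega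
      · rw [psiF_apply hd, psiAux, if_neg (by omega)] at h2
        intro h0
        rw [h0, Nat.mul_zero, Nat.zero_add] at h2
        have := Nat.mod_lt (c (i / d ^ d.maxPowDiv i) / d ^ d.maxPowDiv i) (show 0 < d by omega)
        omega
    · intro h0
      have hi : i ≠ 0 := by rintro rfl; rw [Nat.mul_zero] at h0; exact h0 hc0
      have h2 : d ≤ psiF d hd c i := by
        rw [psiF_apply hd, psiAux, if_neg hi]
        have h3 : 1 ≤ c (d * i) := Nat.pos_of_ne_zero h0
        have h4 : d ≤ d * c (d * i) := Nat.le_mul_of_pos_right _ h3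
        omega
      exact ⟨by omega, h2⟩
  have hX : {i : ℕ | i ∈ π.parts ∧ d ∣ i} = (fun i => d * i) '' {i : ℕ | c (d * i) ≠ 0} := by
    ext j
    simp only [Set.mem_setOf_eq, Set.mem_image]
    constructor
    · rintro ⟨h1, h2⟩
      refine ⟨j / d, ?_, Nat.mul_div_cancel' h2⟩
      rw [Nat.mul_div_cancel' h2, hc, Multiset.toFinsupp_apply, ← Multiset.count_pos] at *
      omega
    · rintro ⟨i, h1, rfl⟩
      rw [hc, Multiset.toFinsupp_apply] at h1
      exact ⟨Multiset.count_pos.1 (by omega), Dvd.intro i rfl⟩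
  rw [hX, hY, Set.ncard_image_of_injective _ (mul_right_injective₀ (show d ≠ 0 by omega))]

end partitions

theorem glaisher_equidistribution (d : ℕ) (hd : 1 < d) (n j : ℕ) :
    Nat.card {π : Nat.Partition n //
        {i : ℕ | i ∈ π.parts ∧ d ∣ i}.ncard = j} =
    Nat.card {π : Nat.Partition n //
        {i : ℕ | i ∈ π.parts ∧ d ≤ π.parts.count i}.ncard = j} := by
  refine Nat.card_congr ?_
  exact {
    toFun := fun ⟨π, h⟩ => ⟨Fmap hd π, by rw [← stat hd π]; exact h⟩
    invFun := fun ⟨π, h⟩ => ⟨Gmap hd π, by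
      have h1 := stat hd (Gmap hd π)
      rw [FG hd π] at h1
      rw [h1]; exact h⟩
    left_inv := fun ⟨π, h⟩ => Subtype.ext (GF hd π)
    right_inv := fun ⟨π, h⟩ => Subtype.ext (FG hd π) }
end

section
/- Let M₁ be a set of positive integers with 2M₁ ⊆ M₁ (where 2M₁ = {j : j/2 ∈ M₁}), and let M₂ = M₁ \ 2M₁. Then for every n and j ≥ 0, the number of partitions of n with exactly j distinct part sizes not in M₂ equals the number of partitions of n with exactly j distinct part sizes i such that i ∉ M₁, or i ∈ M₁ and i is repeated (multiplicity ≥ 2). -/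
open Finset

namespace AndrewsEq

/-- `tw M i` : `i` is the double of an element of `M`. -/
def tw (M : Set ℕ) (i : ℕ) : Prop := ∃ m ∈ M, 2 * m = i

/-- the `k`-th binary digit, as a natural number. -/
def bitv (x k : ℕ) : ℕ := x / 2 ^ k % 2

open Classical in
/-- transformation of count functions, `Y` side to `X` side. -/
noncomputable def phi (M : Set ℕ) (n : ℕ) (c : ℕ → ℕ) (i : ℕ) : ℕ :=
  if i ∈ M then
    (if tw M i then c (i / 2) / 2
     else ∑ k ∈ Finset.range (n + 1), (c (i * 2 ^ k) % 2) * 2 ^ k)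
  else c i

open Classical in
/-- root-exponent decomposition of an element of `M` along doubling chains. -/
noncomputable def rk (M : Set ℕ) (i : ℕ) : ℕ × ℕ :=
  if h : ∃ p : ℕ × ℕ, (p.1 ∈ M ∧ ¬ tw M p.1) ∧ i = p.1 * 2 ^ p.2 then h.choose else (0, 0)

open Classical in
/-- transformation of count functions, `X` side to `Y` side. -/
noncomputable def psi (M : Set ℕ) (g : ℕ → ℕ) (i : ℕ) : ℕ :=
  if i ∈ M then 2 * g (2 * i) + bitv (g (rk M i).1) (rk M i).2
  else g i

section M

variable {M : Set ℕ}

theorem pow_mem (hdouble : ∀ m ∈ M, 2 * m ∈ M) {r : ℕ} (hr : r ∈ M) (k : ℕ) : r * 2 ^ k ∈ M := by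
  induction k with
  | zero => simpa using hr
  | succ k ih =>
      have : r * 2 ^ (k + 1) = 2 * (r * 2 ^ k) := by ring
      rw [this]; exact hdouble _ ih

theorem tw_mem (hdouble : ∀ m ∈ M, 2 * m ∈ M) {i : ℕ} (h : tw M i) : i ∈ M := by
  obtain ⟨m, hm, rfl⟩ := h; exact hdouble _ hm

theorem exists_rk (hpos : ∀ m ∈ M, 0 < m) : ∀ i ∈ M, ∃ p : ℕ × ℕ, (p.1 ∈ M ∧ ¬ tw M p.1) ∧ i = p.1 * 2 ^ p.2 := by
  intro i
  induction i using Nat.strong_induction_on with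
  | _ i ih =>
    intro hi
    by_cases h : tw M i
    · obtain ⟨m, hm, rfl⟩ := h
      have hmlt : m < 2 * m := by have := hpos m hm; omega
      obtain ⟨⟨r, k⟩, ⟨hr1, hr2⟩, hr3⟩ := ih m hmlt hm
      exact ⟨⟨r, k + 1⟩, ⟨hr1, hr2⟩, by rw [hr3]; ring⟩
    · exact ⟨⟨i, 0⟩, ⟨hi, h⟩, by simp⟩

theorem rk_unique (hdouble : ∀ m ∈ M, 2 * m ∈ M) : ∀ k k' r r' : ℕ, r ∈ M → ¬ tw M r → r' ∈ M → ¬ tw M r' →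
    r * 2 ^ k = r' * 2 ^ k' → r = r' ∧ k = k' := by
  intro k
  induction k with
  | zero =>
      intro k' r r' hr htr hr' htr' he
      cases k' with
      | zero => simpa using he
      | succ k' =>
          exfalso; apply htr
          refine ⟨r' * 2 ^ k', pow_mem hdouble hr' k', ?_⟩
          rw [show (2:ℕ) * (r' * 2 ^ k') = r' * 2 ^ (k' + 1) by ring]
          simpa using he.symm
  | succ k ih =>
      intro k' r r' hr htr hr' htr' he
      cases k' with
      | zero =>
          exfalso; apply htr'
          refine ⟨r * 2 ^ k, pow_mem hdouble hr k, ?_⟩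
          rw [show (2:ℕ) * (r * 2 ^ k) = r * 2 ^ (k + 1) by ring]
          simpa using he
      | succ k' =>
          have h2 : r * 2 ^ k = r' * 2 ^ k' := by
            have : 2 * (r * 2 ^ k) = 2 * (r' * 2 ^ k') := by
              rw [show 2 * (r * 2 ^ k) = r * 2 ^ (k+1) by ring,
                show 2 * (r' * 2 ^ k') = r' * 2 ^ (k'+1) by ring]; exact he
            omega
          obtain ⟨h1, h2⟩ := ih k' r r' hr htr hr' htr' h2
          exact ⟨h1, by omega⟩

theorem rk_spec (hpos : ∀ m ∈ M, 0 < m) {i : ℕ} (hi : i ∈ M) :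
    ((rk M i).1 ∈ M ∧ ¬ tw M (rk M i).1) ∧ i = (rk M i).1 * 2 ^ (rk M i).2 := by
  rw [rk, dif_pos (exists_rk hpos i hi)]
  exact (exists_rk hpos i hi).choose_spec

theorem rk_eq (hpos : ∀ m ∈ M, 0 < m) (hdouble : ∀ m ∈ M, 2 * m ∈ M) {r : ℕ} (hr : r ∈ M) (htr : ¬ tw M r) (k : ℕ) : rk M (r * 2 ^ k) = (r, k) := by
  have hm : r * 2 ^ k ∈ M := pow_mem hdouble hr k
  obtain ⟨⟨h1, h2⟩, h3⟩ := rk_spec hpos hm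
  obtain ⟨e1, e2⟩ := rk_unique hdouble _ k _ r h1 h2 hr htr h3.symm
  ext <;> simp [e1, e2]

end M

/-! ### binary digit lemmas -/

theorem bitv_le_one (x k : ℕ) : bitv x k ≤ 1 := by
  have := Nat.mod_lt (x / 2 ^ k) (show 0 < 2 by norm_num)
  unfold bitv; omega

theorem bitv_eq_zero {x k : ℕ} (h : x < 2 ^ k) : bitv x k = 0 := by
  unfold bitv
  rw [Nat.div_eq_of_lt h]

theorem bitv_succ (x k : ℕ) : bitv x (k + 1) = bitv (x / 2) k := by
  unfold bitv
  rw [pow_succ, Nat.div_div_eq_div_mul, mul_comm (2 ^ k) 2, ← Nat.div_div_eq_div_mul]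

theorem sum_bitv : ∀ K x, x < 2 ^ K → ∑ k ∈ range K, bitv x k * 2 ^ k = x := by
  intro K
  induction K with
  | zero => intro x hx; interval_cases x; simp
  | succ K ih =>
      intro x hx
      rw [Finset.sum_range_succ']
      have h1 : ∀ k, bitv x (k + 1) * 2 ^ (k + 1) = (bitv (x / 2) k * 2 ^ k) * 2 := by
        intro k; rw [bitv_succ, pow_succ]; ring
      simp only [h1]
      rw [← Finset.sum_mul, ih (x / 2) (by omega)]
      have : bitv x 0 = x % 2 := by unfold bitv; simp
      omega

theorem sum_bits_lt {K : ℕ} {b : ℕ → ℕ} (hb : ∀ j, b j ≤ 1) :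
    ∑ j ∈ range K, b j * 2 ^ j < 2 ^ K := by
  induction K with
  | zero => simp
  | succ K ih =>
      rw [Finset.sum_range_succ, pow_succ]
      have := hb K
      have h2 : b K * 2 ^ K ≤ 2 ^ K := by
        calc b K * 2 ^ K ≤ 1 * 2 ^ K := Nat.mul_le_mul_right _ this
        _ = 2 ^ K := by ring
      omega

theorem bitv_sum : ∀ K (b : ℕ → ℕ), (∀ j, b j ≤ 1) → ∀ k, k < K →
    bitv (∑ j ∈ range K, b j * 2 ^ j) k = b k := by
  intro K
  induction K with
  | zero => omega
  | succ K ih =>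
      intro b hb k hk
      rw [Finset.sum_range_succ']
      have h1 : ∀ j, b (j + 1) * 2 ^ (j + 1) = (b (j + 1) * 2 ^ j) * 2 := by
        intro j; rw [pow_succ]; ring
      simp only [h1]
      rw [← Finset.sum_mul]
      set T := ∑ j ∈ range K, b (j + 1) * 2 ^ j with hT
      have hb0 : b 0 ≤ 1 := hb 0
      cases k with
      | zero =>
          show (T * 2 + b 0 * 2 ^ 0) / 2 ^ 0 % 2 = b 0
          simp
          omega
      | succ k =>
          rw [bitv_succ]
          have : (T * 2 + b 0 * 2 ^ 0) / 2 = T := by simp; omega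
          rw [this, hT]
          exact ih (fun j => b (j + 1)) (fun j => hb _) k (by omega)

/-! ### multisets from count functions -/

/-- Build a multiset on `{0, …, n}` from a count function. -/
def toM (n : ℕ) (g : ℕ → ℕ) : Multiset ℕ :=
  ∑ i ∈ Finset.range (n + 1), Multiset.replicate (g i) i

theorem count_toM (n : ℕ) (g : ℕ → ℕ) (j : ℕ) :
    (toM n g).count j = if j < n + 1 then g j else 0 := by
  rw [toM, Multiset.count_sum']
  simp only [Multiset.count_replicate]
  rw [Finset.sum_ite_eq' (Finset.range (n + 1)) j g]
  simp

theorem sum_toM (n : ℕ) (g : ℕ → ℕ) : (toM n g).sum = ∑ i ∈ Finset.range (n + 1), g i * i := by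
  rw [toM]
  induction Finset.range (n + 1) using Finset.induction with
  | empty => simp
  | insert _ _ h ih =>
      rw [Finset.sum_insert h, Finset.sum_insert h, Multiset.sum_add, ih,
        Multiset.sum_replicate]
      simp [smul_eq_mul]

theorem mem_toM {n : ℕ} {g : ℕ → ℕ} {j : ℕ} : j ∈ toM n g ↔ j < n + 1 ∧ g j ≠ 0 := by
  rw [← Multiset.count_ne_zero, count_toM]
  split <;> simp_all


/-! ### pointwise lemmas about `phi` and `psi` -/

section pointwise

variable {M : Set ℕ} {n : ℕ}

theorem phi_vanish {c : ℕ → ℕ} (h1 : ∀ j, n < j → c j = 0)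
    (h2 : ∀ i, 2 ≤ c i → 2 * i ≤ n) {j : ℕ} (hj : n < j) : phi M n c j = 0 := by
  unfold phi
  split
  · split
    · rename_i hm htw
      obtain ⟨m, hm', rfl⟩ := htw
      rw [Nat.mul_div_cancel_left m (by norm_num)]
      by_contra h
      have : 2 ≤ c m := by omega
      have := h2 m this
      omega
    · apply Finset.sum_eq_zero
      intro k _
      have hle : j ≤ j * 2 ^ k := Nat.le_mul_of_pos_right j (Nat.pow_pos (by norm_num : 0 < 2))
      rw [h1 (j * 2 ^ k) (by omega)]
      simp
  · exact h1 j hj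

theorem psi_vanish (hpos : ∀ m ∈ M, 0 < m) {g : ℕ → ℕ}
    (hg1 : ∀ j, n < j → g j = 0) (hg2 : ∀ i, i * g i ≤ n) {j : ℕ} (hj : n < j) :
    psi M g j = 0 := by
  unfold psi
  split
  · rename_i hm
    obtain ⟨⟨hr1, hr2⟩, h3⟩ := rk_spec hpos hm
    set r := (rk M j).1
    set k := (rk M j).2
    have e1 : g (2 * j) = 0 := hg1 _ (by omega)
    have hr : 0 < r := hpos r hr1
    have e2 : g r < 2 ^ k := by
      have h4 : r * g r ≤ n := hg2 r
      have : r * g r < r * 2 ^ k := by omega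
      exact lt_of_mul_lt_mul_left this (by omega)
    rw [e1, bitv_eq_zero e2]
  · exact hg1 j hj

theorem psi_phi (hpos : ∀ m ∈ M, 0 < m) (hdouble : ∀ m ∈ M, 2 * m ∈ M)
    {c : ℕ → ℕ} (h1 : ∀ j, n < j → c j = 0) (i : ℕ) :
    psi M (phi M n c) i = c i := by
  by_cases hi : i ∈ M
  · rw [psi, if_pos hi]
    obtain ⟨⟨hr1, hr2⟩, h3⟩ := rk_spec hpos hi
    set r := (rk M i).1
    set k := (rk M i).2
    have e1 : phi M n c (2 * i) = c i / 2 := by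
      rw [phi, if_pos (hdouble i hi), if_pos ⟨i, hi, rfl⟩,
        Nat.mul_div_cancel_left i (by norm_num)]
    have e2 : phi M n c r = ∑ j ∈ range (n + 1), (c (r * 2 ^ j) % 2) * 2 ^ j := by
      rw [phi, if_pos hr1, if_neg hr2]
    rw [e1, e2]
    by_cases hk : k < n + 1
    · rw [bitv_sum (n + 1) (fun j => c (r * 2 ^ j) % 2)
        (fun j => by show c (r * 2 ^ j) % 2 ≤ 1; omega) k hk]
      show 2 * (c i / 2) + c (r * 2 ^ k) % 2 = c i
      rw [← h3]
      omega
    · have hrpos : 0 < r := hpos r hr1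
      have hbig : n < i := by
        have : 2 ^ (n + 1) ≤ 2 ^ k := Nat.pow_le_pow_right (by norm_num) (by omega)
        have h5 : n < 2 ^ (n + 1) := Nat.lt_of_lt_of_le (Nat.lt_two_pow_self (n := n))
          (Nat.pow_le_pow_right (by norm_num) (by omega))
        have : 2 ^ k ≤ r * 2 ^ k := Nat.le_mul_of_pos_left _ hrpos
        omega
      have hc0 : c i = 0 := h1 i hbig
      have hb : bitv (∑ j ∈ range (n + 1), (c (r * 2 ^ j) % 2) * 2 ^ j) k = 0 := by
        apply bitv_eq_zero
        have hlt : (∑ j ∈ range (n + 1), (c (r * 2 ^ j) % 2) * 2 ^ j) < 2 ^ (n + 1) :=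
          sum_bits_lt (fun j => Nat.le_of_lt_succ (Nat.mod_lt _ (by norm_num)))
        have : 2 ^ (n + 1) ≤ 2 ^ k := Nat.pow_le_pow_right (by norm_num) (by omega)
        omega
      rw [hb, hc0]
  · rw [psi, if_neg hi, phi, if_neg hi]

theorem phi_psi (hpos : ∀ m ∈ M, 0 < m) (hdouble : ∀ m ∈ M, 2 * m ∈ M)
    {g : ℕ → ℕ} (hg2 : ∀ i, i * g i ≤ n) (hg0 : g 0 = 0) (i : ℕ) :
    phi M n (psi M g) i = g i := by
  have hglt : ∀ j, g j < 2 ^ (n + 1) := by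
    intro j
    have h5 : n < 2 ^ (n + 1) := Nat.lt_of_lt_of_le (Nat.lt_two_pow_self (n := n))
      (Nat.pow_le_pow_right (by norm_num) (by omega))
    rcases Nat.eq_zero_or_pos j with h | h
    · subst h; omega
    · have : g j ≤ j * g j := Nat.le_mul_of_pos_left _ h
      have := hg2 j
      omega
  by_cases hi : i ∈ M
  · by_cases htw : tw M i
    · rw [phi, if_pos hi, if_pos htw]
      obtain ⟨m, hm, hmi⟩ := htw
      have e0 : i / 2 = m := by omega
      rw [e0, psi, if_pos hm]
      have hb := bitv_le_one (g (rk M m).1) (rk M m).2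
      rw [show 2 * m = i from hmi]
      omega
    · rw [phi, if_pos hi, if_neg htw]
      have e1 : ∀ k, psi M g (i * 2 ^ k) % 2 = bitv (g i) k := by
        intro k
        have ha : (rk M (i * 2 ^ k)).1 = i := by rw [rk_eq hpos hdouble hi htw k]
        have hb' : (rk M (i * 2 ^ k)).2 = k := by rw [rk_eq hpos hdouble hi htw k]
        rw [psi, if_pos (pow_mem hdouble hi k), ha, hb']
        have hb := bitv_le_one (g i) k
        omega
      calc ∑ k ∈ range (n + 1), psi M g (i * 2 ^ k) % 2 * 2 ^ k
          = ∑ k ∈ range (n + 1), bitv (g i) k * 2 ^ k := by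
            exact Finset.sum_congr rfl fun k _ => by rw [e1 k]
        _ = g i := sum_bitv (n + 1) (g i) (hglt i)
  · rw [phi, if_neg hi, psi, if_neg hi]

end pointwise

/-! ### sum preservation -/

theorem sumpres {M : Set ℕ} {n : ℕ} (hpos : ∀ m ∈ M, 0 < m)
    (hdouble : ∀ m ∈ M, 2 * m ∈ M) {c : ℕ → ℕ}
    (h1 : ∀ j, n < j → c j = 0) (h2 : ∀ i, 2 ≤ c i → 2 * i ≤ n) :
    ∑ i ∈ range (n + 1), phi M n c i * i = ∑ i ∈ range (n + 1), c i * i := by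
  classical
  rw [← Finset.sum_filter_add_sum_filter_not (range (n + 1)) (· ∈ M) (fun i => phi M n c i * i),
    ← Finset.sum_filter_add_sum_filter_not (range (n + 1)) (· ∈ M) (fun i => c i * i)]
  have hnot : ∑ i ∈ (range (n + 1)).filter (fun i => ¬ i ∈ M), phi M n c i * i
      = ∑ i ∈ (range (n + 1)).filter (fun i => ¬ i ∈ M), c i * i := by
    refine Finset.sum_congr rfl fun i hi => ?_
    simp only [Finset.mem_filter] at hi
    rw [phi, if_neg hi.2]
  rw [hnot]
  congr 1
  set F := (range (n + 1)).filter (· ∈ M) with hF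
  have memF : ∀ i, i ∈ F ↔ i < n + 1 ∧ i ∈ M := by
    intro i; rw [hF]; simp [Finset.mem_filter]
  rw [← Finset.sum_filter_add_sum_filter_not F (tw M) (fun i => phi M n c i * i)]
  have eC : ∑ i ∈ F.filter (tw M), phi M n c i * i
      = ∑ m ∈ F, c m / 2 * (2 * m) := by
    rw [show ∑ i ∈ F.filter (tw M), phi M n c i * i
        = ∑ i ∈ F.filter (tw M), c (i / 2) / 2 * i from
      Finset.sum_congr rfl fun i hi => by
        simp only [Finset.mem_filter, memF] at hi
        rw [phi, if_pos hi.1.2, if_pos hi.2]]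
    rw [Finset.sum_nbij' (i := fun i => i / 2) (j := fun m => 2 * m)
      (t := F.filter (fun m => 2 * m ≤ n)) (g := fun m => c m / 2 * (2 * m))
      ?_ ?_ ?_ ?_ ?_]
    · refine Finset.sum_subset (Finset.filter_subset _ _) fun m hm hm' => ?_
      have hle : ¬ 2 * m ≤ n := by
        intro h; exact hm' (Finset.mem_filter.mpr ⟨hm, h⟩)
      have hcm : ¬ 2 ≤ c m := fun h => hle (h2 m h)
      have hc : c m / 2 = 0 := by omega
      rw [hc]; ring
    · intro a ha
      simp only [Finset.mem_filter, memF] at ha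
      obtain ⟨⟨har, ham⟩, m, hm, hm2⟩ := ha
      have hav : a / 2 = m := by omega
      simp only [Finset.mem_filter, memF, hav]
      exact ⟨⟨by omega, hm⟩, by omega⟩
    · intro m hm
      simp only [Finset.mem_filter, memF] at hm ⊢
      obtain ⟨⟨hmr, hmm⟩, hm2⟩ := hm
      exact ⟨⟨by omega, hdouble m hmm⟩, ⟨m, hmm, rfl⟩⟩
    · intro a ha
      simp only [Finset.mem_filter, memF] at ha
      obtain ⟨_, m, hm, hm2⟩ := ha
      omega
    · intro m hm; omega
    · intro a ha
      simp only [Finset.mem_filter, memF] at ha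
      obtain ⟨_, m, hm, hm2⟩ := ha
      have hav : 2 * (a / 2) = a := by omega
      rw [hav]
  have eB : ∑ i ∈ F.filter (fun i => ¬ tw M i), phi M n c i * i
      = ∑ j ∈ F, c j % 2 * j := by
    rw [show ∑ i ∈ F.filter (fun i => ¬ tw M i), phi M n c i * i
        = ∑ i ∈ F.filter (fun i => ¬ tw M i), ∑ k ∈ range (n + 1),
            c (i * 2 ^ k) % 2 * 2 ^ k * i from
      Finset.sum_congr rfl fun i hi => by
        simp only [Finset.mem_filter, memF] at hi
        rw [phi, if_pos hi.1.2, if_neg hi.2, Finset.sum_mul]]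
    set G := F.filter (fun i => ¬ tw M i) with hG
    have memG : ∀ i, i ∈ G ↔ (i < n + 1 ∧ i ∈ M) ∧ ¬ tw M i := by
      intro i; rw [hG]; simp only [Finset.mem_filter, memF]
    rw [← Finset.sum_product' (s := G) (t := range (n + 1))
      (f := fun i k => c (i * 2 ^ k) % 2 * 2 ^ k * i)]
    rw [← Finset.sum_filter_add_sum_filter_not (G ×ˢ range (n + 1))
      (fun p => p.1 * 2 ^ p.2 ≤ n)]
    have hzero : ∑ p ∈ (G ×ˢ range (n + 1)).filter (fun p => ¬ p.1 * 2 ^ p.2 ≤ n),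
        c (p.1 * 2 ^ p.2) % 2 * 2 ^ p.2 * p.1 = 0 := by
      refine Finset.sum_eq_zero fun p hp => ?_
      simp only [Finset.mem_filter] at hp
      rw [h1 _ (by omega)]
      simp
    rw [hzero, add_zero]
    refine Finset.sum_nbij' (i := fun p => p.1 * 2 ^ p.2) (j := fun j => rk M j)
      ?_ ?_ ?_ ?_ ?_
    · intro p hp
      simp only [Finset.mem_filter, Finset.mem_product, memG, Finset.mem_range] at hp
      simp only [memF]
      exact ⟨by omega, pow_mem hdouble hp.1.1.1.2 p.2⟩
    · intro j hj
      simp only [memF] at hj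
      obtain ⟨⟨hr1, hr2⟩, h3⟩ := rk_spec hpos hj.2
      set r := (rk M j).1 with hrd
      set k := (rk M j).2 with hkd
      simp only [Finset.mem_filter, Finset.mem_product, memG, Finset.mem_range, ← hrd, ← hkd]
      have hrpos : 0 < r := hpos _ hr1
      have hk1 : 2 ^ k ≤ j := by
        rw [h3]; exact Nat.le_mul_of_pos_left _ hrpos
      have hk2 : k < 2 ^ k := Nat.lt_two_pow_self
      have hr : r ≤ j := by
        rw [h3]; exact Nat.le_mul_of_pos_right _ (Nat.pow_pos (by norm_num : 0 < 2))
      refine ⟨⟨⟨⟨by omega, hr1⟩, hr2⟩, by omega⟩, by omega⟩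
    · intro p hp
      simp only [Finset.mem_filter, Finset.mem_product, memG, Finset.mem_range] at hp
      exact rk_eq hpos hdouble hp.1.1.1.2 hp.1.1.2 p.2
    · intro j hj
      simp only [memF] at hj
      exact ((rk_spec hpos hj.2).2).symm
    · intro p hp
      ring
  rw [eC, eB, ← Finset.sum_add_distrib]
  refine Finset.sum_congr rfl fun m _ => ?_
  have hmod : 2 * (c m / 2) + c m % 2 = c m := by omega
  calc c m / 2 * (2 * m) + c m % 2 * m = (2 * (c m / 2) + c m % 2) * m := by ring
    _ = c m * m := by rw [hmod]

/-! ### statistic preservation -/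

open Classical in
theorem stat {M : Set ℕ} {n : ℕ} (hdouble : ∀ m ∈ M, 2 * m ∈ M) (c : ℕ → ℕ) :
    {i : ℕ | phi M n c i ≠ 0 ∧ ¬ (i ∈ M ∧ ¬ tw M i)}.ncard
      = {i : ℕ | c i ≠ 0 ∧ (i ∉ M ∨ 2 ≤ c i)}.ncard := by
  classical
  set t : ℕ → ℕ := fun i => if i ∈ M then 2 * i else i with ht
  have himg : {i : ℕ | phi M n c i ≠ 0 ∧ ¬ (i ∈ M ∧ ¬ tw M i)}
      = t '' {i : ℕ | c i ≠ 0 ∧ (i ∉ M ∨ 2 ≤ c i)} := by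
    ext b
    simp only [Set.mem_setOf_eq, Set.mem_image]
    constructor
    · rintro ⟨hphi, hnm⟩
      by_cases hb : b ∈ M
      · have htw : tw M b := by
          by_contra h; exact hnm ⟨hb, h⟩
        obtain ⟨m, hm, hmb⟩ := htw
        have hb2 : b / 2 = m := by omega
        rw [phi, if_pos hb, if_pos ⟨m, hm, hmb⟩, hb2] at hphi
        refine ⟨m, ⟨by omega, Or.inr (by omega)⟩, ?_⟩
        rw [ht]; simp only [if_pos hm]; omega
      · rw [phi, if_neg hb] at hphi
        exact ⟨b, ⟨hphi, Or.inl hb⟩, by rw [ht]; simp only [if_neg hb]⟩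
    · rintro ⟨i, ⟨hci, hor⟩, hti⟩
      by_cases hi : i ∈ M
      · have h2c : 2 ≤ c i := by
          rcases hor with h | h
          · exact absurd hi h
          · exact h
        have hbv : b = 2 * i := by rw [ht] at hti; simp only [if_pos hi] at hti; omega
        subst hbv
        constructor
        · rw [phi, if_pos (hdouble i hi), if_pos ⟨i, hi, rfl⟩,
            Nat.mul_div_cancel_left i (by norm_num)]
          omega
        · rintro ⟨_, hntw⟩
          exact hntw ⟨i, hi, rfl⟩
      · have hbv : b = i := by rw [ht] at hti; simp only [if_neg hi] at hti; omega
        subst hbv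
        rw [phi, if_neg hi]
        exact ⟨hci, fun h => hi h.1⟩
  have hinj : Set.InjOn t {i : ℕ | c i ≠ 0 ∧ (i ∉ M ∨ 2 ≤ c i)} := by
    intro i1 _ i2 _ he
    rw [ht] at he
    simp only at he
    by_cases h1 : i1 ∈ M <;> by_cases h2 : i2 ∈ M <;>
      simp only [if_pos, if_neg, h1, h2, if_true, if_false] at he
    · omega
    · exfalso
      have : 2 * i1 ∈ M := hdouble i1 h1
      rw [he] at this
      exact h2 this
    · exfalso
      have : 2 * i2 ∈ M := hdouble i2 h2
      rw [← he] at this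
      exact h1 this
    · exact he
  rw [himg, Set.ncard_image_of_injOn hinj]

/-! ### partition-level facts -/

theorem count_le_aux {n : ℕ} (π : Nat.Partition n) (i : ℕ) :
    i * π.parts.count i ≤ n := by
  have hle : Multiset.replicate (π.parts.count i) i ≤ π.parts :=
    Multiset.le_count_iff_replicate_le.mp le_rfl
  obtain ⟨u, hu⟩ := Multiset.le_iff_exists_add.mp hle
  have hsum := π.parts_sum
  rw [hu, Multiset.sum_add, Multiset.sum_replicate, smul_eq_mul] at hsum
  rw [mul_comm]
  omega

theorem count_zero_aux {n : ℕ} (π : Nat.Partition n) : π.parts.count 0 = 0 := by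
  rw [Multiset.count_eq_zero]
  intro h
  have := π.parts_pos h
  omega

theorem count_big_aux {n : ℕ} (π : Nat.Partition n) {j : ℕ} (hj : n < j) :
    π.parts.count j = 0 := by
  by_contra h
  have h1 : j ≤ j * π.parts.count j :=
    Nat.le_mul_of_pos_right j (Nat.pos_of_ne_zero h)
  have := count_le_aux π j
  omega

theorem parts_eq_toM {n : ℕ} (π : Nat.Partition n) :
    π.parts = toM n (fun i => π.parts.count i) := by
  ext j
  rw [count_toM]
  split
  · rfl
  · exact count_big_aux (j := j) π (by omega)

theorem sum_counts {n : ℕ} (π : Nat.Partition n) :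
    ∑ i ∈ range (n + 1), π.parts.count i * i = n := by
  have := π.parts_sum
  rw [parts_eq_toM π, sum_toM] at this
  exact this

section Partitions

variable {M : Set ℕ} {n : ℕ} (hpos : ∀ m ∈ M, 0 < m) (hdouble : ∀ m ∈ M, 2 * m ∈ M)

theorem not_zero_mem (hpos : ∀ m ∈ M, 0 < m) : 0 ∉ M := fun h => by
  have := hpos 0 h; omega

/-- partition-level `Y → X` map. -/
noncomputable def PhiP (π : Nat.Partition n) : Nat.Partition n where
  parts := toM n (phi M n (fun i => π.parts.count i))
  parts_pos := by
    intro j hj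
    rw [mem_toM] at hj
    rcases Nat.eq_zero_or_pos j with h | h
    · subst h
      rw [phi, if_neg (not_zero_mem hpos), count_zero_aux] at hj
      exact absurd rfl hj.2
    · exact h
  parts_sum := by
    rw [sum_toM,
      sumpres hpos hdouble (fun j hj => count_big_aux π hj)
        (fun i hi => by have := count_le_aux π i; nlinarith),
      sum_counts]

theorem count_PhiP (π : Nat.Partition n) (j : ℕ) :
    (PhiP hpos hdouble π).parts.count j = phi M n (fun i => π.parts.count i) j := by
  rw [PhiP, count_toM]
  split
  · rfl
  · exact (phi_vanish (fun j hj => count_big_aux π hj)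
      (fun i hi => by have := count_le_aux π i; nlinarith) (by omega)).symm

theorem psi_twice_bound (π : Nat.Partition n) {i : ℕ}
    (h : 2 ≤ psi M (fun i => π.parts.count i) i) : 2 * i ≤ n := by
  rw [psi] at h
  split at h
  · have hb := bitv_le_one (π.parts.count (rk M i).1) (rk M i).2
    have hg : 1 ≤ π.parts.count (2 * i) := by omega
    have h2 := count_le_aux π (2 * i)
    nlinarith
  · have h2 := count_le_aux π i
    nlinarith

/-- partition-level `X → Y` map. -/
noncomputable def PsiP (π : Nat.Partition n) : Nat.Partition n where
  parts := toM n (psi M (fun i => π.parts.count i))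
  parts_pos := by
    intro j hj
    rw [mem_toM] at hj
    rcases Nat.eq_zero_or_pos j with h | h
    · subst h
      rw [psi, if_neg (not_zero_mem hpos), count_zero_aux] at hj
      exact absurd rfl hj.2
    · exact h
  parts_sum := by
    have h1 : ∀ j, n < j → psi M (fun i => π.parts.count i) j = 0 := fun j hj =>
      psi_vanish hpos (fun j hj => count_big_aux π hj) (count_le_aux π) hj
    have hs := sumpres (M := M) hpos hdouble h1 (fun i => psi_twice_bound π)
    rw [sum_toM, ← hs]
    have he : ∀ i, phi M n (psi M (fun i => π.parts.count i)) i = π.parts.count i :=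
      phi_psi hpos hdouble (count_le_aux π) (count_zero_aux π)
    rw [Finset.sum_congr rfl fun i _ => by rw [he i]]
    exact sum_counts π

theorem count_PsiP (π : Nat.Partition n) (j : ℕ) :
    (PsiP hpos hdouble π).parts.count j = psi M (fun i => π.parts.count i) j := by
  rw [PsiP, count_toM]
  split
  · rfl
  · exact (psi_vanish hpos (fun j hj => count_big_aux π hj) (count_le_aux π) (by omega)).symm

end Partitions

end AndrewsEq

open AndrewsEq

theorem andrews_equidistribution (M₁ : Set ℕ)
    (hpos : ∀ m ∈ M₁, 0 < m)
    (hdouble : ∀ m ∈ M₁, 2 * m ∈ M₁)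
    (M₂ : Set ℕ) (hM₂ : M₂ = M₁ \ ((fun m => 2 * m) '' M₁)) :
    ∀ n j : ℕ,
      Nat.card {π : Nat.Partition n //
          {i : ℕ | i ∈ π.parts ∧ i ∉ M₂}.ncard = j} =
      Nat.card {π : Nat.Partition n //
          {i : ℕ | i ∈ π.parts ∧
            (i ∉ M₁ ∨ (i ∈ M₁ ∧ 2 ≤ π.parts.count i))}.ncard = j} := by
  subst hM₂
  intro n j
  classical
  have himem : ∀ i : ℕ, i ∉ M₁ \ ((fun m => 2 * m) '' M₁) ↔ ¬ (i ∈ M₁ ∧ ¬ tw M₁ i) := by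
    intro i
    simp only [Set.mem_diff, Set.mem_image, tw]
  have hYX : ∀ π : Nat.Partition n,
      {i : ℕ | i ∈ (PhiP hpos hdouble π).parts ∧
        i ∉ M₁ \ ((fun m => 2 * m) '' M₁)}.ncard
      = {i : ℕ | i ∈ π.parts ∧
          (i ∉ M₁ ∨ (i ∈ M₁ ∧ 2 ≤ π.parts.count i))}.ncard := by
    intro π
    have h1 : {i : ℕ | i ∈ (PhiP hpos hdouble π).parts ∧
        i ∉ M₁ \ ((fun m => 2 * m) '' M₁)}
        = {i : ℕ | phi M₁ n (fun i' => π.parts.count i') i ≠ 0 ∧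
            ¬ (i ∈ M₁ ∧ ¬ tw M₁ i)} := by
      ext i
      simp only [Set.mem_setOf_eq, ← Multiset.count_ne_zero,
        count_PhiP hpos hdouble π i, himem i]
    have h2 : {i : ℕ | i ∈ π.parts ∧ (i ∉ M₁ ∨ (i ∈ M₁ ∧ 2 ≤ π.parts.count i))}
        = {i : ℕ | (fun i' => π.parts.count i') i ≠ 0 ∧
            (i ∉ M₁ ∨ 2 ≤ (fun i' => π.parts.count i') i)} := by
      ext i
      simp only [Set.mem_setOf_eq, ← Multiset.count_ne_zero]
      tauto
    rw [h1, h2, stat hdouble (fun i' => π.parts.count i')]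
  have hXY : ∀ π : Nat.Partition n,
      {i : ℕ | i ∈ (PsiP hpos hdouble π).parts ∧
        (i ∉ M₁ ∨ (i ∈ M₁ ∧ 2 ≤ (PsiP hpos hdouble π).parts.count i))}.ncard
      = {i : ℕ | i ∈ π.parts ∧ i ∉ M₁ \ ((fun m => 2 * m) '' M₁)}.ncard := by
    intro π
    have h1 : {i : ℕ | i ∈ (PsiP hpos hdouble π).parts ∧
        (i ∉ M₁ ∨ (i ∈ M₁ ∧ 2 ≤ (PsiP hpos hdouble π).parts.count i))}
        = {i : ℕ | psi M₁ (fun i' => π.parts.count i') i ≠ 0 ∧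
            (i ∉ M₁ ∨ 2 ≤ psi M₁ (fun i' => π.parts.count i') i)} := by
      ext i
      simp only [Set.mem_setOf_eq, ← Multiset.count_ne_zero,
        count_PsiP hpos hdouble π i]
      tauto
    have h2 : {i : ℕ | i ∈ π.parts ∧ i ∉ M₁ \ ((fun m => 2 * m) '' M₁)}
        = {i : ℕ | phi M₁ n (psi M₁ (fun i' => π.parts.count i')) i ≠ 0 ∧
            ¬ (i ∈ M₁ ∧ ¬ tw M₁ i)} := by
      ext i
      simp only [Set.mem_setOf_eq, ← Multiset.count_ne_zero, himem i]
      rw [phi_psi hpos hdouble (count_le_aux π) (count_zero_aux π) i]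
    rw [h1, h2, stat hdouble (psi M₁ (fun i' => π.parts.count i'))]
  refine (Nat.card_congr (Equiv.mk
    (fun p => ⟨PhiP hpos hdouble p.1, (hYX p.1).trans p.2⟩)
    (fun p => ⟨PsiP hpos hdouble p.1, (hXY p.1).trans p.2⟩)
    ?_ ?_)).symm
  · rintro ⟨π, hπ⟩
    refine Subtype.ext (Nat.Partition.ext ?_)
    refine Multiset.ext.mpr fun i => ?_
    rw [count_PsiP hpos hdouble _ i]
    have hfe : (fun i' => (PhiP hpos hdouble π).parts.count i')
        = phi M₁ n (fun i' => π.parts.count i') :=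
      funext (count_PhiP hpos hdouble π)
    rw [hfe, psi_phi hpos hdouble (fun j' hj' => count_big_aux π hj') i]
  · rintro ⟨π, hπ⟩
    refine Subtype.ext (Nat.Partition.ext ?_)
    refine Multiset.ext.mpr fun i => ?_
    rw [count_PhiP hpos hdouble _ i]
    have hfe : (fun i' => (PsiP hpos hdouble π).parts.count i')
        = psi M₁ (fun i' => π.parts.count i') :=
      funext (count_PsiP hpos hdouble π)
    rw [hfe, phi_psi hpos hdouble (count_le_aux π) (count_zero_aux π) i]
end

section
/- For every n and j ≥ 0, the number of partitions of n containing exactly j indices r ≥ 1 such that both 2r and 2r+2 occur as parts equals the number of partitions of n containing exactly j indices r ≥ 1 such that both r and r+1 occur with multiplicity ≥ 2. -/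
open Finset

namespace CECR



/-- Build a multiset from a count function, supported on `[0, N)`. -/
def mk (d : ℕ → ℕ) (N : ℕ) : Multiset ℕ :=
  (Finset.range N).val.bind fun k => Multiset.replicate (d k) k

lemma count_mk (d : ℕ → ℕ) (N j : ℕ) :
    (mk d N).count j = if j < N then d j else 0 := by
  rw [mk, Multiset.count_bind]
  rw [show ((Finset.range N).val.map fun b => (Multiset.replicate (d b) b).count j).sum
      = ∑ b ∈ Finset.range N, if b = j then d b else 0 by
    refine Finset.sum_congr rfl fun b _ => ?_; rw [Multiset.count_replicate]]
  simp [Finset.sum_ite_eq, eq_comm]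

lemma sum_mk (d : ℕ → ℕ) (N : ℕ) :
    (mk d N).sum = ∑ k ∈ Finset.range N, k * d k := by
  rw [mk, Multiset.sum_bind]
  rw [show ((Finset.range N).val.map fun a => (Multiset.replicate (d a) a).sum).sum
      = ∑ k ∈ Finset.range N, (Multiset.replicate (d k) k).sum from rfl]
  congr 1; funext k
  simp [Multiset.sum_replicate, mul_comm]

lemma mem_mk {d : ℕ → ℕ} {N j : ℕ} : j ∈ mk d N ↔ j < N ∧ d j ≠ 0 := by
  rw [← Multiset.count_pos, count_mk]
  split <;> omega


lemma sum_digits_lt (b : ℕ → ℕ) (hb : ∀ a, b a ≤ 1) (N : ℕ) :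
    ∑ a ∈ Finset.range N, 2 ^ a * b a < 2 ^ N := by
  induction N with
  | zero => simp
  | succ N ih =>
    rw [Finset.sum_range_succ, pow_succ]
    have h1 : 2 ^ N * b N ≤ 2 ^ N * 1 := Nat.mul_le_mul_left _ (hb N)
    omega

lemma digit (b : ℕ → ℕ) (hb : ∀ a, b a ≤ 1) :
    ∀ N v, v < N → (∑ a ∈ Finset.range N, 2 ^ a * b a) / 2 ^ v % 2 = b v := by
  intro N
  induction N with
  | zero => omega
  | succ N ih =>
    intro v hv
    rw [Finset.sum_range_succ]
    rcases lt_or_eq_of_le (Nat.lt_succ_iff.mp hv) with h | h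
    · have hsplit : 2 ^ N * b N = 2 ^ v * (2 ^ (N - v) * b N) := by
        rw [← mul_assoc, ← pow_add]
        congr 2
        omega
      rw [hsplit, Nat.add_mul_div_left _ _ (by positivity : 0 < 2 ^ v)]
      have heven : 2 ^ (N - v) * b N = 2 * (2 ^ (N - v - 1) * b N) := by
        rw [← mul_assoc]
        congr 1
        rw [← pow_succ']
        congr 1
        omega
      rw [heven, Nat.add_mul_mod_self_left]
      exact ih v h
    · subst h
      rw [Nat.add_mul_div_left _ _ (by positivity : 0 < 2 ^ v),
        Nat.div_eq_of_lt (sum_digits_lt b hb v), zero_add]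
      have := hb v
      omega

lemma recon (N : ℕ) : ∀ x, x < 2 ^ N → ∑ a ∈ Finset.range N, 2 ^ a * (x / 2 ^ a % 2) = x := by
  induction N with
  | zero => intro x h; simp at h ⊢; omega
  | succ N ih =>
    intro x h
    rw [Finset.sum_range_succ']
    have step : ∀ i, 2 ^ (i + 1) * (x / 2 ^ (i + 1) % 2) = 2 * (2 ^ i * ((x / 2) / 2 ^ i % 2)) := by
      intro i
      rw [pow_succ']
      rw [show x / (2 * 2 ^ i) = x / 2 / 2 ^ i by rw [Nat.div_div_eq_div_mul]]
      ring
    rw [Finset.sum_congr rfl fun i _ => step i, ← Finset.mul_sum,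
      ih (x / 2) (by rw [pow_succ] at h; omega)]
    simp
    omega


def D (c : ℕ → ℕ) (n k : ℕ) : ℕ :=
  if k % 2 = 0 then c (k / 2) / 2
  else ∑ a ∈ Finset.range (n + 1), 2 ^ a * (c (2 ^ a * k) % 2)

lemma D_even (c : ℕ → ℕ) (n m : ℕ) : D c n (2 * m) = c m / 2 := by
  simp [D, Nat.mul_div_cancel_left _ (by norm_num : (0:ℕ) < 2), Nat.mul_mod_right]

lemma D_odd (c : ℕ → ℕ) (n k : ℕ) (hk : k % 2 = 1) :
    D c n k = ∑ a ∈ Finset.range (n + 1), 2 ^ a * (c (2 ^ a * k) % 2) := by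
  simp [D, hk]

variable {c : ℕ → ℕ} {n : ℕ}

lemma D_zero (hc0 : c 0 = 0) : D c n 0 = 0 := by simp [D, hc0]

lemma D_bound (hcb : ∀ m, n < m → c m = 0) (hcw : ∀ m, m * c m ≤ n) :
    ∀ k, n < k → D c n k = 0 := by
  intro k hk
  rcases Nat.even_or_odd k with ⟨m, hm⟩ | ⟨m, hm⟩
  · subst hm
    rw [show m + m = 2 * m by ring, D_even]
    have := hcw m
    have : c m ≤ 1 := by nlinarith
    omega
  · subst hm
    rw [D_odd c n _ (by omega)]
    refine Finset.sum_eq_zero fun a _ => ?_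
    have h1 : 1 ≤ 2 ^ a := Nat.one_le_two_pow
    rw [hcb (2 ^ a * (2 * m + 1)) (by nlinarith)]
    simp

lemma sum_D (hc0 : c 0 = 0) (hcb : ∀ m, n < m → c m = 0) (hcw : ∀ m, m * c m ≤ n) :
    ∑ k ∈ Finset.range (n + 1), k * D c n k = ∑ m ∈ Finset.range (n + 1), m * c m := by
  rw [← Finset.sum_filter_add_sum_filter_not (Finset.range (n + 1)) (fun k => k % 2 = 0)]
  have heven : ∑ k ∈ (Finset.range (n + 1)).filter (fun k => k % 2 = 0), k * D c n k
      = ∑ m ∈ Finset.range (n + 1), 2 * m * (c m / 2) := by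
    rw [show ∑ m ∈ Finset.range (n + 1), 2 * m * (c m / 2)
        = ∑ m ∈ (Finset.range (n + 1)).filter (fun m => 2 * m ≤ n), 2 * m * (c m / 2) by
      refine (Finset.sum_filter_of_ne ?_).symm
      intro m _ hne
      have := hcw m
      have hc2 : 2 ≤ c m := by
        by_contra h
        have : c m / 2 = 0 := by omega
        simp [this] at hne
      nlinarith]
    refine Finset.sum_nbij' (fun k => k / 2) (fun m => 2 * m) ?_ ?_ ?_ ?_ ?_
    · intro k hk
      simp only [Finset.mem_filter, Finset.mem_range] at hk ⊢
      omega
    · intro m hm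
      simp only [Finset.mem_filter, Finset.mem_range] at hm ⊢
      omega
    · intro k hk
      simp only [Finset.mem_filter, Finset.mem_range] at hk
      show 2 * (k / 2) = k
      omega
    · intro m hm
      show 2 * m / 2 = m
      omega
    · intro k hk
      simp only [Finset.mem_filter, Finset.mem_range] at hk
      obtain ⟨m, rfl⟩ : ∃ m, k = 2 * m := ⟨k / 2, by omega⟩
      rw [D_even]
      show 2 * m * (c m / 2) = 2 * (2 * m / 2) * (c (2 * m / 2) / 2)
      rw [show 2 * m / 2 = m by omega]
  have hodd : ∑ k ∈ (Finset.range (n + 1)).filter (fun k => ¬k % 2 = 0), k * D c n k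
      = ∑ m ∈ Finset.range (n + 1), m * (c m % 2) := by
    have step1 : ∑ k ∈ (Finset.range (n + 1)).filter (fun k => ¬k % 2 = 0), k * D c n k
        = ∑ p ∈ ((Finset.range (n + 1)).filter (fun k => ¬k % 2 = 0)) ×ˢ Finset.range (n + 1),
            (2 ^ p.2 * p.1) * (c (2 ^ p.2 * p.1) % 2) := by
      rw [Finset.sum_product]
      refine Finset.sum_congr rfl fun k hk => ?_
      simp only [Finset.mem_filter, Finset.mem_range] at hk
      rw [D_odd c n k (by omega), Finset.mul_sum]
      refine Finset.sum_congr rfl fun a _ => ?_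
      ring
    rw [step1]
    rw [show (∑ p ∈ ((Finset.range (n + 1)).filter (fun k => ¬k % 2 = 0)) ×ˢ Finset.range (n + 1),
            (2 ^ p.2 * p.1) * (c (2 ^ p.2 * p.1) % 2))
        = ∑ p ∈ (((Finset.range (n + 1)).filter (fun k => ¬k % 2 = 0)) ×ˢ
            Finset.range (n + 1)).filter (fun p => 2 ^ p.2 * p.1 ≤ n),
            (2 ^ p.2 * p.1) * (c (2 ^ p.2 * p.1) % 2) by
      refine (Finset.sum_filter_of_ne ?_).symm
      intro p _ hne
      by_contra hgt
      push_neg at hgt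
      rw [hcb _ hgt] at hne
      simp at hne]
    rw [show (∑ m ∈ Finset.range (n + 1), m * (c m % 2))
        = ∑ m ∈ (Finset.range (n + 1)).filter (fun m => m ≠ 0), m * (c m % 2) by
      refine (Finset.sum_filter_of_ne ?_).symm
      intro m _ hne
      rintro rfl
      simp at hne]
    refine Finset.sum_nbij' (fun p => 2 ^ p.2 * p.1)
      (fun m => (m / 2 ^ (m.factorization 2), m.factorization 2)) ?_ ?_ ?_ ?_ ?_
    · intro p hp
      simp only [Finset.mem_filter, Finset.mem_product, Finset.mem_range] at hp ⊢
      have h1 : 1 ≤ 2 ^ p.2 := Nat.one_le_two_pow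
      constructor
      · omega
      · have : 1 ≤ p.1 := by omega
        positivity
    · intro m hm
      simp only [Finset.mem_filter, Finset.mem_product, Finset.mem_range, ne_eq] at hm ⊢
      obtain ⟨hmn, hm0⟩ := hm
      have hdvd : 2 ^ (m.factorization 2) ∣ m := Nat.ordProj_dvd m 2
      have hle : 2 ^ (m.factorization 2) ≤ m := Nat.le_of_dvd (by omega) hdvd
      have hvlt : m.factorization 2 < 2 ^ (m.factorization 2) := Nat.lt_two_pow_self
      have hcompl : ¬ 2 ∣ m / 2 ^ (m.factorization 2) :=
        Nat.not_dvd_ordCompl Nat.prime_two hm0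
      have hcle : m / 2 ^ (m.factorization 2) ≤ m :=
        Nat.div_le_self m _
      refine ⟨⟨⟨by omega, by omega⟩, by omega⟩, ?_⟩
      rw [Nat.ordProj_mul_ordCompl_eq_self m 2]
      omega
    · intro p hp
      simp only [Finset.mem_filter, Finset.mem_product, Finset.mem_range] at hp
      obtain ⟨⟨⟨hk, hodd⟩, ha⟩, hle⟩ := hp
      have hk0 : p.1 ≠ 0 := by omega
      have h2a : (2:ℕ) ^ p.2 ≠ 0 := by positivity
      have hfact : (2 ^ p.2 * p.1).factorization 2 = p.2 := by
        rw [Nat.factorization_mul h2a hk0]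
        simp only [Finsupp.coe_add, Pi.add_apply]
        rw [Nat.Prime.factorization_pow Nat.prime_two,
          Nat.factorization_eq_zero_of_not_dvd (by omega)]
        simp
      ext
      · simp only [hfact]
        rw [Nat.mul_div_cancel_left _ (by positivity : 0 < 2 ^ p.2)]
      · simp [hfact]
    · intro m hm
      simp only [Finset.mem_filter, Finset.mem_range, ne_eq] at hm
      exact Nat.ordProj_mul_ordCompl_eq_self m 2
    · intro p _
      rfl
  rw [heven, hodd, ← Finset.sum_add_distrib]
  refine Finset.sum_congr rfl fun m _ => ?_
  have := Nat.div_add_mod (c m) 2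
  nlinarith [Nat.div_add_mod (c m) 2]




variable {c : ℕ → ℕ} {n : ℕ}


/-- Parity of `c m` is recoverable from `D c n`. -/
lemma parity_from_D (hcb : ∀ m, n < m → c m = 0) {m : ℕ} (hm1 : 1 ≤ m) (hmn : m ≤ n) :
    D c n (m / 2 ^ (m.factorization 2)) / 2 ^ (m.factorization 2) % 2 = c m % 2 := by
  set v := m.factorization 2 with hv
  set u := m / 2 ^ v with hu
  have hm0 : m ≠ 0 := by omega
  have hmu : 2 ^ v * u = m := Nat.ordProj_mul_ordCompl_eq_self m 2
  have hodd : ¬ 2 ∣ u := Nat.not_dvd_ordCompl Nat.prime_two hm0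
  have hdvd : 2 ^ v ∣ m := Nat.ordProj_dvd m 2
  have hple : 2 ^ v ≤ m := Nat.le_of_dvd (by omega) hdvd
  have hvlt : v < 2 ^ v := Nat.lt_two_pow_self
  rw [D_odd c n u (by omega)]
  have hdig := digit (fun a => c (2 ^ a * u) % 2)
    (fun a => by show c (2 ^ a * u) % 2 ≤ 1; omega) (n + 1) v (by omega)
  rw [hdig]
  show c (2 ^ v * u) % 2 = c m % 2
  rw [hmu]

lemma D_injective (hc0 : c 0 = 0) (hcb : ∀ m, n < m → c m = 0) (hcw : ∀ m, m * c m ≤ n)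
    {c' : ℕ → ℕ} (hc0' : c' 0 = 0) (hcb' : ∀ m, n < m → c' m = 0) (hcw' : ∀ m, m * c' m ≤ n)
    (h : ∀ k, D c n k = D c' n k) : ∀ m, c m = c' m := by
  intro m
  rcases Nat.eq_zero_or_pos m with rfl | hm1
  · rw [hc0, hc0']
  rcases Nat.lt_or_ge n m with hgt | hle
  · rw [hcb m hgt, hcb' m hgt]
  have hhalf : c m / 2 = c' m / 2 := by
    have := h (2 * m)
    rwa [D_even, D_even] at this
  have hpar : c m % 2 = c' m % 2 := by
    rw [← parity_from_D hcb hm1 hle, ← parity_from_D hcb' hm1 hle, h]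
  omega

lemma sum_eq_sum_count (s : Multiset ℕ) (N : ℕ) (h : ∀ a ∈ s, a < N) :
    ∑ m ∈ Finset.range N, m * s.count m = s.sum := by
  induction s using Multiset.induction with
  | empty => simp
  | cons a t ih =>
    simp only [Multiset.count_cons, Multiset.sum_cons]
    rw [Finset.sum_congr rfl (fun m _ => by rw [Nat.mul_add]), Finset.sum_add_distrib,
      ih (fun b hb => h b (Multiset.mem_cons_of_mem hb))]
    have ha : a < N := h a (Multiset.mem_cons_self a t)
    have hterm : ∀ m ∈ Finset.range N, m * (if m = a then 1 else 0) = if m = a then a else 0 := by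
      intro m _
      split <;> simp_all
    rw [Finset.sum_congr rfl hterm, Finset.sum_ite_eq' (Finset.range N) a (fun _ => a)]
    simp [Finset.mem_range.mpr ha]
    omega


variable {n : ℕ}

def cnt (π : Nat.Partition n) : ℕ → ℕ := fun m => π.parts.count m

lemma cnt_zero (π : Nat.Partition n) : cnt π 0 = 0 :=
  Multiset.count_eq_zero.mpr fun h => absurd (π.parts_pos h) (lt_irrefl 0)

lemma cnt_bound (π : Nat.Partition n) : ∀ m, n < m → cnt π m = 0 := by
  intro m hm
  refine Multiset.count_eq_zero.mpr fun h => ?_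
  have := Multiset.le_sum_of_mem h
  rw [π.parts_sum] at this
  omega

lemma cnt_weight (π : Nat.Partition n) : ∀ m, m * cnt π m ≤ n := by
  intro m
  have hle : Multiset.replicate (π.parts.count m) m ≤ π.parts :=
    Multiset.le_count_iff_replicate_le.mp le_rfl
  obtain ⟨u, hu⟩ := Multiset.le_iff_exists_add.mp hle
  have := π.parts_sum
  rw [hu, Multiset.sum_add, Multiset.sum_replicate, smul_eq_mul] at this
  rw [cnt, mul_comm]
  omega

lemma parts_lt (π : Nat.Partition n) : ∀ a ∈ π.parts, a < n + 1 := by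
  intro a ha
  have := Multiset.le_sum_of_mem ha
  rw [π.parts_sum] at this
  omega

def Phi (π : Nat.Partition n) : Nat.Partition n where
  parts := mk (D (cnt π) n) (n + 1)
  parts_pos := by
    intro i hi
    rw [mem_mk] at hi
    rcases Nat.eq_zero_or_pos i with rfl | h
    · exact absurd (D_zero (cnt_zero π)) hi.2
    · exact h
  parts_sum := by
    rw [sum_mk, sum_D (cnt_zero π) (cnt_bound π) (cnt_weight π)]
    simp only [cnt]
    rw [sum_eq_sum_count _ _ (parts_lt π), π.parts_sum]

lemma count_Phi (π : Nat.Partition n) (k : ℕ) :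
    (Phi π).parts.count k = if k < n + 1 then D (cnt π) n k else 0 :=
  count_mk _ _ _

lemma Phi_inj : Function.Injective (Phi (n := n)) := by
  intro π₁ π₂ h
  have hD : ∀ k, D (cnt π₁) n k = D (cnt π₂) n k := by
    intro k
    rcases Nat.lt_or_ge k (n + 1) with hk | hk
    · have h2 := congrArg (fun p : Nat.Partition n => p.parts.count k) h
      simpa [count_Phi, hk] using h2
    · rw [D_bound (cnt_bound π₁) (cnt_weight π₁) k (by omega),
        D_bound (cnt_bound π₂) (cnt_weight π₂) k (by omega)]
  have hc := D_injective (cnt_zero π₁) (cnt_bound π₁) (cnt_weight π₁)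
    (cnt_zero π₂) (cnt_bound π₂) (cnt_weight π₂) hD
  apply Nat.Partition.ext
  exact Multiset.ext.mpr fun m => hc m

lemma Phi_bij : Function.Bijective (Phi (n := n)) :=
  Finite.injective_iff_bijective.mp Phi_inj

lemma mem_Phi (π : Nat.Partition n) {r : ℕ} (hr : 1 ≤ r) :
    2 * r ∈ (Phi π).parts ↔ 2 ≤ π.parts.count r := by
  rw [show (Phi π).parts = mk (D (cnt π) n) (n + 1) from rfl, mem_mk, D_even]
  have hw := cnt_weight π r
  simp only [cnt] at hw ⊢
  constructor
  · rintro ⟨_, h2⟩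
    omega
  · intro h2
    refine ⟨by nlinarith, by omega⟩

lemma stat (π : Nat.Partition n) :
    {r : ℕ | 1 ≤ r ∧ 2 * r ∈ (Phi π).parts ∧ 2 * r + 2 ∈ (Phi π).parts} =
    {r : ℕ | 1 ≤ r ∧ 2 ≤ π.parts.count r ∧ 2 ≤ π.parts.count (r + 1)} := by
  ext r
  simp only [Set.mem_setOf_eq]
  refine and_congr_right fun hr => ?_
  rw [mem_Phi π hr, show 2 * r + 2 = 2 * (r + 1) by ring, mem_Phi π (by omega)]

end CECR

theorem consecutive_even_vs_consecutive_repeated (n j : ℕ) :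
    Nat.card {π : Nat.Partition n //
        {r : ℕ | 1 ≤ r ∧ 2 * r ∈ π.parts ∧ 2 * r + 2 ∈ π.parts}.ncard = j} =
    Nat.card {π : Nat.Partition n //
        {r : ℕ | 1 ≤ r ∧ 2 ≤ π.parts.count r ∧
          2 ≤ π.parts.count (r + 1)}.ncard = j} := by
  refine (Nat.card_congr (Equiv.subtypeEquiv (Equiv.ofBijective _ CECR.Phi_bij)
    fun π => ?_)).symm
  show _ ↔ {r : ℕ | 1 ≤ r ∧ 2 * r ∈ (CECR.Phi π).parts ∧
      2 * r + 2 ∈ (CECR.Phi π).parts}.ncard = j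
  rw [CECR.stat π]
end

section
/- The number of partitions of n with no pair of consecutive even parts (no r with both 2r and 2r+2 appearing) equals the number of partitions of n with no pair of consecutive repeated part sizes (no r with both r and r+1 having multiplicity ≥ 2). -/
open PowerSeries

namespace Theorems100

noncomputable section

variable {α : Type*}

open Finset

open scoped Classical

/-- The partial product for the generating function for odd partitions.
TODO: As `m` tends to infinity, this converges (in the `X`-adic topology).

If `m` is sufficiently large, the `i`th coefficient gives the number of odd partitions of the
natural number `i`: proved in `oddGF_prop`.
It is stated for an arbitrary field `α`, though it usually suffices to use `ℚ` or `ℝ`.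
-/
def partialOddGF (m : ℕ) [Field α] :=
  ∏ i ∈ range m, (1 - (X : PowerSeries α) ^ (2 * i + 1))⁻¹

/-- The partial product for the generating function for distinct partitions.
TODO: As `m` tends to infinity, this converges (in the `X`-adic topology).

If `m` is sufficiently large, the `i`th coefficient gives the number of distinct partitions of the
natural number `i`: proved in `distinctGF_prop`.
It is stated for an arbitrary commutative semiring `α`, though it usually suffices to use `ℕ`, `ℚ`
or `ℝ`.
-/
def partialDistinctGF (m : ℕ) [CommSemiring α] :=
  ∏ i ∈ range m, (1 + (X : PowerSeries α) ^ (i + 1))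

open Finset.HasAntidiagonal

universe u
variable {ι : Type u}

/-- A convenience constructor for the power series whose coefficients indicate a subset. -/
def indicatorSeries (α : Type*) [Semiring α] (s : Set ℕ) : PowerSeries α :=
  PowerSeries.mk fun n => if n ∈ s then 1 else 0

theorem coeff_indicator (s : Set ℕ) [Semiring α] (n : ℕ) :
    coeff n (indicatorSeries α s) = if n ∈ s then 1 else 0 :=
  coeff_mk _ _

theorem coeff_indicator_pos (s : Set ℕ) [Semiring α] (n : ℕ) (h : n ∈ s) :
    coeff n (indicatorSeries α s) = 1 := by rw [coeff_indicator, if_pos h]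

theorem coeff_indicator_neg (s : Set ℕ) [Semiring α] (n : ℕ) (h : n ∉ s) :
    coeff n (indicatorSeries α s) = 0 := by rw [coeff_indicator, if_neg h]

theorem constantCoeff_indicator (s : Set ℕ) [Semiring α] :
    constantCoeff (indicatorSeries α s) = if 0 ∈ s then 1 else 0 :=
  rfl

theorem two_series (i : ℕ) [Semiring α] :
    1 + (X : PowerSeries α) ^ i.succ = indicatorSeries α {0, i.succ} := by
  ext n
  simp only [coeff_indicator, coeff_one, coeff_X_pow, Set.mem_insert_iff, Set.mem_singleton_iff,
    map_add]
  cases' n with d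
  · simp [(Nat.succ_ne_zero i).symm]
  · simp [Nat.succ_ne_zero d]

theorem num_series' [Field α] (i : ℕ) :
    (1 - (X : PowerSeries α) ^ (i + 1))⁻¹ = indicatorSeries α {k | i + 1 ∣ k} := by
  rw [PowerSeries.inv_eq_iff_mul_eq_one]
  · ext n
    cases n with
    | zero => simp [mul_sub, zero_pow, constantCoeff_indicator]
    | succ n =>
      simp only [coeff_one, if_false, mul_sub, mul_one, coeff_indicator,
        LinearMap.map_sub, reduceCtorEq]
      simp_rw [coeff_mul, coeff_X_pow, coeff_indicator, @boole_mul _ _ _ _]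
      simp only [Set.mem_setOf_eq]
      erw [sum_ite, sum_ite]
      simp_rw [@filter_filter _ _ _ _ _, sum_const_zero, add_zero, sum_const, nsmul_eq_mul, mul_one,
        sub_eq_iff_eq_add, zero_add]
      symm
      split_ifs with h
      · suffices #{a ∈ antidiagonal (n + 1) | i + 1 ∣ a.fst ∧ a.snd = i + 1} = 1 by
          convert congr_arg ((↑) : ℕ → α) this; norm_cast
        rw [card_eq_one]
        cases' h with p hp
        refine ⟨((i + 1) * (p - 1), i + 1), ?_⟩
        ext ⟨a₁, a₂⟩
        simp only [mem_filter, Prod.mk.injEq, Finset.HasAntidiagonal.mem_antidiagonal, mem_singleton]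
        constructor
        · rintro ⟨a_left, ⟨a, rfl⟩, rfl⟩
          refine ⟨?_, rfl⟩
          rw [Nat.mul_sub_left_distrib, ← hp, ← a_left, mul_one, Nat.add_sub_cancel]
        · rintro ⟨rfl, rfl⟩
          match p with
          | 0 => rw [mul_zero] at hp; cases hp
          | p + 1 => rw [hp]; simp [mul_add]
      · suffices #{a ∈ antidiagonal (n + 1) | i + 1 ∣ a.fst ∧ a.snd = i + 1} = 0 by
          convert congr_arg ((↑) : ℕ → α) this; norm_cast
        rw [card_eq_zero]
        apply eq_empty_of_forall_notMem
        simp only [Prod.forall, mem_filter, not_and, Finset.HasAntidiagonal.mem_antidiagonal]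
        rintro _ h₁ h₂ ⟨a, rfl⟩ rfl
        apply h
        simp [← h₂]
  · simp [zero_pow]

def mkOdd : ℕ ↪ ℕ :=
  ⟨fun i => 2 * i + 1, fun x y h => by linarith⟩

-- The main workhorse of the partition theorem proof.
theorem partialGF_prop (α : Type*) [CommSemiring α] (n : ℕ) (s : Finset ℕ) (hs : ∀ i ∈ s, 0 < i)
    (c : ℕ → Set ℕ) (hc : ∀ i, i ∉ s → 0 ∈ c i) :
    #{p : n.Partition | (∀ j, p.parts.count j ∈ c j) ∧ ∀ j ∈ p.parts, j ∈ s} =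
      coeff n (∏ i ∈ s, indicatorSeries α ((· * i) '' c i)) := by
  simp_rw [coeff_prod, coeff_indicator, prod_boole, sum_boole]
  apply congr_arg
  simp only [mem_univ, forall_true_left, not_and, not_forall, exists_prop,
    Set.mem_image, not_exists]
  set φ : (a : Nat.Partition n) →
    a ∈ filter (fun p ↦ (∀ (j : ℕ), Multiset.count j p.parts ∈ c j) ∧ ∀ j ∈ p.parts, j ∈ s) univ →
    ℕ →₀ ℕ := fun p _ => {
      toFun := fun i => Multiset.count i p.parts • i
      support := Finset.filter (fun i => i ≠ 0) p.parts.toFinset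
      mem_support_toFun := fun a => by
        simp only [smul_eq_mul, ne_eq, mul_eq_zero, Multiset.count_eq_zero]
        rw [not_or, not_not]
        simp only [Multiset.mem_toFinset, not_not, mem_filter] }
  refine Finset.card_bij φ ?_ ?_ ?_
  · intro a ha
    simp only [φ, not_forall, not_exists, not_and, exists_prop, mem_filter]
    rw [mem_finsuppAntidiag]
    dsimp only [ne_eq, smul_eq_mul, id_eq, eq_mpr_eq_cast, le_eq_subset, Finsupp.coe_mk]
    simp only [mem_univ, forall_true_left, not_and, not_forall, exists_prop,
      mem_filter, true_and] at ha
    refine ⟨⟨?_, fun i ↦ ?_⟩, fun i _ ↦ ⟨a.parts.count i, ha.1 i, rfl⟩⟩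
    · conv_rhs => simp [← a.parts_sum]
      rw [sum_multiset_count_of_subset _ s]
      · simp only [smul_eq_mul]
      · intro i
        simp only [Multiset.mem_toFinset, not_not, mem_filter]
        apply ha.2
    · simp only [ne_eq, Multiset.mem_toFinset, not_not, mem_filter, and_imp]
      exact fun hi _ ↦ ha.2 i hi
  · intro p₁ hp₁ p₂ hp₂ h
    apply Nat.Partition.ext
    simp only [true_and, mem_univ, mem_filter] at hp₁ hp₂
    ext i
    simp only [φ, ne_eq, Multiset.mem_toFinset, not_not, smul_eq_mul, Finsupp.mk.injEq] at h
    by_cases hi : i = 0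
    · rw [hi]
      rw [Multiset.count_eq_zero_of_notMem]
      · rw [Multiset.count_eq_zero_of_notMem]
        intro a; exact Nat.lt_irrefl 0 (hs 0 (hp₂.2 0 a))
      intro a; exact Nat.lt_irrefl 0 (hs 0 (hp₁.2 0 a))
    · rw [← mul_left_inj' hi]
      rw [funext_iff] at h
      exact h.2 i
  · simp only [φ, mem_filter, mem_finsuppAntidiag, mem_univ, exists_prop, true_and, and_assoc]
    rintro f ⟨hf, hf₃, hf₄⟩
    have hf' : f ∈ finsuppAntidiag s n := mem_finsuppAntidiag.mpr ⟨hf, hf₃⟩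
    simp only [mem_finsuppAntidiag] at hf'
    refine ⟨⟨∑ i ∈ s, Multiset.replicate (f i / i) i, ?_, ?_⟩, ?_, ?_, ?_⟩
    · intro i hi
      simp only [exists_prop, Multiset.mem_sum, mem_map, Function.Embedding.coeFn_mk] at hi
      rcases hi with ⟨t, ht, z⟩
      apply hs
      rwa [Multiset.eq_of_mem_replicate z]
    · simp_rw [Multiset.sum_sum, Multiset.sum_replicate, Nat.nsmul_eq_mul]
      rw [← hf'.1]
      refine sum_congr rfl fun i hi => Nat.div_mul_cancel ?_
      rcases hf₄ i hi with ⟨w, _, hw₂⟩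
      rw [← hw₂]
      exact dvd_mul_left _ _
    · intro i
      simp_rw [Multiset.count_sum', Multiset.count_replicate, sum_ite_eq']
      split_ifs with h
      · rcases hf₄ i h with ⟨w, hw₁, hw₂⟩
        rwa [← hw₂, Nat.mul_div_cancel _ (hs i h)]
      · exact hc _ h
    · intro i hi
      rw [Multiset.mem_sum] at hi
      rcases hi with ⟨j, hj₁, hj₂⟩
      rwa [Multiset.eq_of_mem_replicate hj₂]
    · ext i
      simp_rw [Multiset.count_sum', Multiset.count_replicate, sum_ite_eq']
      simp only [ne_eq, Multiset.mem_toFinset, not_not, smul_eq_mul, ite_mul,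
        zero_mul, Finsupp.coe_mk]
      split_ifs with h
      · apply Nat.div_mul_cancel
        rcases hf₄ i h with ⟨w, _, hw₂⟩
        apply Dvd.intro_left _ hw₂
      · apply symm
        rw [← Finsupp.notMem_support_iff]
        exact notMem_mono hf'.2 h

theorem partialOddGF_prop [Field α] (n m : ℕ) :
    #{p : n.Partition | ∀ j ∈ p.parts, j ∈ (range m).map mkOdd} = coeff n (partialOddGF (α := α) m) := by
  rw [partialOddGF]
  convert partialGF_prop α n
    ((range m).map mkOdd) _ (fun _ => Set.univ) (fun _ _ => trivial) using 2
  · congr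
    simp only [true_and, forall_const, Set.mem_univ]
  · rw [Finset.prod_map]
    simp_rw [num_series']
    congr! 2 with x
    ext k
    constructor
    · rintro ⟨p, rfl⟩
      refine ⟨p, ⟨⟩, ?_⟩
      apply mul_comm
    rintro ⟨a_w, -, rfl⟩
    apply Dvd.intro_left a_w rfl
  · intro i
    rw [mem_map]
    rintro ⟨a, -, rfl⟩
    exact Nat.succ_pos _

/-- If m is big enough, the partial product's coefficient counts the number of odd partitions -/
theorem oddGF_prop [Field α] (n m : ℕ) (h : n < m * 2) :
    #(Nat.Partition.odds n) = coeff n (partialOddGF (α := α) m) := by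
  rw [← partialOddGF_prop, Nat.Partition.odds, Nat.Partition.restricted]
  congr with p
  apply forall₂_congr
  intro i hi
  have hin : i ≤ n := by
    simpa [p.parts_sum] using Multiset.single_le_sum (fun _ _ => Nat.zero_le _) _ hi
  simp only [mkOdd, exists_prop, mem_range, Function.Embedding.coeFn_mk, mem_map]
  constructor
  · intro hi₂
    have := Nat.mod_add_div i 2
    rw [Nat.not_even_iff] at hi₂
    rw [hi₂, add_comm] at this
    refine ⟨i / 2, ?_, this⟩
    rw [Nat.div_lt_iff_lt_mul zero_lt_two]
    exact lt_of_le_of_lt hin h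
  · rintro ⟨a, -, rfl⟩
    rw [even_iff_two_dvd]
    apply Nat.two_not_dvd_two_mul_add_one

theorem partialDistinctGF_prop [CommSemiring α] (n m : ℕ) :
    #{p : n.Partition |
        p.parts.Nodup ∧ ∀ j ∈ p.parts, j ∈ (range m).map ⟨Nat.succ, Nat.succ_injective⟩} =
      coeff n (partialDistinctGF (α := α) m) := by
  rw [partialDistinctGF]
  convert partialGF_prop α n
    ((range m).map ⟨Nat.succ, Nat.succ_injective⟩) _ (fun _ => {0, 1}) (fun _ _ => Or.inl rfl)
    using 2
  · congr! with p
    rw [Multiset.nodup_iff_count_le_one]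
    congr! 1 with i
    rcases Multiset.count i p.parts with (_ | _ | ms) <;> simp
  · simp_rw [Finset.prod_map, two_series]
    congr with i
    simp [Set.image_pair]
  · simp only [mem_map, Function.Embedding.coeFn_mk]
    rintro i ⟨_, _, rfl⟩
    apply Nat.succ_pos

/-- If m is big enough, the partial product's coefficient counts the number of distinct partitions
-/
theorem distinctGF_prop [CommSemiring α] (n m : ℕ) (h : n < m + 1) :
    #(Nat.Partition.distincts n) = coeff n (partialDistinctGF (α := α) m) := by
  rw [← partialDistinctGF_prop, Nat.Partition.distincts]
  congr with p
  apply (and_iff_left _).symm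
  intro i hi
  have : i ≤ n := by
    simpa [p.parts_sum] using Multiset.single_le_sum (fun _ _ => Nat.zero_le _) _ hi
  simp only [mkOdd, exists_prop, mem_range, Function.Embedding.coeFn_mk, mem_map]
  refine ⟨i - 1, ?_, Nat.succ_pred_eq_of_pos (p.parts_pos hi)⟩
  rw [tsub_lt_iff_right (Nat.one_le_iff_ne_zero.mpr (p.parts_pos hi).ne')]
  exact lt_of_le_of_lt this h

/-- The key proof idea for the partition theorem, showing that the generating functions for both
sequences are ultimately the same (since the factor converges to 0 as m tends to infinity).
It's enough to not take the limit though, and just consider large enough `m`.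
-/
theorem same_gf [Field α] (m : ℕ) :
    (partialOddGF m * (range m).prod fun i => 1 - (X : PowerSeries α) ^ (m + i + 1)) =
      partialDistinctGF m := by
  rw [partialOddGF, partialDistinctGF]
  induction' m with m ih
  · simp
  set! π₀ : PowerSeries α := ∏ i ∈ range m, (1 - X ^ (m + 1 + i + 1)) with hπ₀
  set! π₁ : PowerSeries α := ∏ i ∈ range m, (1 - X ^ (2 * i + 1))⁻¹ with hπ₁
  set! π₂ : PowerSeries α := ∏ i ∈ range m, (1 - X ^ (m + i + 1)) with hπ₂
  set! π₃ : PowerSeries α := ∏ i ∈ range m, (1 + X ^ (i + 1)) with hπ₃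
  rw [← hπ₃] at ih
  have h : constantCoeff (1 - X ^ (2 * m + 1) : PowerSeries α) ≠ 0 := by
    rw [RingHom.map_sub, RingHom.map_pow, constantCoeff_one, constantCoeff_X,
      zero_pow (2 * m).succ_ne_zero, sub_zero]
    exact one_ne_zero
  calc
    (∏ i ∈ range (m + 1), (1 - X ^ (2 * i + 1))⁻¹) *
          ∏ i ∈ range (m + 1), (1 - X ^ (m + 1 + i + 1)) =
        π₁ * (1 - X ^ (2 * m + 1))⁻¹ * (π₀ * (1 - X ^ (m + 1 + m + 1))) := by
      rw [prod_range_succ _ m, ← hπ₁, prod_range_succ _ m, ← hπ₀]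
    _ = π₁ * (1 - X ^ (2 * m + 1))⁻¹ * (π₀ * ((1 + X ^ (m + 1)) * (1 - X ^ (m + 1)))) := by
      rw [← sq_sub_sq, one_pow, add_assoc _ m 1, ← two_mul (m + 1), pow_mul']
    _ = π₀ * (1 - X ^ (m + 1)) * (1 - X ^ (2 * m + 1))⁻¹ * (π₁ * (1 + X ^ (m + 1))) := by ring
    _ =
        (∏ i ∈ range (m + 1), (1 - X ^ (m + 1 + i))) * (1 - X ^ (2 * m + 1))⁻¹ *
          (π₁ * (1 + X ^ (m + 1))) := by
      rw [prod_range_succ', add_zero, hπ₀]; simp_rw [← add_assoc]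
    _ = π₂ * (1 - X ^ (m + 1 + m)) * (1 - X ^ (2 * m + 1))⁻¹ * (π₁ * (1 + X ^ (m + 1))) := by
      rw [add_right_comm, hπ₂, ← prod_range_succ]; simp_rw [add_right_comm]
    _ = π₂ * (1 - X ^ (2 * m + 1)) * (1 - X ^ (2 * m + 1))⁻¹ * (π₁ * (1 + X ^ (m + 1))) := by
      rw [two_mul, add_right_comm _ m 1]
    _ = (1 - X ^ (2 * m + 1)) * (1 - X ^ (2 * m + 1))⁻¹ * π₂ * (π₁ * (1 + X ^ (m + 1))) := by ring
    _ = π₂ * (π₁ * (1 + X ^ (m + 1))) := by rw [PowerSeries.mul_inv_cancel _ h, one_mul]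
    _ = π₁ * π₂ * (1 + X ^ (m + 1)) := by ring
    _ = π₃ * (1 + X ^ (m + 1)) := by rw [ih]
    _ = _ := by rw [prod_range_succ]

theorem same_coeffs [Field α] (m n : ℕ) (h : n ≤ m) :
    coeff n (partialOddGF (α := α) m) = coeff n (partialDistinctGF (α := α) m) := by
  rw [← same_gf, coeff_mul_prod_one_sub_of_lt_order]
  rintro i -
  rw [order_X_pow]
  exact mod_cast Nat.lt_succ_of_le (le_add_right h)

theorem partition_theorem (n : ℕ) : #(Nat.Partition.odds n) = #(Nat.Partition.distincts n) := by
  suffices (#(Nat.Partition.odds n) : ℚ) = #(Nat.Partition.distincts n) from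
    mod_cast this
  rw [distinctGF_prop n (n + 1) (by linarith)]
  rw [oddGF_prop n (n + 1) (by linarith)]
  apply same_coeffs (n + 1) n n.le_succ

end

end Theorems100


namespace NCE

open Multiset

/-- good multisets of even parts: even, positive, no consecutive even values. -/
def Egood (E : Multiset ℕ) : Prop :=
  (∀ j ∈ E, Even j ∧ 0 < j) ∧ ∀ r : ℕ, 1 ≤ r → ¬(2 * r ∈ E ∧ 2 * r + 2 ∈ E)

def Podd (M : Multiset ℕ) : Prop := ∀ i ∈ M, Odd i

def Pdis (M : Multiset ℕ) : Prop := M.Nodup ∧ ∀ i ∈ M, 0 < i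

def T (P : Multiset ℕ → Prop) (n : ℕ) : Type :=
  {x : Multiset ℕ × Multiset ℕ // P x.1 ∧ Egood x.2 ∧ x.1.sum + x.2.sum = n}

lemma map_half_count (E : Multiset ℕ) (hE : ∀ j ∈ E, Even j ∧ 0 < j) (k : ℕ) :
    (E.map (· / 2)).count k = E.count (2 * k) := by
  classical
  rw [Multiset.count_map, Multiset.count_eq_card_filter_eq]
  congr 1
  apply Multiset.filter_congr
  intro a ha
  obtain ⟨⟨t, ht⟩, hpos⟩ := hE a ha
  subst ht
  constructor
  · rintro h; omega
  · rintro h; omega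

lemma comb_count (D E : Multiset ℕ) (hE : ∀ j ∈ E, Even j ∧ 0 < j) (k : ℕ) :
    (D + E.map (· / 2) + E.map (· / 2)).count k = D.count k + 2 * E.count (2 * k) := by
  rw [Multiset.count_add, Multiset.count_add, map_half_count E hE k]
  omega

lemma comb_sum (D E : Multiset ℕ) (hE : ∀ j ∈ E, Even j ∧ 0 < j) :
    (D + E.map (· / 2) + E.map (· / 2)).sum = D.sum + E.sum := by
  rw [Multiset.sum_add, Multiset.sum_add]
  have h : (E.map (· / 2)).sum + (E.map (· / 2)).sum = E.sum := by
    induction E using Multiset.induction_on with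
    | empty => simp
    | cons a s ih =>
      obtain ⟨⟨t, ht⟩, hpos⟩ := hE a (Multiset.mem_cons_self a s)
      have ihs := ih (fun j hj => hE j (Multiset.mem_cons_of_mem hj))
      simp only [Multiset.map_cons, Multiset.sum_cons]
      omega
  omega

end NCE

namespace NCE
open Multiset

def Dof (m : Multiset ℕ) : Multiset ℕ := m.dedup.filter (fun k => m.count k % 2 = 1)

def Eof (m : Multiset ℕ) : Multiset ℕ :=
  ∑ k ∈ m.toFinset, Multiset.replicate (m.count k / 2) (2 * k)

lemma Dof_nodup (m : Multiset ℕ) : (Dof m).Nodup := (m.nodup_dedup).filter _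

lemma Dof_count (m : Multiset ℕ) (k : ℕ) : (Dof m).count k = m.count k % 2 := by
  rw [Dof, Multiset.count_filter]
  by_cases h : m.count k % 2 = 1
  · rw [if_pos h, Multiset.count_dedup, if_pos (Multiset.count_pos.mp (by omega)), h]
  · rw [if_neg h]; omega

lemma Eof_count (m : Multiset ℕ) (k : ℕ) (hk : 0 < k) :
    (Eof m).count (2 * k) = m.count k / 2 := by
  classical
  rw [Eof, Multiset.count_sum']
  have h : ∀ x ∈ m.toFinset,
      (Multiset.replicate (m.count x / 2) (2 * x)).count (2 * k)
        = if x = k then m.count x / 2 else 0 := by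
    intro x _
    rw [Multiset.count_replicate]
    by_cases h : x = k
    · simp [h]
    · rw [if_neg (by omega), if_neg h]
  rw [Finset.sum_congr rfl h, Finset.sum_ite_eq' m.toFinset k (fun x => m.count x / 2)]
  by_cases hk2 : k ∈ m.toFinset
  · rw [if_pos hk2]
  · rw [if_neg hk2]
    have : m.count k = 0 := by
      rw [Multiset.count_eq_zero]
      intro hc; exact hk2 (Multiset.mem_toFinset.mpr hc)
    omega

lemma Eof_mem (m : Multiset ℕ) (hm : ∀ i ∈ m, 0 < i) :
    ∀ j ∈ Eof m, Even j ∧ 0 < j := by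
  intro j hj
  rw [Eof, Multiset.mem_sum] at hj
  obtain ⟨x, hx, hjx⟩ := hj
  have := Multiset.eq_of_mem_replicate hjx
  subst this
  have hxpos := hm x (Multiset.mem_toFinset.mp hx)
  exact ⟨⟨x, by omega⟩, by omega⟩

end NCE

namespace NCE
open Multiset

lemma recomb (m : Multiset ℕ) (hm : ∀ i ∈ m, 0 < i) :
    Dof m + (Eof m).map (· / 2) + (Eof m).map (· / 2) = m := by
  ext k
  rw [comb_count _ _ (Eof_mem m hm), Dof_count]
  by_cases hk : 0 < k
  · rw [Eof_count m k hk]; omega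
  · have hk0 : k = 0 := by omega
    subst hk0
    have h1 : m.count 0 = 0 := by
      rw [Multiset.count_eq_zero]; intro h; exact absurd (hm 0 h) (by omega)
    have h2 : (Eof m).count 0 = 0 := by
      rw [Multiset.count_eq_zero]; intro h
      exact absurd (Eof_mem m hm 0 h).2 (by omega)
    rw [h1]
    rw [show (2 : ℕ) * 0 = 0 by omega, h2]

/-- The partition assembled from a pair in `T Pdis n`. -/
def e2inv (n : ℕ) (x : T Pdis n) : Nat.Partition n where
  parts := x.1.1 + (x.1.2.map (· / 2)) + (x.1.2.map (· / 2))
  parts_pos := by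
    intro i hi
    obtain ⟨⟨hD, hDpos⟩, hE, hsum⟩ := x.2
    rw [Multiset.mem_add, Multiset.mem_add] at hi
    rcases hi with (hi | hi) | hi
    · exact hDpos i hi
    all_goals
    · obtain ⟨j, hj, rfl⟩ := Multiset.mem_map.mp hi
      obtain ⟨⟨t, ht⟩, hpos⟩ := hE.1 j hj
      omega
  parts_sum := by
    obtain ⟨⟨hD, hDpos⟩, hE, hsum⟩ := x.2
    rw [comb_sum _ _ hE.1]; exact hsum

lemma e2inv_count (n : ℕ) (x : T Pdis n) (k : ℕ) :
    (e2inv n x).parts.count k = x.1.1.count k + 2 * x.1.2.count (2 * k) :=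
  comb_count _ _ x.2.2.1.1 k

lemma e2inv_prop (n : ℕ) (x : T Pdis n) :
    ∀ r : ℕ, 1 ≤ r → ¬(2 ≤ (e2inv n x).parts.count r ∧ 2 ≤ (e2inv n x).parts.count (r + 1)) := by
  intro r hr ⟨h1, h2⟩
  obtain ⟨⟨hD, hDpos⟩, hE, hsum⟩ := x.2
  rw [e2inv_count] at h1 h2
  have hd1 : x.1.1.count r ≤ 1 := Multiset.nodup_iff_count_le_one.mp hD r
  have hd2 : x.1.1.count (r + 1) ≤ 1 := Multiset.nodup_iff_count_le_one.mp hD (r + 1)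
  refine hE.2 r hr ⟨Multiset.count_pos.mp (by omega), ?_⟩
  have : (2 : ℕ) * r + 2 = 2 * (r + 1) := by omega
  rw [this]
  exact Multiset.count_pos.mp (by omega)

end NCE

namespace NCE
open Multiset

def e2 (n : ℕ) :
    {π : Nat.Partition n //
        ∀ r : ℕ, 1 ≤ r → ¬(2 ≤ π.parts.count r ∧ 2 ≤ π.parts.count (r + 1))} ≃ T Pdis n where
  toFun π := by
    refine ⟨(Dof π.1.parts, Eof π.1.parts), ⟨Dof_nodup _, ?_⟩, ⟨Eof_mem _ (fun i hi => π.1.parts_pos hi), ?_⟩, ?_⟩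
    · intro i hi
      exact π.1.parts_pos (Multiset.mem_dedup.mp (Multiset.mem_of_mem_filter hi))
    · rintro r hr ⟨h1, h2⟩
      have c1 := Multiset.count_pos.mpr h1
      have c2 := Multiset.count_pos.mpr h2
      rw [Eof_count _ r hr] at c1
      rw [show (2:ℕ) * r + 2 = 2 * (r+1) by omega, Eof_count _ (r+1) (by omega)] at c2
      exact π.2 r hr ⟨by omega, by omega⟩
    · have := congrArg Multiset.sum (recomb π.1.parts (fun i hi => π.1.parts_pos hi))
      rw [comb_sum _ _ (Eof_mem _ (fun i hi => π.1.parts_pos hi))] at this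
      rw [this, π.1.parts_sum]
  invFun x := ⟨e2inv n x, e2inv_prop n x⟩
  left_inv π := by
    apply Subtype.ext
    apply Nat.Partition.ext
    exact recomb π.1.parts (fun i hi => π.1.parts_pos hi)
  right_inv x := by
    obtain ⟨⟨D, E⟩, ⟨hD, hDpos⟩, hE, hsum⟩ := x
    apply Subtype.ext
    have hcnt : ∀ k, (e2inv n ⟨(D, E), ⟨hD, hDpos⟩, hE, hsum⟩).parts.count k
        = D.count k + 2 * E.count (2 * k) := e2inv_count n _
    have hD1 : ∀ k, D.count k ≤ 1 := Multiset.nodup_iff_count_le_one.mp hD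
    refine Prod.ext ?_ ?_
    · show Dof _ = D
      ext k
      rw [Dof_count, hcnt k]
      by_cases hk : 0 < k
      · have := hD1 k; omega
      · have hk0 : k = 0 := by omega
        subst hk0
        have : D.count 0 = 0 := by
          rw [Multiset.count_eq_zero]; intro h; exact absurd (hDpos 0 h) (by omega)
        omega
    · show Eof _ = E
      ext j
      by_cases hj : Even j ∧ 0 < j
      · obtain ⟨⟨t, ht⟩, hpos⟩ := hj
        subst ht
        rw [show t + t = 2 * t by omega] at hpos ⊢
        rw [Eof_count _ t (by omega), hcnt t]
        have := hD1 t; omega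
      · have h1 : (Eof (e2inv n ⟨(D, E), ⟨hD, hDpos⟩, hE, hsum⟩).parts).count j = 0 := by
          rw [Multiset.count_eq_zero]
          intro h
          exact hj (Eof_mem _ (fun i hi => (e2inv n _).parts_pos hi) j h)
        have h2 : E.count j = 0 := by
          rw [Multiset.count_eq_zero]
          intro h
          exact hj (hE.1 j h)
        rw [h1, h2]

end NCE

namespace NCE
open Multiset

def e1inv (n : ℕ) (x : T Podd n) : Nat.Partition n where
  parts := x.1.1 + x.1.2
  parts_pos := by
    intro i hi
    rw [Multiset.mem_add] at hi
    rcases hi with hi | hi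
    · have := x.2.1 i hi
      rw [Nat.odd_iff] at this
      omega
    · exact (x.2.2.1.1 i hi).2
  parts_sum := by rw [Multiset.sum_add]; exact x.2.2.2

def e1 (n : ℕ) :
    {π : Nat.Partition n //
        ∀ r : ℕ, 1 ≤ r → ¬(2 * r ∈ π.parts ∧ 2 * r + 2 ∈ π.parts)} ≃ T Podd n where
  toFun π := by
    refine ⟨(π.1.parts.filter (fun i => ¬ Even i), π.1.parts.filter (fun i => Even i)),
      ?_, ⟨?_, ?_⟩, ?_⟩
    · intro i hi
      rw [Multiset.mem_filter] at hi
      exact Nat.not_even_iff_odd.mp hi.2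
    · intro j hj
      rw [Multiset.mem_filter] at hj
      exact ⟨hj.2, π.1.parts_pos hj.1⟩
    · rintro r hr ⟨h1, h2⟩
      rw [Multiset.mem_filter] at h1 h2
      exact π.2 r hr ⟨h1.1, h2.1⟩
    · show (π.1.parts.filter _).sum + (π.1.parts.filter _).sum = n
      have h := congrArg Multiset.sum (Multiset.filter_add_not (fun i => Even i) π.1.parts)
      rw [Multiset.sum_add] at h
      have h2 := π.1.parts_sum
      omega
  invFun x := by
    refine ⟨e1inv n x, ?_⟩
    rintro r hr ⟨h1, h2⟩
    have key : ∀ j : ℕ, Even j → j ∈ (e1inv n x).parts → j ∈ x.1.2 := by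
      intro j hje hj
      rw [show (e1inv n x).parts = x.1.1 + x.1.2 from rfl, Multiset.mem_add] at hj
      rcases hj with hj | hj
      · have := x.2.1 j hj
        rw [Nat.odd_iff] at this
        obtain ⟨t, ht⟩ := hje
        omega
      · exact hj
    exact x.2.2.1.2 r hr ⟨key _ ⟨r, by omega⟩ h1, key _ ⟨r + 1, by omega⟩ h2⟩
  left_inv π := by
    apply Subtype.ext
    apply Nat.Partition.ext
    show π.1.parts.filter _ + π.1.parts.filter _ = π.1.parts
    rw [add_comm]
    exact Multiset.filter_add_not (fun i => Even i) π.1.parts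
  right_inv x := by
    obtain ⟨⟨O, E⟩, hO, hE, hsum⟩ := x
    apply Subtype.ext
    refine Prod.ext ?_ ?_
    · show (O + E).filter _ = O
      rw [Multiset.filter_add,
        Multiset.filter_eq_self.mpr (fun a ha => Nat.not_even_iff_odd.mpr (hO a ha)),
        Multiset.filter_eq_nil.mpr (fun a ha h => h (hE.1 a ha).1)]
      simp
    · show (O + E).filter _ = E
      rw [Multiset.filter_add,
        Multiset.filter_eq_nil.mpr (fun a ha h => (Nat.not_even_iff_odd.mpr (hO a ha)) h),
        Multiset.filter_eq_self.mpr (fun a ha => (hE.1 a ha).1)]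
      simp

end NCE

namespace NCE
open Multiset

def Sig (P : Multiset ℕ → Prop) (n : ℕ) : Type :=
  Σ a : Fin (n + 1),
    {D : Multiset ℕ // P D ∧ D.sum = a.1} × {E : Multiset ℕ // Egood E ∧ E.sum = n - a.1}

def gmap (P : Multiset ℕ → Prop) (n : ℕ) (y : Sig P n) : T P n :=
  ⟨(y.2.1.1, y.2.2.1), y.2.1.2.1, y.2.2.2.1, by
    have h1 := y.1.isLt
    have h2 := y.2.1.2.2
    have h3 := y.2.2.2.2
    dsimp only
    omega⟩

lemma gmap_bij (P : Multiset ℕ → Prop) (n : ℕ) : Function.Bijective (gmap P n) := by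
  constructor
  · rintro ⟨⟨a, ha⟩, ⟨D, hD⟩, ⟨E, hE⟩⟩ ⟨⟨a', ha'⟩, ⟨D', hD'⟩, ⟨E', hE'⟩⟩ h
    have h' : (D, E) = (D', E') := congrArg Subtype.val h
    rw [Prod.mk.injEq] at h'
    obtain ⟨hde1, hde2⟩ := h'
    subst hde1; subst hde2
    have haa : a = a' := by
      have e1 : D.sum = a := hD.2
      have e2 : D.sum = a' := hD'.2
      omega
    subst haa
    rfl
  · rintro ⟨⟨D, E⟩, hP, hE, hsum⟩
    dsimp only at hsum
    refine ⟨⟨⟨D.sum, by omega⟩, ⟨D, hP, rfl⟩, ⟨E, hE, ?_⟩⟩, rfl⟩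
    show E.sum = n - D.sum
    omega

def oddFin (a : ℕ) : {M : Multiset ℕ // Podd M ∧ M.sum = a} ≃ (Nat.Partition.odds a) where
  toFun M := ⟨⟨M.1, fun {i} hi => by have := M.2.1 i hi; rw [Nat.odd_iff] at this; omega,
      M.2.2⟩, by
    rw [Nat.Partition.odds, Nat.Partition.restricted, Finset.mem_filter]
    exact ⟨Finset.mem_univ _, fun i hi he => Nat.not_odd_iff_even.mpr he (M.2.1 i hi)⟩⟩
  invFun π := ⟨π.1.parts, fun i hi => Nat.not_even_iff_odd.mp
      ((Finset.mem_filter.mp π.2).2 i hi), π.1.parts_sum⟩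
  left_inv M := rfl
  right_inv π := by apply Subtype.ext; apply Nat.Partition.ext; rfl

def disFin (a : ℕ) : {M : Multiset ℕ // Pdis M ∧ M.sum = a} ≃ (Nat.Partition.distincts a) where
  toFun M := ⟨⟨M.1, fun {i} hi => M.2.1.2 i hi, M.2.2⟩, by
    rw [Nat.Partition.distincts, Finset.mem_filter]
    exact ⟨Finset.mem_univ _, M.2.1.1⟩⟩
  invFun π := ⟨π.1.parts, ⟨(Finset.mem_filter.mp π.2).2, fun i hi => π.1.parts_pos hi⟩,
    π.1.parts_sum⟩
  left_inv M := rfl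
  right_inv π := by apply Subtype.ext; apply Nat.Partition.ext; rfl

noncomputable def oddDis (a : ℕ) :
    {M : Multiset ℕ // Podd M ∧ M.sum = a} ≃ {M : Multiset ℕ // Pdis M ∧ M.sum = a} :=
  ((oddFin a).trans (Fintype.equivOfCardEq (by
    rw [Fintype.card_coe, Fintype.card_coe, Theorems100.partition_theorem]))).trans
    (disFin a).symm

noncomputable def sigEquiv (n : ℕ) : Sig Podd n ≃ Sig Pdis n :=
  Equiv.sigmaCongrRight (fun (a : Fin (n + 1)) =>
    Equiv.prodCongr (oddDis a.1) (Equiv.refl _))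

end NCE

theorem no_consecutive_even_vs_no_consecutive_repeated (n : ℕ) :
    Nat.card {π : Nat.Partition n //
        ∀ r : ℕ, 1 ≤ r → ¬(2 * r ∈ π.parts ∧ 2 * r + 2 ∈ π.parts)} =
    Nat.card {π : Nat.Partition n //
        ∀ r : ℕ, 1 ≤ r →
          ¬(2 ≤ π.parts.count r ∧ 2 ≤ π.parts.count (r + 1))} := by
  have h1 := Nat.card_congr (NCE.e1 n)
  have h2 := Nat.card_congr (NCE.e2 n)
  have g1 := Nat.card_congr (Equiv.ofBijective _ (NCE.gmap_bij NCE.Podd n))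
  have g2 := Nat.card_congr (Equiv.ofBijective _ (NCE.gmap_bij NCE.Pdis n))
  have hs := Nat.card_congr (NCE.sigEquiv n)
  omega
end

section
/- The number of partitions of n in which no part size is a perfect square equals the number of partitions of n in which every part size i has multiplicity less than i. -/
open Finset

/-- digit `e` of `m` in the mixed-radix system with radices `j^(2^e)`. -/
def dg (j m e : ℕ) : ℕ := (m / j ^ (2 ^ e - 1)) % j ^ (2 ^ e)

lemma dg_lt {j : ℕ} (hj : 0 < j) (m e : ℕ) : dg j m e < j ^ (2 ^ e) :=
  Nat.mod_lt _ (Nat.pow_pos hj)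

lemma dg_succ (j m e : ℕ) : dg j m (e + 1) = dg (j ^ 2) (m / j) e := by
  unfold dg
  rw [← pow_mul, ← pow_mul, Nat.div_div_eq_div_mul, ← pow_succ']
  have h1 : 2 * (2 ^ e - 1) + 1 = 2 ^ (e + 1) - 1 := by
    have : 1 ≤ 2 ^ e := Nat.one_le_two_pow
    rw [pow_succ]; omega
  have h2 : 2 * 2 ^ e = 2 ^ (e + 1) := by rw [pow_succ]; ring
  rw [← h1, ← h2]

lemma dg_zero_of_lt {j m e : ℕ} (h : m < j ^ (2 ^ e - 1)) : dg j m e = 0 := by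
  unfold dg; rw [Nat.div_eq_of_lt h, Nat.zero_mod]

lemma dg_sum : ∀ (E j m : ℕ), 2 ≤ j → m < j ^ (2 ^ E - 1) →
    ∑ e ∈ range E, j ^ (2 ^ e - 1) * dg j m e = m := by
  intro E
  induction E with
  | zero => intro j m hj hm; simp at hm ⊢; omega
  | succ E ih =>
    intro j m hj hm
    rw [Finset.sum_range_succ']
    have h0 : j ^ (2 ^ 0 - 1) * dg j m 0 = m % j := by simp [dg]
    have hterm : ∀ e, j ^ (2 ^ (e+1) - 1) * dg j m (e+1)
        = j * ((j^2) ^ (2 ^ e - 1) * dg (j^2) (m / j) e) := by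
      intro e
      rw [dg_succ, ← pow_mul]
      have : 2 ^ (e+1) - 1 = 1 + 2 * (2^e - 1) := by
        have : 1 ≤ 2 ^ e := Nat.one_le_two_pow
        rw [pow_succ]; omega
      rw [this, pow_add, pow_one]
      ring
    have hdiv : m / j < (j^2) ^ (2 ^ E - 1) := by
      rw [Nat.div_lt_iff_lt_mul (by omega : 0 < j), ← pow_mul]
      calc m < j ^ (2 ^ (E+1) - 1) := hm
        _ = j ^ (2 * (2^E - 1)) * j := by
            rw [← pow_succ]
            congr 1
            have : 1 ≤ 2 ^ E := Nat.one_le_two_pow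
            rw [pow_succ]; omega
    calc ∑ e ∈ range E, j ^ (2 ^ (e+1) - 1) * dg j m (e+1) + j ^ (2^0 - 1) * dg j m 0
        = j * (∑ e ∈ range E, (j^2) ^ (2 ^ e - 1) * dg (j^2) (m / j) e) + m % j := by
          rw [h0, Finset.mul_sum]
          congr 1
          exact Finset.sum_congr rfl fun e _ => hterm e
      _ = j * (m / j) + m % j := by rw [ih (j^2) (m / j) (by nlinarith) hdiv]
      _ = m := Nat.div_add_mod m j

lemma chain_split (E j : ℕ) (c : ℕ → ℕ) :
    ∑ e ∈ range (E+1), j ^ (2 ^ e - 1) * c e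
      = c 0 + j * ∑ e ∈ range E, (j^2) ^ (2 ^ e - 1) * c (e+1) := by
  rw [Finset.sum_range_succ', Finset.mul_sum]
  have h0 : j ^ (2 ^ 0 - 1) * c 0 = c 0 := by simp
  rw [h0, add_comm]
  congr 1
  refine Finset.sum_congr rfl fun e _ => ?_
  rw [← pow_mul]
  have : 2 ^ (e+1) - 1 = 1 + 2 * (2^e - 1) := by
    have : 1 ≤ 2 ^ e := Nat.one_le_two_pow
    rw [pow_succ]; omega
  rw [this, pow_add, pow_one]
  ring

lemma dg_eq_of_sum : ∀ (e : ℕ) {j E : ℕ} (c : ℕ → ℕ), 2 ≤ j → (∀ e' < E, c e' < j ^ (2 ^ e')) →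
    dg j (∑ e' ∈ range E, j ^ (2 ^ e' - 1) * c e') e = if e < E then c e else 0 := by
  intro e
  induction e with
  | zero =>
    intro j E c hj hc
    match E with
    | 0 => simp [dg]
    | E + 1 =>
      rw [chain_split]
      show (c 0 + j * ∑ e ∈ range E, (j^2) ^ (2 ^ e - 1) * c (e+1)) / j ^ (2^0 - 1) % j ^ (2^0) = _
      simp only [pow_zero, pow_one, Nat.sub_self, Nat.div_one]
      rw [Nat.add_mul_mod_self_left, Nat.mod_eq_of_lt (by simpa using hc 0 (by omega))]
      simp
  | succ e ih =>
    intro j E c hj hc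
    match E with
    | 0 => simp [dg]
    | E + 1 =>
      rw [chain_split, dg_succ]
      have hc0 : c 0 < j := by simpa using hc 0 (by omega)
      have hq : (c 0 + j * ∑ e ∈ range E, (j^2) ^ (2 ^ e - 1) * c (e+1)) / j
          = ∑ e ∈ range E, (j^2) ^ (2 ^ e - 1) * c (e+1) := by
        rw [Nat.add_mul_div_left _ _ (by omega : 0 < j), Nat.div_eq_of_lt hc0, zero_add]
      rw [hq, ih (fun e' => c (e'+1)) (by nlinarith) ?_]
      · simp [Nat.succ_lt_succ_iff]
      · intro e' he'
        have h := hc (e'+1) (by omega)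
        show c (e'+1) < (j^2) ^ 2 ^ e'
        rwa [← pow_mul, mul_comm 2 (2^e'), ← pow_succ]

/-- the non-square base of `i` under repeated square roots. -/
def nsb (i : ℕ) : ℕ :=
  if h : 2 ≤ i ∧ IsSquare i then nsb (Nat.sqrt i) else i
decreasing_by exact Nat.sqrt_lt_self (by omega)

def nse (i : ℕ) : ℕ :=
  if h : 2 ≤ i ∧ IsSquare i then nse (Nat.sqrt i) + 1 else 0
decreasing_by exact Nat.sqrt_lt_self (by omega)

lemma sqrt_of_isSquare {m : ℕ} (h : IsSquare m) : Nat.sqrt m * Nat.sqrt m = m := by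
  obtain ⟨r, rfl⟩ := h; rw [Nat.sqrt_eq r]

lemma nsb_spec : ∀ i, 2 ≤ i →
    2 ≤ nsb i ∧ ¬ IsSquare (nsb i) ∧ (nsb i) ^ (2 ^ nse i) = i := by
  intro i
  induction i using Nat.strong_induction_on with
  | _ i ih =>
    intro hi
    by_cases h : IsSquare i
    · have hs : Nat.sqrt i * Nat.sqrt i = i := sqrt_of_isSquare h
      have h2 : 2 ≤ Nat.sqrt i := by nlinarith [Nat.sqrt i]
      have hlt : Nat.sqrt i < i := Nat.sqrt_lt_self (by omega)
      obtain ⟨hb, hns, hp⟩ := ih _ hlt h2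
      rw [nsb, nse, dif_pos ⟨hi, h⟩, dif_pos ⟨hi, h⟩]
      refine ⟨hb, hns, ?_⟩
      rw [pow_succ, pow_mul, hp]
      rw [sq]; exact hs
    · rw [nsb, nse, dif_neg (by tauto), dif_neg (by tauto)]
      simpa using ⟨hi, h⟩

lemma nsb_pow {j : ℕ} (hj : 2 ≤ j) (hns : ¬ IsSquare j) :
    ∀ e, nsb (j ^ 2 ^ e) = j ∧ nse (j ^ 2 ^ e) = e := by
  intro e
  induction e with
  | zero => simp [nsb, nse, hns]
  | succ e ih =>
    have hpow2 : 2 ≤ j ^ 2 ^ e := le_trans hj (Nat.le_self_pow (by positivity) _)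
    have hsq : j ^ 2 ^ (e+1) = (j ^ 2 ^ e) ^ 2 := by
      rw [← pow_mul, pow_succ]
    have hsqr : Nat.sqrt (j ^ 2 ^ (e+1)) = j ^ 2 ^ e := by rw [hsq]; exact Nat.sqrt_eq' _
    have his : IsSquare (j ^ 2 ^ (e+1)) := by rw [hsq, sq]; exact ⟨_, rfl⟩
    have h2 : 2 ≤ j ^ 2 ^ (e+1) := le_trans hj (Nat.le_self_pow (by positivity) _)
    constructor
    · rw [nsb, dif_pos ⟨h2, his⟩, hsqr]; exact ih.1
    · rw [nse, dif_pos ⟨h2, his⟩, hsqr, ih.2]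

lemma pow_two_pow_inj {j1 j2 e1 e2 : ℕ} (h1 : 2 ≤ j1) (hn1 : ¬ IsSquare j1)
    (h2 : 2 ≤ j2) (hn2 : ¬ IsSquare j2) (h : j1 ^ 2 ^ e1 = j2 ^ 2 ^ e2) :
    j1 = j2 ∧ e1 = e2 := by
  have a1 := nsb_pow h1 hn1 e1
  have a2 := nsb_pow h2 hn2 e2
  rw [h] at a1
  exact ⟨a1.1.symm.trans a2.1, a1.2.symm.trans a2.2⟩

/-- forward map on multisets: split each nonsquare part's multiplicity into mixed-radix digits. -/
def fwdM (n : ℕ) (s : Multiset ℕ) : Multiset ℕ :=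
  ∑ j ∈ s.toFinset, ∑ e ∈ range (n+1), Multiset.replicate (dg j (s.count j) e) (j ^ 2 ^ e)

def backF (n : ℕ) (s : Multiset ℕ) (j : ℕ) : ℕ :=
  ∑ e ∈ range (n+1), j ^ (2 ^ e - 1) * s.count (j ^ 2 ^ e)

/-- backward map: gather counts along the square chain of each nonsquare base. -/
def backM (n : ℕ) (s : Multiset ℕ) : Multiset ℕ :=
  ∑ j ∈ s.toFinset.image nsb, Multiset.replicate (backF n s j) j

lemma lt_pow_bound {j n m : ℕ} (hj : 2 ≤ j) (hm : m ≤ n) : m < j ^ (2 ^ (n+1) - 1) := by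
  have h1 : n + 1 ≤ 2 ^ (n+1) - 1 := by have := Nat.lt_two_pow_self (n := n+1); omega
  calc m < 2 ^ (n+1) := by have := Nat.lt_two_pow_self (n := n); omega
    _ ≤ 2 ^ (2 ^ (n+1) - 1) := Nat.pow_le_pow_right (by omega) h1
    _ ≤ j ^ (2 ^ (n+1) - 1) := Nat.pow_le_pow_left hj _

lemma count_fwdM {s : Multiset ℕ} (hA : ∀ i ∈ s, 2 ≤ i ∧ ¬ IsSquare i) (n i : ℕ) :
    (fwdM n s).count i =
      if 2 ≤ i ∧ nsb i ∈ s.toFinset ∧ nse i ≤ n then dg (nsb i) (s.count (nsb i)) (nse i)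
      else 0 := by
  rw [fwdM, Multiset.count_sum']
  have hterm : ∀ j ∈ s.toFinset,
      (∑ e ∈ range (n+1), Multiset.replicate (dg j (s.count j) e) (j ^ 2 ^ e)).count i
      = ∑ e ∈ range (n+1), if j ^ 2 ^ e = i then dg j (s.count j) e else 0 := by
    intro j _
    rw [Multiset.count_sum']
    exact Finset.sum_congr rfl fun e _ => Multiset.count_replicate _ _ _
  rw [Finset.sum_congr rfl hterm]
  by_cases h : 2 ≤ i ∧ nsb i ∈ s.toFinset ∧ nse i ≤ n
  · obtain ⟨hi2, hmem, hle⟩ := h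
    obtain ⟨hb2, hbns, hbeq⟩ := nsb_spec i hi2
    rw [if_pos ⟨hi2, hmem, hle⟩]
    rw [Finset.sum_eq_single (nsb i)]
    · rw [Finset.sum_eq_single (nse i)]
      · rw [if_pos hbeq]
      · intro e _ hne
        rw [if_neg]
        intro heq
        exact hne ((pow_two_pow_inj hb2 hbns hb2 hbns (heq.trans hbeq.symm)).2)
      · intro habs; exact absurd (Finset.mem_range.2 (by omega)) habs
    · intro j hj hne
      obtain ⟨hj2, hjns⟩ := hA j (Multiset.mem_toFinset.1 hj)
      apply Finset.sum_eq_zero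
      intro e _
      rw [if_neg]
      intro heq
      exact hne ((pow_two_pow_inj hj2 hjns hb2 hbns (heq.trans hbeq.symm)).1)
    · intro habs; exact absurd hmem habs
  · rw [if_neg h]
    apply Finset.sum_eq_zero
    intro j hj
    apply Finset.sum_eq_zero
    intro e he
    rw [if_neg]
    intro heq
    obtain ⟨hj2, hjns⟩ := hA j (Multiset.mem_toFinset.1 hj)
    have h2i : 2 ≤ i := heq ▸ le_trans hj2 (Nat.le_self_pow (by positivity) _)
    have := nsb_pow hj2 hjns e
    rw [heq] at this
    exact h ⟨h2i, this.1 ▸ hj, this.2 ▸ (by have := Finset.mem_range.1 he; omega : e ≤ n)⟩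

lemma count_backM (s : Multiset ℕ) (n j : ℕ) :
    (backM n s).count j =
      if j ∈ s.toFinset.image nsb then backF n s j else 0 := by
  rw [backM, Multiset.count_sum']
  rw [Finset.sum_congr rfl fun j' _ => Multiset.count_replicate _ _ _]
  simp [Finset.sum_ite_eq']

lemma count_mul_le_sum (s : Multiset ℕ) (a : ℕ) : s.count a * a ≤ s.sum := by
  have h : Multiset.replicate (s.count a) a ≤ s := Multiset.le_count_iff_replicate_le.1 le_rfl
  obtain ⟨u, hu⟩ := exists_add_of_le h
  have h2 : (Multiset.replicate (s.count a) a).sum = s.count a * a := by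
    simp [Multiset.sum_replicate]
  have h3 : s.sum = s.count a * a + u.sum := by
    conv_lhs => rw [hu]
    rw [Multiset.sum_add, h2]
  omega

lemma sum_chain {j m n : ℕ} (hj : 2 ≤ j) (hm : m ≤ n) :
    ∑ e ∈ range (n+1), dg j m e * j ^ 2 ^ e = m * j := by
  have key := dg_sum (n+1) j m hj (lt_pow_bound hj hm)
  calc ∑ e ∈ range (n+1), dg j m e * j ^ 2 ^ e
      = (∑ e ∈ range (n+1), j ^ (2^e - 1) * dg j m e) * j := by
        rw [Finset.sum_mul]
        refine Finset.sum_congr rfl fun e _ => ?_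
        have h1 : j ^ 2 ^ e = j ^ (2^e - 1) * j := by
          rw [← pow_succ]
          congr 1
          have : 1 ≤ 2 ^ e := Nat.one_le_two_pow
          omega
        rw [h1]; ring
    _ = m * j := by rw [key]

lemma sum_fwdM {s : Multiset ℕ} (hA : ∀ i ∈ s, 2 ≤ i ∧ ¬ IsSquare i) {n : ℕ}
    (hsum : s.sum = n) : (fwdM n s).sum = n := by
  rw [fwdM, Multiset.sum_sum]
  have step : ∀ j ∈ s.toFinset,
      (∑ e ∈ range (n+1), Multiset.replicate (dg j (s.count j) e) (j ^ 2 ^ e)).sum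
        = s.count j * j := by
    intro j hj
    obtain ⟨hj2, _⟩ := hA j (Multiset.mem_toFinset.1 hj)
    rw [Multiset.sum_sum]
    have : ∀ e ∈ range (n+1),
        (Multiset.replicate (dg j (s.count j) e) (j ^ 2 ^ e)).sum
          = dg j (s.count j) e * j ^ 2 ^ e := by
      intro e _; simp [Multiset.sum_replicate]
    rw [Finset.sum_congr rfl this]
    refine sum_chain hj2 ?_
    have := count_mul_le_sum s j
    nlinarith
  rw [Finset.sum_congr rfl step]
  conv_rhs => rw [← hsum]
  rw [eq_comm]
  conv_lhs => rw [← Multiset.toFinset_sum_count_nsmul_eq s]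
  rw [Multiset.sum_sum]
  simp [Multiset.sum_nsmul, mul_comm]

lemma mem_fwdM_iff {s : Multiset ℕ} (hA : ∀ i ∈ s, 2 ≤ i ∧ ¬ IsSquare i) {n i : ℕ} :
    i ∈ fwdM n s ↔
      (2 ≤ i ∧ nsb i ∈ s.toFinset ∧ nse i ≤ n ∧ 0 < dg (nsb i) (s.count (nsb i)) (nse i)) := by
  rw [← Multiset.count_pos, count_fwdM hA]
  by_cases h : 2 ≤ i ∧ nsb i ∈ s.toFinset ∧ nse i ≤ n
  · rw [if_pos h]; tauto
  · rw [if_neg h]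
    constructor
    · intro h0; exact absurd h0 (by simp)
    · intro hh; exact absurd ⟨hh.1, hh.2.1, hh.2.2.1⟩ h

lemma nse_lt_self {i : ℕ} (h2 : 2 ≤ i) : nse i < i := by
  obtain ⟨hb, _, hp⟩ := nsb_spec i h2
  calc nse i < 2 ^ nse i := Nat.lt_two_pow_self
    _ ≤ 2 ^ 2 ^ nse i := Nat.pow_le_pow_right (by omega) (le_of_lt (Nat.lt_two_pow_self))
    _ ≤ (nsb i) ^ 2 ^ nse i := Nat.pow_le_pow_left hb _
    _ = i := hp

lemma mem_image_nsb {s : Multiset ℕ} (hB2 : ∀ i ∈ s, 2 ≤ i) {j : ℕ}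
    (hj : j ∈ s.toFinset.image nsb) : 2 ≤ j ∧ ¬ IsSquare j := by
  obtain ⟨i, hi, rfl⟩ := Finset.mem_image.1 hj
  obtain ⟨h1, h2, _⟩ := nsb_spec i (hB2 i (Multiset.mem_toFinset.1 hi))
  exact ⟨h1, h2⟩

lemma mem_backM {s : Multiset ℕ} (hB2 : ∀ i ∈ s, 2 ≤ i) {n j : ℕ} (h : j ∈ backM n s) :
    2 ≤ j ∧ ¬ IsSquare j := by
  have hc := Multiset.count_pos.2 h
  rw [count_backM] at hc
  by_cases him : j ∈ s.toFinset.image nsb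
  · exact mem_image_nsb hB2 him
  · rw [if_neg him] at hc; omega

lemma sum_backM {s : Multiset ℕ} (hB2 : ∀ i ∈ s, 2 ≤ i) {n : ℕ} (hsum : s.sum = n) :
    (backM n s).sum = n := by
  classical
  set J := s.toFinset.image nsb with hJ
  have step : ∀ j ∈ J, (Multiset.replicate (backF n s j) j).sum
      = ∑ e ∈ range (n+1), (fun i => i * s.count i) (j ^ 2 ^ e) := by
    intro j hj
    simp only [Multiset.sum_replicate, smul_eq_mul]
    rw [backF, Finset.sum_mul]
    refine Finset.sum_congr rfl fun e _ => ?_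
    have h1 : j ^ 2 ^ e = j ^ (2^e - 1) * j := by
      rw [← pow_succ]
      congr 1
      have : 1 ≤ 2 ^ e := Nat.one_le_two_pow
      omega
    show _ = j ^ 2 ^ e * s.count (j ^ 2 ^ e)
    rw [h1]; ring
  rw [backM, Multiset.sum_sum, Finset.sum_congr rfl step, ← Finset.sum_product']
  have hinj : ∀ p ∈ J ×ˢ range (n+1), ∀ q ∈ J ×ˢ range (n+1),
      (fun p : ℕ × ℕ => p.1 ^ 2 ^ p.2) p = (fun p : ℕ × ℕ => p.1 ^ 2 ^ p.2) q → p = q := by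
    intro p hp q hq h
    obtain ⟨hp1, _⟩ := Finset.mem_product.1 hp
    obtain ⟨hq1, _⟩ := Finset.mem_product.1 hq
    obtain ⟨hp2, hpns⟩ := mem_image_nsb hB2 hp1
    obtain ⟨hq2, hqns⟩ := mem_image_nsb hB2 hq1
    obtain ⟨h1, h2⟩ := pow_two_pow_inj hp2 hpns hq2 hqns h
    exact Prod.ext h1 h2
  have himg := Finset.sum_image (f := fun i => i * s.count i) hinj
  rw [← himg]
  have hsub : s.toFinset ⊆ (J ×ˢ range (n+1)).image (fun p : ℕ × ℕ => p.1 ^ 2 ^ p.2) := by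
    intro i hi
    have h2 : 2 ≤ i := hB2 i (Multiset.mem_toFinset.1 hi)
    have hile : i ≤ n := hsum ▸ Multiset.le_sum_of_mem (Multiset.mem_toFinset.1 hi)
    obtain ⟨_, _, hp⟩ := nsb_spec i h2
    refine Finset.mem_image.2 ⟨(nsb i, nse i), Finset.mem_product.2 ⟨?_, ?_⟩, hp⟩
    · exact Finset.mem_image_of_mem nsb hi
    · exact Finset.mem_range.2 (by have := nse_lt_self h2; omega)
  rw [← Finset.sum_subset hsub (fun i _ hni => by
    rw [Multiset.count_eq_zero_of_notMem (fun hmem => hni (Multiset.mem_toFinset.2 hmem)),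
      mul_zero])]
  conv_rhs => rw [← hsum]
  conv_rhs => rw [← Multiset.toFinset_sum_count_nsmul_eq s]
  rw [Multiset.sum_sum]
  simp [Multiset.sum_nsmul, mul_comm]

lemma back_fwd {s : Multiset ℕ} (hA : ∀ i ∈ s, 2 ≤ i ∧ ¬ IsSquare i) {n : ℕ}
    (hsum : s.sum = n) : backM n (fwdM n s) = s := by
  classical
  set t := fwdM n s with hts
  have ht2 : ∀ i ∈ t, 2 ≤ i := fun i hi => ((mem_fwdM_iff hA).1 hi).1
  have hcle : ∀ j, s.count j ≤ n := by
    intro j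
    by_cases hj : j ∈ s
    · have h1 := count_mul_le_sum s j
      have h2 := (hA j hj).1
      nlinarith
    · rw [Multiset.count_eq_zero_of_notMem hj]; omega
  ext j
  rw [count_backM]
  by_cases hj : j ∈ t.toFinset.image nsb
  · obtain ⟨j2, jns⟩ := mem_image_nsb ht2 hj
    rw [if_pos hj, backF]
    have hcount : ∀ e ∈ range (n+1), j ^ (2^e - 1) * t.count (j ^ 2 ^ e)
        = j ^ (2^e - 1) * dg j (s.count j) e := by
      intro e he
      have hjs : j ∈ s.toFinset := by
        obtain ⟨i, hi, rfl⟩ := Finset.mem_image.1 hj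
        exact ((mem_fwdM_iff hA).1 (Multiset.mem_toFinset.1 hi)).2.1
      congr 1
      rw [hts, count_fwdM hA]
      have hnb := nsb_pow j2 jns e
      rw [if_pos]
      · rw [hnb.1, hnb.2]
      · refine ⟨le_trans j2 (Nat.le_self_pow (by positivity) _), ?_, ?_⟩
        · rw [hnb.1]; exact hjs
        · rw [hnb.2]; have := Finset.mem_range.1 he; omega
    rw [Finset.sum_congr rfl hcount, dg_sum (n+1) j _ j2 (lt_pow_bound j2 (hcle j))]
  · rw [if_neg hj, eq_comm, Multiset.count_eq_zero]
    intro hjs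
    apply hj
    obtain ⟨j2, jns⟩ := hA j hjs
    have hpos : ∑ e ∈ range (n+1), j ^ (2^e - 1) * dg j (s.count j) e ≠ 0 := by
      rw [dg_sum (n+1) j _ j2 (lt_pow_bound j2 (hcle j))]
      exact (Multiset.count_pos.2 hjs).ne'
    obtain ⟨e, he, hne⟩ := Finset.exists_ne_zero_of_sum_ne_zero hpos
    have hnb := nsb_pow j2 jns e
    have hmem : j ^ 2 ^ e ∈ t := by
      rw [hts, mem_fwdM_iff hA, hnb.1, hnb.2]
      refine ⟨le_trans j2 (Nat.le_self_pow (by positivity) _),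
        Multiset.mem_toFinset.2 hjs, by have := Finset.mem_range.1 he; omega, ?_⟩
      have : dg j (s.count j) e ≠ 0 := fun h0 => hne (by rw [h0, mul_zero])
      omega
    exact Finset.mem_image.2 ⟨j ^ 2 ^ e, Multiset.mem_toFinset.2 hmem, hnb.1⟩

lemma fwd_back {s : Multiset ℕ} (hB : ∀ i ∈ s, s.count i < i) {n : ℕ}
    (hsum : s.sum = n) : fwdM n (backM n s) = s := by
  classical
  have hB2 : ∀ i ∈ s, 2 ≤ i := fun i hi => by
    have h1 := hB i hi; have h2 := Multiset.count_pos.2 hi; omega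
  set t := backM n s with hts
  have ht : ∀ i ∈ t, 2 ≤ i ∧ ¬ IsSquare i := fun i hi => mem_backM hB2 hi
  have key : ∀ j, j ∈ s.toFinset.image nsb → ∀ e,
      dg j (t.count j) e = if e < n + 1 then s.count (j ^ 2 ^ e) else 0 := by
    intro j hjim e
    obtain ⟨j2, jns⟩ := mem_image_nsb hB2 hjim
    have hct : t.count j = ∑ e' ∈ range (n+1), j ^ (2 ^ e' - 1) * s.count (j ^ 2 ^ e') := by
      rw [hts, count_backM, if_pos hjim, backF]
    rw [hct]
    exact dg_eq_of_sum e _ j2 (fun e' _ => by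
      by_cases hmem : j ^ 2 ^ e' ∈ s
      · exact hB _ hmem
      · rw [Multiset.count_eq_zero_of_notMem hmem]
        positivity)
  ext i
  rw [count_fwdM ht]
  by_cases h : 2 ≤ i ∧ nsb i ∈ t.toFinset ∧ nse i ≤ n
  · obtain ⟨h2, hmem, hle⟩ := h
    rw [if_pos ⟨h2, hmem, hle⟩]
    have hjim : nsb i ∈ s.toFinset.image nsb := by
      have := Multiset.count_pos.2 (Multiset.mem_toFinset.1 hmem)
      rw [hts, count_backM] at this
      by_cases him : nsb i ∈ s.toFinset.image nsb
      · exact him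
      · rw [if_neg him] at this; omega
    rw [key _ hjim (nse i), if_pos (by omega)]
    obtain ⟨_, _, hp⟩ := nsb_spec i h2
    rw [hp]
  · rw [if_neg h, eq_comm, Multiset.count_eq_zero]
    intro his
    apply h
    have h2 : 2 ≤ i := hB2 i his
    obtain ⟨hb2, hbns, hp⟩ := nsb_spec i h2
    have hile : i ≤ n := hsum ▸ Multiset.le_sum_of_mem his
    have hnse : nse i ≤ n := by have := nse_lt_self h2; omega
    refine ⟨h2, ?_, hnse⟩
    have hjim : nsb i ∈ s.toFinset.image nsb :=
      Finset.mem_image_of_mem nsb (Multiset.mem_toFinset.2 his)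
    rw [Multiset.mem_toFinset, ← Multiset.count_pos, hts, count_backM, if_pos hjim, backF]
    have hterm : 0 < (nsb i) ^ (2 ^ nse i - 1) * s.count ((nsb i) ^ 2 ^ nse i) := by
      rw [hp]
      have := Multiset.count_pos.2 his
      positivity
    calc 0 < (nsb i) ^ (2 ^ nse i - 1) * s.count ((nsb i) ^ 2 ^ nse i) := hterm
      _ ≤ _ := Finset.single_le_sum
            (f := fun e => (nsb i) ^ (2 ^ e - 1) * s.count ((nsb i) ^ 2 ^ e))
            (fun e _ => Nat.zero_le _) (Finset.mem_range.2 (by omega))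

theorem no_square_parts (n : ℕ) :
    Nat.card {π : Nat.Partition n // ∀ i ∈ π.parts, ¬ IsSquare i} =
    Nat.card {π : Nat.Partition n // ∀ i ∈ π.parts, π.parts.count i < i} := by
  have hA : ∀ (π : Nat.Partition n), (∀ i ∈ π.parts, ¬ IsSquare i) →
      ∀ i ∈ π.parts, 2 ≤ i ∧ ¬ IsSquare i := by
    intro π hπ i hi
    refine ⟨?_, hπ i hi⟩
    have h1 := π.parts_pos hi
    by_contra hlt
    have : i = 1 := by omega
    exact hπ i hi (this ▸ IsSquare.one)
  have hB2 : ∀ (π : Nat.Partition n), (∀ i ∈ π.parts, π.parts.count i < i) →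
      ∀ i ∈ π.parts, 2 ≤ i := by
    intro π hπ i hi
    have h1 := hπ i hi
    have h2 := Multiset.count_pos.2 hi
    omega
  apply Nat.card_congr
  exact {
    toFun := fun π => ⟨⟨fwdM n π.1.parts,
        fun {i} hi => by have := ((mem_fwdM_iff (hA π.1 π.2)).1 hi).1; omega,
        sum_fwdM (hA π.1 π.2) π.1.parts_sum⟩,
      fun i hi => by
        obtain ⟨h2, hmem, hle, hdg⟩ := (mem_fwdM_iff (hA π.1 π.2)).1 hi
        show (fwdM n π.1.parts).count i < i
        rw [count_fwdM (hA π.1 π.2), if_pos ⟨h2, hmem, hle⟩]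
        obtain ⟨hb2, _, hp⟩ := nsb_spec i h2
        calc dg (nsb i) (π.1.parts.count (nsb i)) (nse i)
            < (nsb i) ^ 2 ^ nse i := dg_lt (by omega) _ _
          _ = i := hp⟩
    invFun := fun σ => ⟨⟨backM n σ.1.parts,
        fun {i} hi => by have := (mem_backM (hB2 σ.1 σ.2) hi).1; omega,
        sum_backM (hB2 σ.1 σ.2) σ.1.parts_sum⟩,
      fun i hi => (mem_backM (hB2 σ.1 σ.2) hi).2⟩
    left_inv := fun π => Subtype.ext (Nat.Partition.ext
        (back_fwd (hA π.1 π.2) π.1.parts_sum))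
    right_inv := fun σ => Subtype.ext (Nat.Partition.ext
        (fwd_back σ.2 σ.1.parts_sum)) }
end

section
/- Fix d > 1. The number of partitions of n with no part divisible by d equals the number of partitions of n in which every part has multiplicity less than d (Glaisher's theorem). -/
namespace GlaisherAux

open Multiset Finset

variable (d : ℕ)

/-- Forward map: a part `m` with multiplicity `a` is replaced by parts `m * d^j`
with multiplicity the `j`-th base-`d` digit of `a`. -/
def Phi (s : Multiset ℕ) : Multiset ℕ :=
  ∑ m ∈ s.toFinset, ∑ j ∈ Finset.range (s.count m + 1),
    Multiset.replicate (s.count m / d ^ j % d) (m * d ^ j)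

/-- Backward map: a part `i = m * d^v` (with `¬ d ∣ m`) is replaced by `d^v` copies of `m`. -/
def Psi (t : Multiset ℕ) : Multiset ℕ :=
  t.bind fun i => Multiset.replicate (d ^ Nat.maxPowDiv d i) (i / d ^ Nat.maxPowDiv d i)

variable {d}

theorem maxPowDiv_eq_zero (hm : ¬ d ∣ m) : Nat.maxPowDiv d m = 0 := by
  by_contra h
  exact hm (dvd_trans (dvd_pow_self d h) (Nat.maxPowDiv.pow_dvd (p := d) (n := m)))

theorem maxPowDiv_mul_pow (hd : 1 < d) (hm : ¬ d ∣ m) (j : ℕ) :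
    Nat.maxPowDiv d (m * d ^ j) = j := by
  have hm0 : 0 < m := by
    rcases Nat.eq_zero_or_pos m with h | h
    · exact absurd (h ▸ dvd_zero d) hm
    · exact h
  rw [mul_comm, show Nat.maxPowDiv d (d ^ j * m) = padicValNat d (d ^ j * m) from rfl,
    Nat.maxPowDiv.base_pow_mul hd hm0.ne', show padicValNat d m = Nat.maxPowDiv d m from rfl, maxPowDiv_eq_zero hm, zero_add]

theorem base_mul_pow_eq (i : ℕ) :
    i / d ^ Nat.maxPowDiv d i * d ^ Nat.maxPowDiv d i = i :=
  Nat.div_mul_cancel (Nat.maxPowDiv.pow_dvd (p := d) (n := i))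

theorem not_dvd_base (hd : 1 < d) (hi : 0 < i) : ¬ d ∣ i / d ^ Nat.maxPowDiv d i := by
  intro ⟨c, hc⟩
  have h1 : d ^ (Nat.maxPowDiv d i + 1) ∣ i := by
    refine ⟨c, ?_⟩
    conv_lhs => rw [← base_mul_pow_eq (d := d) i]
    rw [hc]; ring
  have : Nat.maxPowDiv d i + 1 ≤ Nat.maxPowDiv d i :=
    (Nat.pow_dvd_iff_le_padicValNat (by omega : d ≠ 1) hi.ne').mp h1
  omega

theorem base_pos (hi : 0 < i) : 0 < i / d ^ Nat.maxPowDiv d i := by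
  rcases Nat.eq_zero_or_pos (i / d ^ Nat.maxPowDiv d i) with h | h
  · have := base_mul_pow_eq (d := d) i
    rw [h, zero_mul] at this; omega
  · exact h

/-- The decomposition `i = m * d ^ j` with `¬ d ∣ m` is unique. -/
theorem eq_mul_pow_iff (hd : 1 < d) (hi : 0 < i) (hm : ¬ d ∣ m) (j : ℕ) :
    i = m * d ^ j ↔ m = i / d ^ Nat.maxPowDiv d i ∧ j = Nat.maxPowDiv d i := by
  constructor
  · rintro rfl
    have hv : Nat.maxPowDiv d (m * d ^ j) = j := maxPowDiv_mul_pow hd hm j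
    rw [hv]
    refine ⟨?_, rfl⟩
    rw [Nat.mul_div_cancel _ (pow_pos (by omega : 0 < d) j)]
  · rintro ⟨rfl, rfl⟩
    exact (base_mul_pow_eq i).symm

/-- Summing the base-`d` digits times powers recovers `a % d ^ K`. -/
theorem sum_digits_mod (hd : 1 < d) (a K : ℕ) :
    ∑ j ∈ Finset.range K, a / d ^ j % d * d ^ j = a % d ^ K := by
  induction K with
  | zero => simp [Nat.mod_one]
  | succ K ih =>
    rw [Finset.sum_range_succ, ih, pow_succ, Nat.mod_mul]
    ring

theorem sum_digits (hd : 1 < d) (a : ℕ) :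
    ∑ j ∈ Finset.range (a + 1), a / d ^ j % d * d ^ j = a := by
  rw [sum_digits_mod hd, Nat.mod_eq_of_lt]
  calc a < d ^ a := Nat.lt_pow_self (n := a) hd
    _ ≤ d ^ (a + 1) := Nat.pow_le_pow_right (by omega) (by omega)

/-- Digit extraction from a sum of digits. -/
theorem digit_of_sum (hd : 1 < d) (a : ℕ → ℕ) (ha : ∀ k, a k < d) :
    ∀ (K j : ℕ), (∀ k, K ≤ k → a k = 0) →
    (∑ k ∈ Finset.range K, a k * d ^ k) / d ^ j % d = a j := by
  intro K
  induction K generalizing a with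
  | zero => intro j h0; simp [h0 j (Nat.zero_le j)]
  | succ K ih =>
    intro j h0
    have hdec : ∑ k ∈ Finset.range (K + 1), a k * d ^ k
        = a 0 + d * ∑ k ∈ Finset.range K, a (k + 1) * d ^ k := by
      rw [Finset.sum_range_succ', Finset.mul_sum, pow_zero, mul_one, add_comm]
      congr 1
      refine Finset.sum_congr rfl fun k _ => ?_
      ring
    cases j with
    | zero =>
      simp only [pow_zero, Nat.div_one, hdec]
      rw [Nat.add_mul_mod_self_left, Nat.mod_eq_of_lt (ha 0)]
    | succ j =>
      rw [hdec, pow_succ, mul_comm (d ^ j) d, ← Nat.div_div_eq_div_mul,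
        Nat.add_mul_div_left _ _ (by omega : 0 < d), Nat.div_eq_of_lt (ha 0), zero_add]
      exact ih (fun k => a (k + 1)) (fun k => ha _) j (fun k hk => h0 _ (by omega))

theorem sum_finset_sum {α : Type*} (F : Finset α) (f : α → Multiset ℕ) :
    (∑ x ∈ F, f x).sum = ∑ x ∈ F, (f x).sum :=
  map_sum Multiset.sumAddMonoidHom f F

theorem Phi_sum (hd : 1 < d) (s : Multiset ℕ) : (Phi d s).sum = s.sum := by
  conv_rhs => rw [← Multiset.toFinset_sum_count_nsmul_eq s]
  rw [Phi, sum_finset_sum]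
  have hsum : ∀ m ∈ s.toFinset, (∑ j ∈ Finset.range (s.count m + 1),
      Multiset.replicate (s.count m / d ^ j % d) (m * d ^ j)).sum
      = (s.count m • ({m} : Multiset ℕ)).sum := by
    intro m _
    rw [sum_finset_sum]
    have h1 : ∀ j ∈ Finset.range (s.count m + 1),
        (Multiset.replicate (s.count m / d ^ j % d) (m * d ^ j)).sum
        = m * (s.count m / d ^ j % d * d ^ j) := by
      intro j _
      rw [Multiset.sum_replicate, smul_eq_mul]; ring
    rw [Finset.sum_congr rfl h1, ← Finset.mul_sum, sum_digits hd,
      Multiset.sum_nsmul, Multiset.sum_singleton, smul_eq_mul, mul_comm]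
  rw [Finset.sum_congr rfl hsum, ← sum_finset_sum]

theorem mem_Phi (hd : 1 < d) {s : Multiset ℕ} {i : ℕ} (hi : i ∈ Phi d s) :
    ∃ m ∈ s, ∃ j, i = m * d ^ j := by
  rw [Phi, Multiset.mem_sum] at hi
  obtain ⟨m, hm, hi⟩ := hi
  rw [Multiset.mem_sum] at hi
  obtain ⟨j, _, hi⟩ := hi
  exact ⟨m, Multiset.mem_toFinset.mp hm, j, (Multiset.eq_of_mem_replicate hi)⟩

theorem Phi_count (hd : 1 < d) {s : Multiset ℕ} (hs : ∀ i ∈ s, ¬ d ∣ i) (i : ℕ)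
    (hi : 0 < i) :
    (Phi d s).count i
      = s.count (i / d ^ Nat.maxPowDiv d i) / d ^ Nat.maxPowDiv d i % d := by
  set v := Nat.maxPowDiv d i with hv
  set m0 := i / d ^ v with hm0
  rw [Phi, Multiset.count_sum']
  have key : ∀ m ∈ s.toFinset,
      (Multiset.count i (∑ j ∈ Finset.range (s.count m + 1),
        Multiset.replicate (s.count m / d ^ j % d) (m * d ^ j)))
      = if m = m0 then (if v ∈ Finset.range (s.count m + 1)
          then s.count m / d ^ v % d else 0) else 0 := by
    intro m hm
    have hmd : ¬ d ∣ m := hs m (Multiset.mem_toFinset.mp hm)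
    rw [Multiset.count_sum']
    have : ∀ j ∈ Finset.range (s.count m + 1),
        Multiset.count i (Multiset.replicate (s.count m / d ^ j % d) (m * d ^ j))
        = if m = m0 ∧ j = v then s.count m / d ^ j % d else 0 := by
      intro j _
      rw [Multiset.count_replicate]
      congr 1
      · rw [eq_iff_iff]
        exact eq_comm.trans (eq_mul_pow_iff hd hi hmd j)
    rw [Finset.sum_congr rfl this]
    by_cases hmm : m = m0
    · simp only [hmm, true_and, eq_self_iff_true, if_true]
      rw [Finset.sum_ite_eq' (Finset.range (s.count m0 + 1)) v
        (fun j => s.count m0 / d ^ j % d)]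
    · simp [hmm]
  rw [Finset.sum_congr rfl key, Finset.sum_ite_eq' s.toFinset m0
    (fun m => if v ∈ Finset.range (s.count m + 1) then s.count m / d ^ v % d else 0)]
  by_cases hmem : m0 ∈ s.toFinset
  · rw [if_pos hmem]
    by_cases hvr : v ∈ Finset.range (s.count m0 + 1)
    · rw [if_pos hvr]
    · rw [if_neg hvr]
      rw [Finset.mem_range, not_lt] at hvr
      have : s.count m0 < d ^ v := by
        calc s.count m0 < d ^ (s.count m0 + 1) := by
              have := Nat.lt_pow_self (n := s.count m0) hd
              calc s.count m0 < d ^ s.count m0 := this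
                _ ≤ d ^ (s.count m0 + 1) := Nat.pow_le_pow_right (by omega) (by omega)
          _ ≤ d ^ v := Nat.pow_le_pow_right (by omega) hvr
      rw [Nat.div_eq_of_lt this]
      simp
  · rw [if_neg hmem]
    have hc : s.count m0 = 0 :=
      Multiset.count_eq_zero.mpr fun h => hmem (Multiset.mem_toFinset.mpr h)
    rw [hc]
    simp

theorem card_le_sum' {s : Multiset ℕ} (h : ∀ x ∈ s, 0 < x) :
    Multiset.card s ≤ s.sum := by
  induction s using Multiset.induction_on with
  | empty => simp
  | cons i s ih =>
    rw [Multiset.card_cons, Multiset.sum_cons]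
    have h1 := h i (Multiset.mem_cons_self i s)
    have h2 := ih fun x hx => h x (Multiset.mem_cons_of_mem hx)
    omega

theorem Psi_sum (t : Multiset ℕ) : (Psi d t).sum = t.sum := by
  rw [Psi, Multiset.sum_bind]
  have h : ∀ i ∈ t, (Multiset.replicate (d ^ Nat.maxPowDiv d i)
      (i / d ^ Nat.maxPowDiv d i)).sum = id i := by
    intro i _
    rw [Multiset.sum_replicate, smul_eq_mul, mul_comm, base_mul_pow_eq, id]
  rw [Multiset.map_congr rfl h, Multiset.map_id]

theorem mem_Psi {t : Multiset ℕ} {m : ℕ} (hm : m ∈ Psi d t) :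
    ∃ i ∈ t, m = i / d ^ Nat.maxPowDiv d i := by
  rw [Psi, Multiset.mem_bind] at hm
  obtain ⟨i, hi, hm⟩ := hm
  exact ⟨i, hi, Multiset.eq_of_mem_replicate hm⟩

theorem Psi_count (hd : 1 < d) {t : Multiset ℕ} (ht0 : ∀ i ∈ t, 0 < i)
    {N : ℕ} (hN : ∀ i ∈ t, i < d ^ N) {m : ℕ} (hm : ¬ d ∣ m) :
    (Psi d t).count m = ∑ j ∈ Finset.range N, t.count (m * d ^ j) * d ^ j := by
  induction t using Multiset.induction_on with
  | empty => simp [Psi]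
  | cons i t ih =>
    have hi : 0 < i := ht0 i (Multiset.mem_cons_self i t)
    have hiN : i < d ^ N := hN i (Multiset.mem_cons_self i t)
    rw [Psi, Multiset.cons_bind, Multiset.count_add, ← Psi,
      ih (fun x hx => ht0 x (Multiset.mem_cons_of_mem hx))
        (fun x hx => hN x (Multiset.mem_cons_of_mem hx))]
    have hsplit : ∑ j ∈ Finset.range N, (i ::ₘ t).count (m * d ^ j) * d ^ j
        = ∑ j ∈ Finset.range N,
          (t.count (m * d ^ j) * d ^ j + (if m * d ^ j = i then 1 else 0) * d ^ j) := by
      refine Finset.sum_congr rfl fun j _ => ?_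
      rw [Multiset.count_cons, add_mul]
    rw [hsplit, Finset.sum_add_distrib, add_comm]
    congr 1
    have hind : ∀ j ∈ Finset.range N,
        (if m * d ^ j = i then 1 else 0) * d ^ j
        = if m = i / d ^ Nat.maxPowDiv d i ∧ j = Nat.maxPowDiv d i then d ^ j else 0 := by
      intro j _
      rw [ite_mul, one_mul, zero_mul]
      congr 1
      rw [eq_iff_iff]
      exact eq_comm.trans (eq_mul_pow_iff hd hi hm j)
    rw [Finset.sum_congr rfl hind]
    have hvN : Nat.maxPowDiv d i < N := by
      have h1 : d ^ Nat.maxPowDiv d i ≤ i := Nat.le_of_dvd hi (Nat.maxPowDiv.pow_dvd (p := d) (n := i))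
      have h2 : d ^ Nat.maxPowDiv d i < d ^ N := lt_of_le_of_lt h1 hiN
      exact (Nat.pow_lt_pow_iff_right hd).mp h2
    rw [Multiset.count_replicate]
    by_cases hmm : m = i / d ^ Nat.maxPowDiv d i
    · simp only [hmm, true_and, eq_self_iff_true, if_true]
      rw [Finset.sum_ite_eq' (Finset.range N) (Nat.maxPowDiv d i) (fun j => d ^ j),
        if_pos (Finset.mem_range.mpr hvN)]
    · rw [if_neg (fun h => hmm h.symm)]
      simp only [hmm, false_and, if_false, Finset.sum_const_zero]

theorem PsiPhi (hd : 1 < d) {s : Multiset ℕ} (hpos : ∀ i ∈ s, 0 < i)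
    (hs : ∀ i ∈ s, ¬ d ∣ i) : Psi d (Phi d s) = s := by
  set N := s.sum + 1 with hN
  have hdpos : 0 < d := by omega
  have hsum : (Phi d s).sum = s.sum := Phi_sum hd s
  have hposPhi : ∀ i ∈ Phi d s, 0 < i := by
    intro i hi
    obtain ⟨m, hm, j, rfl⟩ := mem_Phi hd hi
    exact Nat.mul_pos (hpos m hm) (pow_pos hdpos j)
  have hltPhi : ∀ i ∈ Phi d s, i < d ^ N := by
    intro i hi
    have h1 : i ≤ (Phi d s).sum := Multiset.le_sum_of_mem hi
    calc i ≤ s.sum := by omega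
      _ < d ^ N := by
          calc s.sum < d ^ s.sum := Nat.lt_pow_self hd
            _ ≤ d ^ N := Nat.pow_le_pow_right hdpos (by omega)
  ext m
  by_cases hmd : d ∣ m
  · have h1 : (Psi d (Phi d s)).count m = 0 := by
      rw [Multiset.count_eq_zero]
      intro hmem
      obtain ⟨i, hi, rfl⟩ := mem_Psi hmem
      exact not_dvd_base hd (hposPhi i hi) hmd
    have h2 : s.count m = 0 := by
      rw [Multiset.count_eq_zero]
      intro hmem
      exact hs m hmem hmd
    rw [h1, h2]
  · rw [Psi_count hd hposPhi hltPhi hmd]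
    have hmpos : 0 < m := by
      rcases Nat.eq_zero_or_pos m with h | h
      · exact absurd (h ▸ dvd_zero d) hmd
      · exact h
    have hterm : ∀ j ∈ Finset.range N,
        (Phi d s).count (m * d ^ j) * d ^ j = s.count m / d ^ j % d * d ^ j := by
      intro j _
      have hpos' : 0 < m * d ^ j := Nat.mul_pos hmpos (pow_pos hdpos j)
      rw [Phi_count hd hs _ hpos']
      have h1 : Nat.maxPowDiv d (m * d ^ j) = j := maxPowDiv_mul_pow hd hmd j
      rw [h1, Nat.mul_div_cancel _ (pow_pos hdpos j)]
    rw [Finset.sum_congr rfl hterm, sum_digits_mod hd, Nat.mod_eq_of_lt]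
    have h1 : s.count m ≤ s.card := Multiset.count_le_card m s
    have h2 : Multiset.card s ≤ s.sum := card_le_sum' fun x hx => hpos x hx
    calc s.count m ≤ s.sum := le_trans h1 h2
      _ < d ^ N := by
          calc s.sum < d ^ s.sum := Nat.lt_pow_self hd
            _ ≤ d ^ N := Nat.pow_le_pow_right hdpos (by omega)

theorem PhiPsi (hd : 1 < d) {t : Multiset ℕ} (hpos : ∀ i ∈ t, 0 < i)
    (ht : ∀ i, t.count i < d) : Phi d (Psi d t) = t := by
  set N := t.sum + 1 with hN
  have hdpos : 0 < d := by omega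
  have hposPsi : ∀ m ∈ Psi d t, 0 < m := by
    intro m hm
    obtain ⟨i, hi, rfl⟩ := mem_Psi hm
    exact base_pos (hpos i hi)
  have hndvdPsi : ∀ m ∈ Psi d t, ¬ d ∣ m := by
    intro m hm
    obtain ⟨i, hi, rfl⟩ := mem_Psi hm
    exact not_dvd_base hd (hpos i hi)
  have hlt : ∀ i ∈ t, i < d ^ N := by
    intro i hi
    have h1 : i ≤ t.sum := Multiset.le_sum_of_mem hi
    calc i ≤ t.sum := h1
      _ < d ^ N := by
          calc t.sum < d ^ t.sum := Nat.lt_pow_self hd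
            _ ≤ d ^ N := Nat.pow_le_pow_right hdpos (by omega)
  ext i
  rcases Nat.eq_zero_or_pos i with rfl | hi
  · have h1 : (Phi d (Psi d t)).count 0 = 0 := by
      rw [Multiset.count_eq_zero]
      intro hmem
      obtain ⟨m, hm, j, hij⟩ := mem_Phi hd hmem
      have := Nat.mul_pos (hposPsi m hm) (pow_pos hdpos j)
      omega
    have h2 : t.count 0 = 0 := by
      rw [Multiset.count_eq_zero]
      intro hmem
      exact absurd (hpos 0 hmem) (by omega)
    rw [h1, h2]
  · rw [Phi_count hd hndvdPsi i hi]
    set v := Nat.maxPowDiv d i with hv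
    set m0 := i / d ^ v with hm0
    have hm0d : ¬ d ∣ m0 := not_dvd_base hd hi
    rw [Psi_count hd hpos hlt hm0d]
    have ha : ∀ k, t.count (m0 * d ^ k) < d := fun k => ht _
    have hzero : ∀ k, N ≤ k → t.count (m0 * d ^ k) = 0 := by
      intro k hk
      rw [Multiset.count_eq_zero]
      intro hmem
      have h1 : m0 * d ^ k < d ^ N := hlt _ hmem
      have h2 : d ^ k ≤ m0 * d ^ k :=
        Nat.le_mul_of_pos_left _ (base_pos hi)
      have h3 : d ^ N ≤ d ^ k := Nat.pow_le_pow_right hdpos hk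
      omega
    rw [digit_of_sum hd _ ha N v hzero]
    congr 1
    exact base_mul_pow_eq (d := d) i

end GlaisherAux

theorem glaisher (d : ℕ) (hd : 1 < d) (n : ℕ) :
    Nat.card {π : Nat.Partition n // ∀ i ∈ π.parts, ¬ d ∣ i} =
    Nat.card {π : Nat.Partition n // ∀ i ∈ π.parts, π.parts.count i < d} := by
  apply Nat.card_congr
  refine
    { toFun := fun π => ⟨⟨GlaisherAux.Phi d π.1.parts, ?_, ?_⟩, ?_⟩
      invFun := fun π => ⟨⟨GlaisherAux.Psi d π.1.parts, ?_, ?_⟩, ?_⟩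
      left_inv := ?_
      right_inv := ?_ }
  · intro i hi
    obtain ⟨m, hm, j, rfl⟩ := GlaisherAux.mem_Phi hd hi
    exact Nat.mul_pos (π.1.parts_pos hm) (pow_pos (by omega : 0 < d) j)
  · rw [GlaisherAux.Phi_sum hd, π.1.parts_sum]
  · intro i hi
    have hi0 : 0 < i := by
      obtain ⟨m, hm, j, rfl⟩ := GlaisherAux.mem_Phi hd hi
      exact Nat.mul_pos (π.1.parts_pos hm) (pow_pos (by omega : 0 < d) j)
    simp only
    rw [GlaisherAux.Phi_count hd π.2 i hi0]
    exact Nat.mod_lt _ (by omega)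
  · intro m hm
    obtain ⟨i, hi, rfl⟩ := GlaisherAux.mem_Psi hm
    exact GlaisherAux.base_pos (π.1.parts_pos hi)
  · rw [GlaisherAux.Psi_sum, π.1.parts_sum]
  · intro m hm
    obtain ⟨i, hi, rfl⟩ := GlaisherAux.mem_Psi hm
    exact GlaisherAux.not_dvd_base hd (π.1.parts_pos hi)
  · rintro ⟨⟨s, hpos, hsum⟩, hnd⟩
    apply Subtype.ext
    apply Nat.Partition.ext
    exact GlaisherAux.PsiPhi hd (fun i hi => hpos hi) hnd
  · rintro ⟨⟨t, hpos, hsum⟩, hlt⟩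
    apply Subtype.ext
    apply Nat.Partition.ext
    apply GlaisherAux.PhiPsi hd (fun i hi => hpos hi)
    intro i
    by_cases h : i ∈ t
    · exact hlt i h
    · rw [Multiset.count_eq_zero.mpr h]; omega
end
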